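/- arXiv:1508.01759 — 5 statements merged into one kernel-verified Lean document; each statement's English description precedes it below -/
import Mathlib

section
/- Let G be a finite graph on n vertices with maximum degree at most 3, and let G^Δ be the spanning subgraph of G whose edges are exactly those edges of G contained in at least one triangle of G. Then every connected component of G^Δ is isomorphic to K₁, K₃, K₄ − e, or K₄, and W^+(G) = n − n₃ − n₄₋ₑ − 2·n₄, where n₃, n₄₋ₑ, and n₄ denote the numbers of connected components of G^Δ isomorphic to K₃, to K₄ − e, and to K₄, respectively. -/
open SimpleGraph

/-- A K₃-WORM coloring of `G`: every triangle receives exactly two colors. -/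
def IsWormColoring {V : Type*} (G : SimpleGraph V) (c : V → ℕ) : Prop :=
  ∀ u v w : V, G.Adj u v → G.Adj u w → G.Adj v w → ({c u, c v, c w} : Finset ℕ).card = 2

/-- The number of colors used by a coloring of a finite vertex set. -/
def colorsUsed {V : Type*} [Fintype V] (c : V → ℕ) : ℕ := (Finset.univ.image c).card

/-- The K₃-WORM feasible set of `G`: the set of `s` such that `G` has a
K₃-WORM coloring using exactly `s` colors. -/
def wormFeasible {V : Type*} [Fintype V] (G : SimpleGraph V) : Set ℕ :=
  {s | ∃ c : V → ℕ, IsWormColoring G c ∧ colorsUsed c = s}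

/-- `G` is triangle-free: it has no three pairwise adjacent vertices. -/
def TriangleFree {V : Type*} (G : SimpleGraph V) : Prop :=
  ∀ u v w : V, G.Adj u v → G.Adj u w → G.Adj v w → False

/-- The strong product `G ⊠ K₂`, on vertex set `V × Bool`:
`(u,i)` and `(v,j)` are adjacent iff (`u = v` and `i ≠ j`) or `u`,`v` are adjacent in `G`. -/
def strongProdK2 {V : Type*} (G : SimpleGraph V) : SimpleGraph (V × Bool) :=
  SimpleGraph.fromRel (fun p q => (p.1 = q.1 ∧ p.2 ≠ q.2) ∨ G.Adj p.1 q.1)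

/-- `G^Δ`: the spanning subgraph of `G` whose edges are exactly the edges of `G`
contained in at least one triangle of `G`. -/
def triangleEdgeSubgraph {V : Type*} (G : SimpleGraph V) : SimpleGraph V where
  Adj u v := G.Adj u v ∧ ∃ w : V, G.Adj u w ∧ G.Adj v w
  symm := by
    constructor
    rintro u v ⟨h, w, h1, h2⟩
    exact ⟨h.symm, w, h2, h1⟩
  loopless := by
    constructor
    rintro v ⟨h, -⟩
    exact G.loopless.irrefl v h

/-- `K₄ − e`: the complete graph on four vertices with one edge removed. -/
def K4minusE : SimpleGraph (Fin 4) := (⊤ : SimpleGraph (Fin 4)).deleteEdges {s(2, 3)}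

/-- The number of connected components of `H` whose induced subgraph is
isomorphic to `K`. -/
noncomputable def compCount {V β : Type*} (H : SimpleGraph V) (K : SimpleGraph β) : ℕ :=
  Nat.card {C : H.ConnectedComponent // Nonempty (H.induce C.supp ≃g K)}

section Aux
variable {V : Type*} [Fintype V] [DecidableEq V] (G : SimpleGraph V) [DecidableRel G.Adj]

instance : DecidableRel (triangleEdgeSubgraph G).Adj := fun u v =>
  inferInstanceAs (Decidable (G.Adj u v ∧ ∃ w : V, G.Adj u w ∧ G.Adj v w))

variable {G}

/-- closure lemma -/
lemma supp_eq_of_closed (C : (triangleEdgeSubgraph G).ConnectedComponent) (s : Set V)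
    (v₀ : V) (hv₀C : v₀ ∈ C.supp) (hv₀ : v₀ ∈ s)
    (hsub : s ⊆ C.supp)
    (hcl : ∀ a ∈ s, ∀ b, (triangleEdgeSubgraph G).Adj a b → b ∈ s) :
    C.supp = s := by
  apply Set.Subset.antisymm _ hsub
  intro u hu
  have hreach : (triangleEdgeSubgraph G).Reachable v₀ u := by
    rw [ConnectedComponent.mem_supp_iff] at hu hv₀C
    exact ConnectedComponent.exact (hv₀C.trans hu.symm)
  obtain ⟨p⟩ := hreach
  have key : ∀ (a u : V) (p : (triangleEdgeSubgraph G).Walk a u), a ∈ s → u ∈ s := by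
    intro a u p
    induction p with
    | nil => exact id
    | cons h p ih => exact fun ha => ih (hcl _ ha _ h)
  exact key v₀ u p hv₀

/-- degree: if v has 3 distinct neighbors, every neighbor is among them -/
lemma nbr_mem_of_three (hdeg : ∀ v : V, G.degree v ≤ 3) {v a b c d : V}
    (hab : a ≠ b) (hac : a ≠ c) (hbc : b ≠ c)
    (ha : G.Adj v a) (hb : G.Adj v b) (hc : G.Adj v c) (hd : G.Adj v d) :
    d = a ∨ d = b ∨ d = c := by
  by_contra h
  push_neg at h
  have hsub : ({a, b, c, d} : Finset V) ⊆ G.neighborFinset v := by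
    intro x hx
    simp only [Finset.mem_insert, Finset.mem_singleton] at hx
    rcases hx with rfl | rfl | rfl | rfl <;> simp [ha, hb, hc, hd]
  have hcard : ({a, b, c, d} : Finset V).card = 4 := by
    rw [Finset.card_insert_of_notMem, Finset.card_insert_of_notMem,
      Finset.card_insert_of_notMem, Finset.card_singleton] <;> simp [hab, hac, hbc, h] <;> tauto
  have := Finset.card_le_card hsub
  rw [hcard, G.card_neighborFinset_eq_degree] at this
  have := hdeg v
  omega

set_option linter.unusedSectionVars false

lemma H_adj {a b : V} : (triangleEdgeSubgraph G).Adj a b ↔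
    G.Adj a b ∧ ∃ w, G.Adj a w ∧ G.Adj b w := Iff.rfl

lemma H_adj_of (hdeg : True) {a b c : V} (hab : G.Adj a b) (hac : G.Adj a c) (hbc : G.Adj b c) :
    (triangleEdgeSubgraph G).Adj a b := ⟨hab, c, hac, hbc⟩

lemma mem_supp_of_adj {C : (triangleEdgeSubgraph G).ConnectedComponent} {a b : V}
    (ha : a ∈ C.supp) (hab : (triangleEdgeSubgraph G).Adj a b) : b ∈ C.supp := by
  rw [ConnectedComponent.mem_supp_iff] at ha ⊢
  rw [← ha]
  exact ConnectedComponent.sound hab.symm.reachable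

/-- if u has an H-neighbor x outside its triangle, x is G-adjacent to v or w -/
lemma triangle_extend (hdeg : ∀ v : V, G.degree v ≤ 3) {u v w x : V}
    (huv : G.Adj u v) (huw : G.Adj u w) (hvw : G.Adj v w)
    (hxv : x ≠ v) (hxw : x ≠ w)
    (hux : (triangleEdgeSubgraph G).Adj u x) : G.Adj v x ∨ G.Adj w x := by
  obtain ⟨hGux, y, huy, hxy⟩ := hux
  have hy : y = v ∨ y = w ∨ y = x :=
    nbr_mem_of_three hdeg hvw.ne hxv.symm hxw.symm huv huw hGux huy
  rcases hy with rfl | rfl | rfl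
  · exact Or.inl hxy.symm
  · exact Or.inr hxy.symm
  · exact absurd rfl hxy.ne'
set_option linter.unusedVariables false

/-- In the K₄−e configuration, the degree-2 vertex r has no H-neighbor besides p, q. -/
lemma K4e_closure (hdeg : ∀ v : V, G.degree v ≤ 3) {p q r x b : V}
    (hpq : G.Adj p q) (hpr : G.Adj p r) (hqr : G.Adj q r)
    (hpx : G.Adj p x) (hqx : G.Adj q x) (hrx : ¬ G.Adj r x) (hxr : x ≠ r)
    (hb : (triangleEdgeSubgraph G).Adj r b) : b = p ∨ b = q := by
  by_contra hcon
  push_neg at hcon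
  obtain ⟨hbp, hbq⟩ := hcon
  obtain ⟨hGrb, y, hry, hby⟩ := hb
  -- b ∉ {p, q, r, x}
  have hbr : b ≠ r := hGrb.ne'
  have hbx : b ≠ x := by rintro rfl; exact hrx hGrb
  -- r's neighbors: p, q, b distinct
  have hy : y = p ∨ y = q ∨ y = b :=
    nbr_mem_of_three hdeg hpq.ne hbp.symm hbq.symm hpr.symm hqr.symm hGrb hry
  have hyb : y ≠ b := hby.ne'
  -- so y = p or y = q; then b is a 4th neighbor of y
  rcases hy with rfl | rfl | rfl
  · -- y = p : p adjacent to q, r, x, b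
    have : b = q ∨ b = r ∨ b = x :=
      nbr_mem_of_three hdeg hqr.ne hqx.ne (Ne.symm hxr) hpq hpr hpx hby.symm
    tauto
  · have : b = p ∨ b = r ∨ b = x :=
      nbr_mem_of_three hdeg hpr.ne hpx.ne (Ne.symm hxr) hpq.symm hqr hqx hby.symm
    tauto
  · exact hyb rfl

/-- Classification statement -/
def ClassifiedComp (G : SimpleGraph V) (C : (triangleEdgeSubgraph G).ConnectedComponent) : Prop :=
  (∃ u : V, C.supp = {u}) ∨
  (∃ u v w : V, u ≠ v ∧ u ≠ w ∧ v ≠ w ∧ C.supp = {u, v, w} ∧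
    G.Adj u v ∧ G.Adj u w ∧ G.Adj v w) ∨
  (∃ u v w x : V, u ≠ v ∧ u ≠ w ∧ u ≠ x ∧ v ≠ w ∧ v ≠ x ∧ w ≠ x ∧
    C.supp = {u, v, w, x} ∧
    G.Adj u v ∧ G.Adj u w ∧ G.Adj v w ∧ G.Adj u x ∧ G.Adj v x ∧ ¬ G.Adj w x) ∨
  (∃ u v w x : V, u ≠ v ∧ u ≠ w ∧ u ≠ x ∧ v ≠ w ∧ v ≠ x ∧ w ≠ x ∧
    C.supp = {u, v, w, x} ∧
    G.Adj u v ∧ G.Adj u w ∧ G.Adj v w ∧ G.Adj u x ∧ G.Adj v x ∧ G.Adj w x)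

/-- The quad case: a triangle p q r together with an external x adjacent to p and q. -/
lemma quad_case (hdeg : ∀ v : V, G.degree v ≤ 3)
    {C : (triangleEdgeSubgraph G).ConnectedComponent} {p q r x : V}
    (hpC : p ∈ C.supp)
    (hpq : G.Adj p q) (hpr : G.Adj p r) (hqr : G.Adj q r)
    (hpx : G.Adj p x) (hqx : G.Adj q x) (hxr : x ≠ r) :
    ClassifiedComp G C := by
  -- H-adjacencies within {p,q,r,x}
  have Hpq : (triangleEdgeSubgraph G).Adj p q := ⟨hpq, r, hpr, hqr⟩
  have Hpr : (triangleEdgeSubgraph G).Adj p r := ⟨hpr, q, hpq, hqr.symm⟩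
  have Hqr : (triangleEdgeSubgraph G).Adj q r := ⟨hqr, p, hpq.symm, hpr.symm⟩
  have Hpx : (triangleEdgeSubgraph G).Adj p x := ⟨hpx, q, hpq, hqx.symm⟩
  have Hqx : (triangleEdgeSubgraph G).Adj q x := ⟨hqx, p, hpq.symm, hpx.symm⟩
  have hqC : q ∈ C.supp := mem_supp_of_adj hpC Hpq
  have hrC : r ∈ C.supp := mem_supp_of_adj hpC Hpr
  have hxC : x ∈ C.supp := mem_supp_of_adj hpC Hpx
  have hxp : x ≠ p := hpx.ne'
  have hxq : x ≠ q := hqx.ne'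
  have hsub : ({p, q, r, x} : Set V) ⊆ C.supp := by
    intro z hz
    simp only [Set.mem_insert_iff, Set.mem_singleton_iff] at hz
    rcases hz with rfl | rfl | rfl | rfl <;> assumption
  -- closure for p and q (they have full degree with neighbors inside)
  have hclp : ∀ b, (triangleEdgeSubgraph G).Adj p b → b ∈ ({p, q, r, x} : Set V) := by
    intro b hb
    have := nbr_mem_of_three hdeg hqr.ne hqx.ne (Ne.symm hxr) hpq hpr hpx hb.1
    simp only [Set.mem_insert_iff, Set.mem_singleton_iff]; tauto
  have hclq : ∀ b, (triangleEdgeSubgraph G).Adj q b → b ∈ ({p, q, r, x} : Set V) := by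
    intro b hb
    have := nbr_mem_of_three hdeg hpr.ne hpx.ne (Ne.symm hxr) hpq.symm hqr hqx hb.1
    simp only [Set.mem_insert_iff, Set.mem_singleton_iff]; tauto
  by_cases hrx : G.Adj r x
  · -- K₄ case
    right; right; right
    refine ⟨p, q, r, x, hpq.ne, hpr.ne, hpx.ne, hqr.ne, hqx.ne, fun h => hxr h.symm, ?_,
      hpq, hpr, hqr, hpx, hqx, hrx⟩
    apply supp_eq_of_closed C _ p hpC (by simp) hsub
    intro a ha b hb
    simp only [Set.mem_insert_iff, Set.mem_singleton_iff] at ha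
    rcases ha with rfl | rfl | rfl | rfl
    · exact hclp b hb
    · exact hclq b hb
    · -- r's neighbors are p, q, x
      have := nbr_mem_of_three hdeg hpq.ne hpx.ne hqx.ne hpr.symm hqr.symm hrx hb.1
      simp only [Set.mem_insert_iff, Set.mem_singleton_iff]; tauto
    · -- x's neighbors are p, q, r
      have := nbr_mem_of_three hdeg hpq.ne hpr.ne hqr.ne hpx.symm hqx.symm hrx.symm hb.1
      simp only [Set.mem_insert_iff, Set.mem_singleton_iff]; tauto
  · -- K₄ − e case
    right; right; left
    refine ⟨p, q, r, x, hpq.ne, hpr.ne, hpx.ne, hqr.ne, hqx.ne, fun h => hxr h.symm, ?_,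
      hpq, hpr, hqr, hpx, hqx, hrx⟩
    have hclr : ∀ b, (triangleEdgeSubgraph G).Adj r b → b ∈ ({p, q, r, x} : Set V) := by
      intro b hb
      have := K4e_closure hdeg hpq hpr hqr hpx hqx hrx hxr hb
      simp only [Set.mem_insert_iff, Set.mem_singleton_iff]; tauto
    have hclx : ∀ b, (triangleEdgeSubgraph G).Adj x b → b ∈ ({p, q, r, x} : Set V) := by
      intro b hb
      have hxrne : (r : V) ≠ x := fun h => hxr h.symm
      have := K4e_closure hdeg hpq hpx hqx hpr hqr (fun h => hrx h.symm) hxrne hb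
      simp only [Set.mem_insert_iff, Set.mem_singleton_iff]; tauto
    apply supp_eq_of_closed C _ p hpC (by simp) hsub
    intro a ha b hb
    simp only [Set.mem_insert_iff, Set.mem_singleton_iff] at ha
    rcases ha with rfl | rfl | rfl | rfl
    · exact hclp b hb
    · exact hclq b hb
    · exact hclr _ hb
    · exact hclx _ hb

lemma classify (hdeg : ∀ v : V, G.degree v ≤ 3)
    (C : (triangleEdgeSubgraph G).ConnectedComponent) : ClassifiedComp G C := by
  obtain ⟨v₀, hv₀⟩ := C.exists_rep
  have hv₀C : v₀ ∈ C.supp := by rw [ConnectedComponent.mem_supp_iff]; exact hv₀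
  by_cases h0 : ∃ y, (triangleEdgeSubgraph G).Adj v₀ y
  · obtain ⟨v₁, h01⟩ := h0
    obtain ⟨hG01, w, hw0, hw1⟩ := h01
    -- triangle v₀ v₁ w
    have huv : G.Adj v₀ v₁ := hG01
    have huw : G.Adj v₀ w := hw0
    have hvw : G.Adj v₁ w := hw1
    by_cases hout : ∃ x, (x ≠ v₀ ∧ x ≠ v₁ ∧ x ≠ w) ∧
        ((triangleEdgeSubgraph G).Adj v₀ x ∨ (triangleEdgeSubgraph G).Adj v₁ x ∨
          (triangleEdgeSubgraph G).Adj w x)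
    · obtain ⟨x, ⟨hx0, hx1, hxw⟩, hOR⟩ := hout
      rcases hOR with hH | hH | hH
      · rcases triangle_extend hdeg huv huw hvw hx1 hxw hH with h | h
        · -- x adj v₀ (hH.1) and v₁: quad p=v₀ q=v₁ r=w
          exact quad_case hdeg hv₀C huv huw hvw hH.1 h hxw
        · -- x adj v₀ and w: p=v₀ q=w r=v₁
          exact quad_case hdeg hv₀C huw huv hvw.symm hH.1 h hx1
      · rcases triangle_extend hdeg huv.symm hvw huw hx0 hxw hH with h | h
        · -- x adj v₁ and v₀: p=v₁ q=v₀ r=w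
          have h1C : v₁ ∈ C.supp := mem_supp_of_adj hv₀C ⟨hG01, w, hw0, hw1⟩
          exact quad_case hdeg h1C huv.symm hvw huw hH.1 h hxw
        · have h1C : v₁ ∈ C.supp := mem_supp_of_adj hv₀C ⟨hG01, w, hw0, hw1⟩
          exact quad_case hdeg h1C hvw huv.symm huw.symm hH.1 h hx0
      · rcases triangle_extend hdeg huw.symm hvw.symm huv hx0 hx1 hH with h | h
        · have hwC : w ∈ C.supp := mem_supp_of_adj hv₀C ⟨hw0, v₁, hG01, hw1.symm⟩
          exact quad_case hdeg hwC huw.symm hvw.symm huv hH.1 h hx1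
        · have hwC : w ∈ C.supp := mem_supp_of_adj hv₀C ⟨hw0, v₁, hG01, hw1.symm⟩
          exact quad_case hdeg hwC hvw.symm huw.symm huv.symm hH.1 h hx0
    · -- triangle component
      right; left
      push_neg at hout
      refine ⟨v₀, v₁, w, huv.ne, huw.ne, hvw.ne, ?_, huv, huw, hvw⟩
      have Huv : (triangleEdgeSubgraph G).Adj v₀ v₁ := ⟨huv, w, huw, hvw⟩
      have Huw : (triangleEdgeSubgraph G).Adj v₀ w := ⟨huw, v₁, huv, hvw.symm⟩
      have Hvw : (triangleEdgeSubgraph G).Adj v₁ w := ⟨hvw, v₀, huv.symm, huw.symm⟩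
      apply supp_eq_of_closed C _ v₀ hv₀C (by simp)
      · intro z hz
        simp only [Set.mem_insert_iff, Set.mem_singleton_iff] at hz
        rcases hz with rfl | rfl | rfl
        · exact hv₀C
        · exact mem_supp_of_adj hv₀C Huv
        · exact mem_supp_of_adj hv₀C Huw
      · intro a ha b hb
        simp only [Set.mem_insert_iff, Set.mem_singleton_iff] at ha ⊢
        by_contra hcon
        push_neg at hcon
        obtain ⟨hb0, hb1, hbw⟩ := hcon
        have := hout b ⟨hb0, hb1, hbw⟩
        rcases ha with rfl | rfl | rfl <;> tauto
  · left
    push_neg at h0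
    refine ⟨v₀, ?_⟩
    apply supp_eq_of_closed C ({v₀} : Set V) v₀ hv₀C rfl
    · intro z hz; rw [Set.mem_singleton_iff] at hz; subst hz; exact hv₀C
    · intro a ha b hb
      rw [Set.mem_singleton_iff] at ha; subst ha
      exact absurd hb (h0 b)

/-- equiv for a 3-element set -/
noncomputable def equivTriple {u v w : V} (huv : u ≠ v) (huw : u ≠ w) (hvw : v ≠ w) :
    Fin 3 ≃ ↥({u, v, w} : Set V) where
  toFun := ![⟨u, by simp⟩, ⟨v, by simp⟩, ⟨w, by simp⟩]
  invFun := fun a => if a.1 = u then 0 else if a.1 = v then 1 else 2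
  left_inv := by
    intro i
    fin_cases i <;> simp [Ne.symm huv, Ne.symm huw, Ne.symm hvw]
  right_inv := by
    rintro ⟨a, ha⟩
    simp only [Set.mem_insert_iff, Set.mem_singleton_iff] at ha
    rcases ha with rfl | rfl | rfl <;>
      simp [Ne.symm huv, Ne.symm huw, Ne.symm hvw]

lemma iso_triple {u v w : V} (huv : u ≠ v) (huw : u ≠ w) (hvw : v ≠ w)
    (Huv : (triangleEdgeSubgraph G).Adj u v) (Huw : (triangleEdgeSubgraph G).Adj u w)
    (Hvw : (triangleEdgeSubgraph G).Adj v w) :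
    Nonempty ((triangleEdgeSubgraph G).induce ({u, v, w} : Set V) ≃g (⊤ : SimpleGraph (Fin 3))) := by
  refine ⟨RelIso.symm ⟨equivTriple huv huw hvw, ?_⟩⟩
  intro i j
  fin_cases i <;> fin_cases j <;>
    simp [equivTriple, Huv, Huw, Hvw, Huv.symm, Huw.symm, Hvw.symm,
      (triangleEdgeSubgraph G).loopless.irrefl u, (triangleEdgeSubgraph G).loopless.irrefl v,
      (triangleEdgeSubgraph G).loopless.irrefl w] <;> decide

/-- equiv for a 4-element set -/
noncomputable def equivQuad {u v w x : V} (huv : u ≠ v) (huw : u ≠ w) (hux : u ≠ x)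
    (hvw : v ≠ w) (hvx : v ≠ x) (hwx : w ≠ x) :
    Fin 4 ≃ ↥({u, v, w, x} : Set V) where
  toFun := ![⟨u, by simp⟩, ⟨v, by simp⟩, ⟨w, by simp⟩, ⟨x, by simp⟩]
  invFun := fun a => if a.1 = u then 0 else if a.1 = v then 1 else if a.1 = w then 2 else 3
  left_inv := by
    intro i
    fin_cases i <;>
      simp [Ne.symm huv, Ne.symm huw, Ne.symm hux, Ne.symm hvw, Ne.symm hvx, Ne.symm hwx]
  right_inv := by
    rintro ⟨a, ha⟩
    simp only [Set.mem_insert_iff, Set.mem_singleton_iff] at ha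
    rcases ha with rfl | rfl | rfl | rfl <;>
      simp [Ne.symm huv, Ne.symm huw, Ne.symm hux, Ne.symm hvw, Ne.symm hvx, Ne.symm hwx]

lemma iso_quad_K4 {u v w x : V} (huv : u ≠ v) (huw : u ≠ w) (hux : u ≠ x)
    (hvw : v ≠ w) (hvx : v ≠ x) (hwx : w ≠ x)
    (Huv : (triangleEdgeSubgraph G).Adj u v) (Huw : (triangleEdgeSubgraph G).Adj u w)
    (Hvw : (triangleEdgeSubgraph G).Adj v w) (Hux : (triangleEdgeSubgraph G).Adj u x)
    (Hvx : (triangleEdgeSubgraph G).Adj v x) (Hwx : (triangleEdgeSubgraph G).Adj w x) :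
    Nonempty ((triangleEdgeSubgraph G).induce ({u, v, w, x} : Set V) ≃g
      (⊤ : SimpleGraph (Fin 4))) := by
  refine ⟨RelIso.symm ⟨equivQuad huv huw hux hvw hvx hwx, ?_⟩⟩
  intro i j
  fin_cases i <;> fin_cases j <;>
    simp [equivQuad, Huv, Huw, Hvw, Hux, Hvx, Hwx, Huv.symm, Huw.symm, Hvw.symm, Hux.symm,
      Hvx.symm, Hwx.symm, (triangleEdgeSubgraph G).loopless.irrefl u, (triangleEdgeSubgraph G).loopless.irrefl v,
      (triangleEdgeSubgraph G).loopless.irrefl w, (triangleEdgeSubgraph G).loopless.irrefl x] <;> decide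


lemma iso_quad_K4e {u v w x : V} (huv : u ≠ v) (huw : u ≠ w) (hux : u ≠ x)
    (hvw : v ≠ w) (hvx : v ≠ x) (hwx : w ≠ x)
    (Huv : (triangleEdgeSubgraph G).Adj u v) (Huw : (triangleEdgeSubgraph G).Adj u w)
    (Hvw : (triangleEdgeSubgraph G).Adj v w) (Hux : (triangleEdgeSubgraph G).Adj u x)
    (Hvx : (triangleEdgeSubgraph G).Adj v x) (Hwx : ¬ (triangleEdgeSubgraph G).Adj w x) :
    Nonempty ((triangleEdgeSubgraph G).induce ({u, v, w, x} : Set V) ≃g K4minusE) := by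
  have Hxw : ¬ (triangleEdgeSubgraph G).Adj x w := fun h => Hwx h.symm
  refine ⟨RelIso.symm ⟨equivQuad huv huw hux hvw hvx hwx, ?_⟩⟩
  intro i j
  fin_cases i <;> fin_cases j <;>
    simp [equivQuad, K4minusE, Huv, Huw, Hvw, Hux, Hvx, Hwx, Hxw, Huv.symm, Huw.symm, Hvw.symm,
      Hux.symm, Hvx.symm, (triangleEdgeSubgraph G).loopless.irrefl u, (triangleEdgeSubgraph G).loopless.irrefl v,
      (triangleEdgeSubgraph G).loopless.irrefl w, (triangleEdgeSubgraph G).loopless.irrefl x] <;> decide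


/-- data for building an optimal coloring on a component -/
def GoodPair (G : SimpleGraph V) [DecidableRel G.Adj]
    (C : (triangleEdgeSubgraph G).ConnectedComponent) (k : ℕ) : Prop :=
  ∃ (r : V → V) (F : Finset V),
    (↑F ⊆ C.supp) ∧ (∀ v ∈ C.supp, r v ∈ F) ∧ (∀ b ∈ F, ∃ v ∈ C.supp, r v = b) ∧ F.card = k ∧
    (∀ a b c : V, a ∈ C.supp → G.Adj a b → G.Adj a c → G.Adj b c →
      ((r a = r b ∨ r a = r c ∨ r b = r c) ∧ ¬(r a = r b ∧ r a = r c)))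

def GoodBound (G : SimpleGraph V) [DecidableRel G.Adj]
    (C : (triangleEdgeSubgraph G).ConnectedComponent) (k : ℕ) : Prop :=
  ∀ c : V → ℕ, IsWormColoring G c → (C.supp.toFinset.image c).card ≤ k

lemma shape_S1 {C : (triangleEdgeSubgraph G).ConnectedComponent} {u : V}
    (h : C.supp = {u}) : GoodPair G C 1 ∧ GoodBound G C 1 ∧ C.supp.toFinset.card = 1 := by
  refine ⟨⟨id, {u}, ?_, ?_, ?_, ?_, ?_⟩, ?_, ?_⟩
  · rw [h]; simp
  · intro v hv; rw [h] at hv; simpa using hv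
  · intro z hz; simp only [Finset.mem_singleton] at hz
    exact ⟨z, by simp [h, hz], hz ▸ rfl⟩
  · simp
  · intro a b c ha hab hac hbc
    exfalso
    have hb : b ∈ C.supp := mem_supp_of_adj ha ⟨hab, c, hac, hbc⟩
    rw [h, Set.mem_singleton_iff] at ha hb
    subst ha; subst hb
    exact G.loopless.irrefl _ hab
  · intro c _
    apply le_trans (Finset.card_image_le)
    simp [h]
  · simp [h]

lemma shape_S3 {C : (triangleEdgeSubgraph G).ConnectedComponent} {u v w : V}
    (huv : u ≠ v) (huw : u ≠ w) (hvw : v ≠ w) (h : C.supp = {u, v, w})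
    (auv : G.Adj u v) (auw : G.Adj u w) (avw : G.Adj v w) :
    GoodPair G C 2 ∧ GoodBound G C 2 ∧ C.supp.toFinset.card = 3 := by
  have hmem : ∀ z ∈ C.supp, z = u ∨ z = v ∨ z = w := by
    intro z hz; rw [h] at hz; simpa using hz
  refine ⟨⟨fun z => if z = v then u else z, {u, w}, ?_, ?_, ?_, ?_, ?_⟩, ?_, ?_⟩
  · intro z hz; simp only [Finset.coe_insert, Finset.coe_singleton,
      Set.mem_insert_iff, Set.mem_singleton_iff] at hz
    rw [h]; rcases hz with rfl | rfl <;> simp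
  · intro z hz
    rcases hmem z hz with rfl | rfl | rfl <;> simp [huv, Ne.symm hvw, huw]
  · intro b hb; simp only [Finset.mem_insert, Finset.mem_singleton] at hb
    rcases hb with rfl | rfl
    · exact ⟨b, by rw [h]; simp, by simp [huv]⟩
    · exact ⟨b, by rw [h]; simp, by simp [Ne.symm hvw]⟩
  · rw [Finset.card_insert_of_notMem (by simp [huw]), Finset.card_singleton]
  · intro a b c ha hab hac hbc
    have hbs : b ∈ C.supp := mem_supp_of_adj ha ⟨hab, c, hac, hbc⟩
    have hcs : c ∈ C.supp := mem_supp_of_adj ha ⟨hac, b, hab, hbc.symm⟩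
    have nab := hab.ne
    have nac := hac.ne
    have nbc := hbc.ne
    rcases hmem a ha with rfl | rfl | rfl <;> rcases hmem b hbs with rfl | rfl | rfl <;>
      rcases hmem c hcs with rfl | rfl | rfl <;>
      simp_all [huv, huw, hvw, Ne.symm huv, Ne.symm huw, Ne.symm hvw]
  · intro c hc
    have hfin : C.supp.toFinset = ({u, v, w} : Finset V) := by
      ext z; simp [Set.mem_toFinset, h]
    have himg : C.supp.toFinset.image c = {c u, c v, c w} := by
      rw [hfin]; simp [Finset.image_insert]
    rw [himg, hc u v w auv auw avw]
  · have hfin : C.supp.toFinset = ({u, v, w} : Finset V) := by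
      ext z; simp [Set.mem_toFinset, h]
    rw [hfin, Finset.card_insert_of_notMem (by simp [huv, huw]),
      Finset.card_insert_of_notMem (by simp [hvw]), Finset.card_singleton]

lemma card_three_iff {a b c : ℕ} :
    ({a, b, c} : Finset ℕ).card = 2 ↔ ((a = b ∨ a = c ∨ b = c) ∧ ¬(a = b ∧ a = c)) := by
  by_cases h1 : a = b <;> by_cases h2 : a = c <;> by_cases h3 : b = c
  · subst h1; subst h3; simp
  · exact absurd (h1.symm.trans h2) h3
  · subst h1
    have : ({a, a, c} : Finset ℕ) = {a, c} := by ext z; simp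
    rw [this, Finset.card_pair h2]; tauto
  · subst h1
    have : ({a, a, c} : Finset ℕ) = {a, c} := by ext z; simp
    rw [this, Finset.card_pair h2]; tauto
  · subst h2; subst h3; exact absurd rfl h1
  · subst h2
    have : ({a, b, a} : Finset ℕ) = {a, b} := by ext z; simp; tauto
    rw [this, Finset.card_pair h1]; tauto
  · subst h3
    have : ({a, b, b} : Finset ℕ) = {a, b} := by ext z; simp
    rw [this, Finset.card_pair h1]; tauto
  · rw [Finset.card_insert_of_notMem (by simp [h1, h2]),
      Finset.card_insert_of_notMem (by simp [h3]), Finset.card_singleton]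
    simp [h1, h2, h3]

lemma shape_S4e {C : (triangleEdgeSubgraph G).ConnectedComponent} {u v w x : V}
    (huv : u ≠ v) (huw : u ≠ w) (hux : u ≠ x) (hvw : v ≠ w) (hvx : v ≠ x) (hwx : w ≠ x)
    (h : C.supp = {u, v, w, x})
    (auv : G.Adj u v) (auw : G.Adj u w) (avw : G.Adj v w) (aux : G.Adj u x)
    (avx : G.Adj v x) (nwx : ¬ G.Adj w x) :
    GoodPair G C 3 ∧ GoodBound G C 3 ∧ C.supp.toFinset.card = 4 := by
  have hmem : ∀ z ∈ C.supp, z = u ∨ z = v ∨ z = w ∨ z = x := by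
    intro z hz; rw [h] at hz; simpa using hz
  have hfin : C.supp.toFinset = ({u, v, w, x} : Finset V) := by
    ext z; simp [Set.mem_toFinset, h]
  refine ⟨⟨fun z => if z = v then u else z, {u, w, x}, ?_, ?_, ?_, ?_, ?_⟩, ?_, ?_⟩
  · intro z hz; simp only [Finset.coe_insert, Finset.coe_singleton,
      Set.mem_insert_iff, Set.mem_singleton_iff] at hz
    rw [h]; rcases hz with rfl | rfl | rfl <;> simp
  · intro z hz
    rcases hmem z hz with rfl | rfl | rfl | rfl <;>
      simp [huv, Ne.symm hvw, Ne.symm hvx, huw, hux]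
  · intro b hb; simp only [Finset.mem_insert, Finset.mem_singleton] at hb
    rcases hb with rfl | rfl | rfl
    · exact ⟨b, by rw [h]; simp, by simp [huv]⟩
    · exact ⟨b, by rw [h]; simp, by simp [Ne.symm hvw]⟩
    · exact ⟨b, by rw [h]; simp, by simp [Ne.symm hvx]⟩
  · rw [Finset.card_insert_of_notMem (by simp [huw, hux]),
      Finset.card_insert_of_notMem (by simp [hwx]), Finset.card_singleton]
  · intro a b c ha hab hac hbc
    have hbs : b ∈ C.supp := mem_supp_of_adj ha ⟨hab, c, hac, hbc⟩
    have hcs : c ∈ C.supp := mem_supp_of_adj ha ⟨hac, b, hab, hbc.symm⟩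
    have nab := hab.ne
    have nac := hac.ne
    have nbc := hbc.ne
    have nxw : ¬ G.Adj x w := fun hh => nwx hh.symm
    rcases hmem a ha with rfl | rfl | rfl | rfl <;> rcases hmem b hbs with rfl | rfl | rfl | rfl <;>
      rcases hmem c hcs with rfl | rfl | rfl | rfl <;>
      simp_all [huv, huw, hux, hvw, hvx, hwx,
        Ne.symm huv, Ne.symm huw, Ne.symm hux, Ne.symm hvw, Ne.symm hvx, Ne.symm hwx]
  · intro c hc
    have himg : C.supp.toFinset.image c = {c u, c v, c w, c x} := by
      rw [hfin]; simp [Finset.image_insert]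
    rw [himg]
    have hsub : ({c u, c v, c w, c x} : Finset ℕ) ⊆ insert (c x) {c u, c v, c w} := by
      intro z hz; simp at hz ⊢; tauto
    calc ({c u, c v, c w, c x} : Finset ℕ).card
          ≤ (insert (c x) ({c u, c v, c w} : Finset ℕ)).card := Finset.card_le_card hsub
      _ ≤ ({c u, c v, c w} : Finset ℕ).card + 1 := Finset.card_insert_le _ _
      _ = 3 := by rw [hc u v w auv auw avw]
  · rw [hfin, Finset.card_insert_of_notMem (by simp [huv, huw, hux]),
      Finset.card_insert_of_notMem (by simp [hvw, hvx]),
      Finset.card_insert_of_notMem (by simp [hwx]), Finset.card_singleton]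

lemma shape_S4 {C : (triangleEdgeSubgraph G).ConnectedComponent} {u v w x : V}
    (huv : u ≠ v) (huw : u ≠ w) (hux : u ≠ x) (hvw : v ≠ w) (hvx : v ≠ x) (hwx : w ≠ x)
    (h : C.supp = {u, v, w, x})
    (auv : G.Adj u v) (auw : G.Adj u w) (avw : G.Adj v w) (aux : G.Adj u x)
    (avx : G.Adj v x) (awx : G.Adj w x) :
    GoodPair G C 2 ∧ GoodBound G C 2 ∧ C.supp.toFinset.card = 4 := by
  have hmem : ∀ z ∈ C.supp, z = u ∨ z = v ∨ z = w ∨ z = x := by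
    intro z hz; rw [h] at hz; simpa using hz
  have hfin : C.supp.toFinset = ({u, v, w, x} : Finset V) := by
    ext z; simp [Set.mem_toFinset, h]
  refine ⟨⟨fun z => if z = v then u else if z = x then w else z, {u, w}, ?_, ?_, ?_, ?_, ?_⟩,
    ?_, ?_⟩
  · intro z hz; simp only [Finset.coe_insert, Finset.coe_singleton,
      Set.mem_insert_iff, Set.mem_singleton_iff] at hz
    rw [h]; rcases hz with rfl | rfl <;> simp
  · intro z hz
    rcases hmem z hz with rfl | rfl | rfl | rfl <;>
      simp [huv, hux, Ne.symm hvw, Ne.symm hvx, huw, Ne.symm hwx]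
  · intro b hb; simp only [Finset.mem_insert, Finset.mem_singleton] at hb
    rcases hb with rfl | rfl
    · exact ⟨b, by rw [h]; simp, by simp [huv, hux]⟩
    · exact ⟨b, by rw [h]; simp, by simp [Ne.symm hvw, Ne.symm hwx]⟩
  · rw [Finset.card_insert_of_notMem (by simp [huw]), Finset.card_singleton]
  · intro a b c ha hab hac hbc
    have hbs : b ∈ C.supp := mem_supp_of_adj ha ⟨hab, c, hac, hbc⟩
    have hcs : c ∈ C.supp := mem_supp_of_adj ha ⟨hac, b, hab, hbc.symm⟩
    have nab := hab.ne
    have nac := hac.ne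
    have nbc := hbc.ne
    rcases hmem a ha with rfl | rfl | rfl | rfl <;> rcases hmem b hbs with rfl | rfl | rfl | rfl <;>
      rcases hmem c hcs with rfl | rfl | rfl | rfl <;>
      simp_all [huv, huw, hux, hvw, hvx, hwx,
        Ne.symm huv, Ne.symm huw, Ne.symm hux, Ne.symm hvw, Ne.symm hvx, Ne.symm hwx]
  · intro c hc
    have himg : C.supp.toFinset.image c = {c u, c v, c w, c x} := by
      rw [hfin]; simp [Finset.image_insert]
    rw [himg]
    have hx : c x = c u ∨ c x = c v ∨ c x = c w := by
      by_contra hq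
      push_neg at hq
      obtain ⟨h1, h2, h3⟩ := hq
      have e1 : c u = c v := by
        have := (card_three_iff).mp (hc u v x auv aux avx)
        tauto
      have e2 : c u = c w := by
        have := (card_three_iff).mp (hc u w x auw aux awx)
        tauto
      have e3 := (card_three_iff).mp (hc u v w auv auw avw)
      tauto
    have himg2 : ({c u, c v, c w, c x} : Finset ℕ) = {c u, c v, c w} := by
      ext z; simp only [Finset.mem_insert, Finset.mem_singleton]
      constructor
      · rintro (rfl | rfl | rfl | rfl) <;> tauto
      · tauto
    rw [himg2, hc u v w auv auw avw]
  · rw [hfin, Finset.card_insert_of_notMem (by simp [huv, huw, hux]),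
      Finset.card_insert_of_notMem (by simp [hvw, hvx]),
      Finset.card_insert_of_notMem (by simp [hwx]), Finset.card_singleton]

lemma card_of_iso {s : Set V} [Fintype ↥s] {β : Type} [Fintype β] {K : SimpleGraph β}
    (φ : (triangleEdgeSubgraph G).induce s ≃g K) : s.toFinset.card = Fintype.card β := by
  rw [Set.toFinset_card]
  exact Fintype.card_congr φ.toEquiv

lemma not_iso_K4_of_nonadj {s : Set V} {w x : V} (hw : w ∈ s) (hx : x ∈ s) (hwx : w ≠ x)
    (hn : ¬ (triangleEdgeSubgraph G).Adj w x) :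
    ¬ Nonempty ((triangleEdgeSubgraph G).induce s ≃g (⊤ : SimpleGraph (Fin 4))) := by
  rintro ⟨φ⟩
  have hne : φ ⟨w, hw⟩ ≠ φ ⟨x, hx⟩ := by
    intro hh
    exact hwx (congrArg Subtype.val (φ.injective hh))
  have : ((triangleEdgeSubgraph G).induce s).Adj ⟨w, hw⟩ ⟨x, hx⟩ := φ.map_rel_iff.mp hne
  exact hn this

lemma not_iso_K4e_of_allAdj {s : Set V}
    (hall : ∀ a ∈ s, ∀ b ∈ s, a ≠ b → (triangleEdgeSubgraph G).Adj a b) :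
    ¬ Nonempty ((triangleEdgeSubgraph G).induce s ≃g K4minusE) := by
  rintro ⟨φ⟩
  have h23 : ¬ K4minusE.Adj 2 3 := by simp [K4minusE, SimpleGraph.deleteEdges_adj]
  apply h23
  rw [← φ.symm.map_rel_iff]
  have hne : (φ.symm 2 : ↥s).1 ≠ (φ.symm 3 : ↥s).1 := by
    intro hh
    have : (φ.symm 2 : ↥s) = φ.symm 3 := Subtype.ext hh
    have := φ.symm.injective this
    simp at this
  exact hall _ (φ.symm 2).2 _ (φ.symm 3).2 hne

lemma iso_single {u : V} :
    Nonempty ((triangleEdgeSubgraph G).induce ({u} : Set V) ≃g (⊤ : SimpleGraph (Fin 1))) := by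
  refine ⟨RelIso.symm ⟨Equiv.ofUnique (Fin 1) ↥({u} : Set V), ?_⟩⟩
  intro a b
  have hab : a = b := Subsingleton.elim a b
  subst hab
  simp [SimpleGraph.irrefl]

abbrev P1 (G : SimpleGraph V) [DecidableRel G.Adj] (C : (triangleEdgeSubgraph G).ConnectedComponent) : Prop :=
  Nonempty ((triangleEdgeSubgraph G).induce C.supp ≃g (⊤ : SimpleGraph (Fin 1)))
abbrev P3 (G : SimpleGraph V) [DecidableRel G.Adj] (C : (triangleEdgeSubgraph G).ConnectedComponent) : Prop :=
  Nonempty ((triangleEdgeSubgraph G).induce C.supp ≃g (⊤ : SimpleGraph (Fin 3)))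
abbrev P4e (G : SimpleGraph V) [DecidableRel G.Adj] (C : (triangleEdgeSubgraph G).ConnectedComponent) : Prop :=
  Nonempty ((triangleEdgeSubgraph G).induce C.supp ≃g K4minusE)
abbrev P4 (G : SimpleGraph V) [DecidableRel G.Adj] (C : (triangleEdgeSubgraph G).ConnectedComponent) : Prop :=
  Nonempty ((triangleEdgeSubgraph G).induce C.supp ≃g (⊤ : SimpleGraph (Fin 4)))

open Classical in
noncomputable def mval (G : SimpleGraph V) [DecidableRel G.Adj]
    (C : (triangleEdgeSubgraph G).ConnectedComponent) : ℕ :=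
  if P3 G C then 2 else if P4e G C then 3 else if P4 G C then 2 else 1

open Classical in
noncomputable def sval (G : SimpleGraph V) [DecidableRel G.Adj]
    (C : (triangleEdgeSubgraph G).ConnectedComponent) : ℕ :=
  (if P3 G C then 1 else 0) + (if P4e G C then 1 else 0) + 2 * (if P4 G C then 1 else 0)

lemma master (hdeg : ∀ v : V, G.degree v ≤ 3) (C : (triangleEdgeSubgraph G).ConnectedComponent) :
    GoodPair G C (mval G C) ∧ GoodBound G C (mval G C) ∧
      C.supp.toFinset.card = mval G C + sval G C ∧
      (P1 G C ∨ P3 G C ∨ P4e G C ∨ P4 G C) := by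
  rcases classify hdeg C with ⟨u, h⟩ |
    ⟨u, v, w, huv, huw, hvw, h, auv, auw, avw⟩ |
    ⟨u, v, w, x, huv, huw, hux, hvw, hvx, hwx, h, auv, auw, avw, aux, avx, nwx⟩ |
    ⟨u, v, w, x, huv, huw, hux, hvw, hvx, hwx, h, auv, auw, avw, aux, avx, awx⟩
  · obtain ⟨g1, g2, hcard⟩ := shape_S1 h
    have hP1 : P1 G C := by unfold P1; rw [h]; exact iso_single
    have hP3 : ¬ P3 G C := by rintro ⟨φ⟩; have := card_of_iso φ; rw [hcard] at this; simp at this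
    have hP4e : ¬ P4e G C := by rintro ⟨φ⟩; have := card_of_iso φ; rw [hcard] at this; simp at this
    have hP4 : ¬ P4 G C := by rintro ⟨φ⟩; have := card_of_iso φ; rw [hcard] at this; simp at this
    have hm : mval G C = 1 := by simp [mval, hP3, hP4e, hP4]
    have hs : sval G C = 0 := by simp [sval, hP3, hP4e, hP4]
    rw [hm, hs]
    exact ⟨g1, g2, by omega, Or.inl hP1⟩
  · obtain ⟨g1, g2, hcard⟩ := shape_S3 huv huw hvw h auv auw avw
    have Huv : (triangleEdgeSubgraph G).Adj u v := ⟨auv, w, auw, avw⟩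
    have Huw : (triangleEdgeSubgraph G).Adj u w := ⟨auw, v, auv, avw.symm⟩
    have Hvw : (triangleEdgeSubgraph G).Adj v w := ⟨avw, u, auv.symm, auw.symm⟩
    have hP3 : P3 G C := by unfold P3; rw [h]; exact iso_triple huv huw hvw Huv Huw Hvw
    have hm : mval G C = 2 := by simp [mval, hP3]
    have hs : sval G C = 1 := by
      have hP4e : ¬ P4e G C := by
        rintro ⟨φ⟩; have := card_of_iso φ; rw [hcard] at this; simp at this
      have hP4 : ¬ P4 G C := by
        rintro ⟨φ⟩; have := card_of_iso φ; rw [hcard] at this; simp at this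
      simp [sval, hP3, hP4e, hP4]
    rw [hm, hs]
    exact ⟨g1, g2, by omega, Or.inr (Or.inl hP3)⟩
  · obtain ⟨g1, g2, hcard⟩ := shape_S4e huv huw hux hvw hvx hwx h auv auw avw aux avx nwx
    have Huv : (triangleEdgeSubgraph G).Adj u v := ⟨auv, w, auw, avw⟩
    have Huw : (triangleEdgeSubgraph G).Adj u w := ⟨auw, v, auv, avw.symm⟩
    have Hvw : (triangleEdgeSubgraph G).Adj v w := ⟨avw, u, auv.symm, auw.symm⟩
    have Hux : (triangleEdgeSubgraph G).Adj u x := ⟨aux, v, auv, avx.symm⟩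
    have Hvx : (triangleEdgeSubgraph G).Adj v x := ⟨avx, u, auv.symm, aux.symm⟩
    have Hwx : ¬ (triangleEdgeSubgraph G).Adj w x := fun hh => nwx hh.1
    have hP4e : P4e G C := by unfold P4e; rw [h]; exact iso_quad_K4e huv huw hux hvw hvx hwx Huv Huw Hvw Hux Hvx Hwx
    have hP3 : ¬ P3 G C := by
      rintro ⟨φ⟩; have := card_of_iso φ; rw [hcard] at this; simp at this
    have hP4 : ¬ P4 G C := by
      apply not_iso_K4_of_nonadj (s := C.supp) (w := w) (x := x) _ _ hwx Hwx
      · rw [h]; simp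
      · rw [h]; simp
    have hm : mval G C = 3 := by simp [mval, hP3, hP4e]
    have hs : sval G C = 1 := by simp [sval, hP3, hP4e, hP4]
    rw [hm, hs]
    exact ⟨g1, g2, by omega, Or.inr (Or.inr (Or.inl hP4e))⟩
  · obtain ⟨g1, g2, hcard⟩ := shape_S4 huv huw hux hvw hvx hwx h auv auw avw aux avx awx
    have Huv : (triangleEdgeSubgraph G).Adj u v := ⟨auv, w, auw, avw⟩
    have Huw : (triangleEdgeSubgraph G).Adj u w := ⟨auw, v, auv, avw.symm⟩
    have Hvw : (triangleEdgeSubgraph G).Adj v w := ⟨avw, u, auv.symm, auw.symm⟩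
    have Hux : (triangleEdgeSubgraph G).Adj u x := ⟨aux, v, auv, avx.symm⟩
    have Hvx : (triangleEdgeSubgraph G).Adj v x := ⟨avx, u, auv.symm, aux.symm⟩
    have Hwx : (triangleEdgeSubgraph G).Adj w x := ⟨awx, u, auw.symm, aux.symm⟩
    have hP4 : P4 G C := by unfold P4; rw [h]; exact iso_quad_K4 huv huw hux hvw hvx hwx Huv Huw Hvw Hux Hvx Hwx
    have hP3 : ¬ P3 G C := by
      rintro ⟨φ⟩; have := card_of_iso φ; rw [hcard] at this; simp at this
    have hP4e : ¬ P4e G C := by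
      apply not_iso_K4e_of_allAdj
      intro a ha b hb hab
      rw [h] at ha hb
      simp only [Set.mem_insert_iff, Set.mem_singleton_iff] at ha hb
      rcases ha with rfl | rfl | rfl | rfl <;> rcases hb with rfl | rfl | rfl | rfl <;>
        first
          | exact absurd rfl hab
          | assumption
          | exact Huv.symm
          | exact Huw.symm
          | exact Hvw.symm
          | exact Hux.symm
          | exact Hvx.symm
          | exact Hwx.symm
    have hm : mval G C = 2 := by simp [mval, hP3, hP4e, hP4]
    have hs : sval G C = 2 := by simp [sval, hP3, hP4e, hP4]
    rw [hm, hs]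
    exact ⟨g1, g2, by omega, Or.inr (Or.inr (Or.inr hP4))⟩

lemma card_eq_sum_supp :
    Fintype.card V = ∑ C : (triangleEdgeSubgraph G).ConnectedComponent, C.supp.toFinset.card := by
  classical
  have huniv : (Finset.univ : Finset V) =
      Finset.univ.biUnion (fun C : (triangleEdgeSubgraph G).ConnectedComponent =>
        C.supp.toFinset) := by
    ext v
    simp only [Finset.mem_univ, Finset.mem_biUnion, Set.mem_toFinset, true_iff]
    exact ⟨(triangleEdgeSubgraph G).connectedComponentMk v, trivial, rfl⟩
  rw [← Finset.card_univ, huniv, Finset.card_biUnion]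
  intro C _ D _ hCD
  rw [Function.onFun, Finset.disjoint_left]
  intro z hz hz'
  rw [Set.mem_toFinset] at hz hz'
  exact hCD (((ConnectedComponent.mem_supp_iff _ _).mp hz).symm.trans
    ((ConnectedComponent.mem_supp_iff _ _).mp hz'))

lemma global_upper {c : V → ℕ} (hc : IsWormColoring G c)
    (hb : ∀ C : (triangleEdgeSubgraph G).ConnectedComponent, GoodBound G C (mval G C)) :
    (Finset.univ.image c).card ≤
      ∑ C : (triangleEdgeSubgraph G).ConnectedComponent, mval G C := by
  classical
  have hsub : Finset.univ.image c ⊆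
      Finset.univ.biUnion (fun C : (triangleEdgeSubgraph G).ConnectedComponent =>
        C.supp.toFinset.image c) := by
    intro z hz
    simp only [Finset.mem_image, Finset.mem_univ, true_and] at hz
    obtain ⟨v, rfl⟩ := hz
    simp only [Finset.mem_biUnion]
    exact ⟨(triangleEdgeSubgraph G).connectedComponentMk v, Finset.mem_univ _,
      Finset.mem_image.mpr ⟨v, Set.mem_toFinset.mpr rfl, rfl⟩⟩
  calc (Finset.univ.image c).card ≤ _ := Finset.card_le_card hsub
    _ ≤ ∑ C : (triangleEdgeSubgraph G).ConnectedComponent, (C.supp.toFinset.image c).card :=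
        Finset.card_biUnion_le
    _ ≤ ∑ C : (triangleEdgeSubgraph G).ConnectedComponent, mval G C :=
        Finset.sum_le_sum (fun C _ => hb C c hc)

lemma global_construct
    (hg : ∀ C : (triangleEdgeSubgraph G).ConnectedComponent, GoodPair G C (mval G C)) :
    ∃ c : V → ℕ, IsWormColoring G c ∧
      (Finset.univ.image c).card =
        ∑ C : (triangleEdgeSubgraph G).ConnectedComponent, mval G C := by
  classical
  choose r F h1 h2 h3 h4 h5 using hg
  set g : V → ℕ := fun v => ((Fintype.equivFin V) v : ℕ) with hg'
  have hginj : Function.Injective g := by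
    intro a b hab
    exact (Fintype.equivFin V).injective (Fin.val_injective hab)
  set R : V → V := fun v => r ((triangleEdgeSubgraph G).connectedComponentMk v) v with hR
  refine ⟨fun v => g (R v), ?_, ?_⟩
  · intro a b c hab hac hbc
    set C := (triangleEdgeSubgraph G).connectedComponentMk a with hC
    have haC : a ∈ C.supp := rfl
    have hbC : (triangleEdgeSubgraph G).connectedComponentMk b = C :=
      (ConnectedComponent.mem_supp_iff _ _).mp (mem_supp_of_adj haC ⟨hab, c, hac, hbc⟩)
    have hcC : (triangleEdgeSubgraph G).connectedComponentMk c = C :=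
      (ConnectedComponent.mem_supp_iff _ _).mp (mem_supp_of_adj haC ⟨hac, b, hab, hbc.symm⟩)
    have hRa : R a = r C a := rfl
    have hRb : R b = r C b := by rw [hR]; simp only [hbC]
    have hRc : R c = r C c := by rw [hR]; simp only [hcC]
    obtain ⟨hor, hnand⟩ := h5 C a b c haC hab hac hbc
    rw [card_three_iff]
    show (g (R a) = g (R b) ∨ g (R a) = g (R c) ∨ g (R b) = g (R c)) ∧
      ¬(g (R a) = g (R b) ∧ g (R a) = g (R c))
    rw [hRa, hRb, hRc]
    constructor
    · rcases hor with h | h | h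
      · exact Or.inl (congrArg g h)
      · exact Or.inr (Or.inl (congrArg g h))
      · exact Or.inr (Or.inr (congrArg g h))
    · rintro ⟨e1, e2⟩
      exact hnand ⟨hginj e1, hginj e2⟩
  · have himg : Finset.univ.image (fun v => g (R v)) = (Finset.univ.image R).image g := by
      rw [Finset.image_image]; rfl
    rw [himg, Finset.card_image_of_injective _ hginj]
    have hRimg : Finset.univ.image R =
        Finset.univ.biUnion (fun C : (triangleEdgeSubgraph G).ConnectedComponent => F C) := by
      ext z
      simp only [Finset.mem_image, Finset.mem_univ, true_and, Finset.mem_biUnion]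
      constructor
      · rintro ⟨v, rfl⟩
        exact ⟨(triangleEdgeSubgraph G).connectedComponentMk v, h2 _ v rfl⟩
      · rintro ⟨C, hz⟩
        obtain ⟨v, hv, hrv⟩ := h3 C z hz
        refine ⟨v, ?_⟩
        rw [hR]
        simp only [(ConnectedComponent.mem_supp_iff _ _).mp hv]
        exact hrv
    have hdisj : ∀ C ∈ (Finset.univ : Finset (triangleEdgeSubgraph G).ConnectedComponent),
        ∀ D ∈ Finset.univ, C ≠ D → Disjoint (F C) (F D) := by
      intro C _ D _ hCD
      rw [Finset.disjoint_left]
      intro z hz hz'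
      exact hCD (((ConnectedComponent.mem_supp_iff _ _).mp (h1 C hz)).symm.trans
        ((ConnectedComponent.mem_supp_iff _ _).mp (h1 D hz')))
    rw [hRimg, Finset.card_biUnion hdisj]
    exact Finset.sum_congr rfl (fun C _ => h4 C)

open Classical in
lemma sum_boole_natcard {α : Type*} [Fintype α] (p : α → Prop) :
    ∑ a : α, (if p a then 1 else 0 : ℕ) = Nat.card {x // p x} := by
  classical
  rw [Nat.card_eq_fintype_card, Fintype.card_subtype]
  rw [Finset.card_filter]

end Aux

/-- If `G` has `n` vertices and maximum degree at most 3, then every connected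
component of `G^Δ` is isomorphic to `K₁`, `K₃`, `K₄ − e` or `K₄`, and
`W⁺(G) = n − n₃ − n₄₋ₑ − 2·n₄` where `n₃`, `n₄₋ₑ`, `n₄` count the components of
`G^Δ` isomorphic to `K₃`, `K₄ − e`, `K₄` respectively. -/
theorem wormUpper_maxDegree_three_formula {V : Type*} [Fintype V] [DecidableEq V]
    (G : SimpleGraph V) [DecidableRel G.Adj] (hdeg : ∀ v : V, G.degree v ≤ 3) :
    (∀ C : (triangleEdgeSubgraph G).ConnectedComponent,
        Nonempty ((triangleEdgeSubgraph G).induce C.supp ≃g (⊤ : SimpleGraph (Fin 1))) ∨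
        Nonempty ((triangleEdgeSubgraph G).induce C.supp ≃g (⊤ : SimpleGraph (Fin 3))) ∨
        Nonempty ((triangleEdgeSubgraph G).induce C.supp ≃g K4minusE) ∨
        Nonempty ((triangleEdgeSubgraph G).induce C.supp ≃g (⊤ : SimpleGraph (Fin 4)))) ∧
    IsGreatest (wormFeasible G)
      (Fintype.card V - compCount (triangleEdgeSubgraph G) (⊤ : SimpleGraph (Fin 3))
        - compCount (triangleEdgeSubgraph G) K4minusE
        - 2 * compCount (triangleEdgeSubgraph G) (⊤ : SimpleGraph (Fin 4))) := by
  classical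
  have hmaster := fun C => master (G := G) hdeg C
  refine ⟨fun C => (hmaster C).2.2.2, ?_⟩
  have hsum : Fintype.card V = (∑ C : (triangleEdgeSubgraph G).ConnectedComponent, mval G C) +
      ∑ C : (triangleEdgeSubgraph G).ConnectedComponent, sval G C := by
    rw [card_eq_sum_supp (G := G), ← Finset.sum_add_distrib]
    exact Finset.sum_congr rfl fun C _ => (hmaster C).2.2.1
  have hsval : ∑ C : (triangleEdgeSubgraph G).ConnectedComponent, sval G C =
      Nat.card {C : (triangleEdgeSubgraph G).ConnectedComponent // P3 G C} +
      Nat.card {C : (triangleEdgeSubgraph G).ConnectedComponent // P4e G C} +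
      2 * Nat.card {C : (triangleEdgeSubgraph G).ConnectedComponent // P4 G C} := by
    simp only [sval]
    rw [Finset.sum_add_distrib, Finset.sum_add_distrib, ← Finset.mul_sum,
      sum_boole_natcard, sum_boole_natcard, sum_boole_natcard]
  have e3 : compCount (triangleEdgeSubgraph G) (⊤ : SimpleGraph (Fin 3)) =
      Nat.card {C : (triangleEdgeSubgraph G).ConnectedComponent // P3 G C} := rfl
  have e4e : compCount (triangleEdgeSubgraph G) K4minusE =
      Nat.card {C : (triangleEdgeSubgraph G).ConnectedComponent // P4e G C} := rfl
  have e4 : compCount (triangleEdgeSubgraph G) (⊤ : SimpleGraph (Fin 4)) =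
      Nat.card {C : (triangleEdgeSubgraph G).ConnectedComponent // P4 G C} := rfl
  have hval : Fintype.card V - compCount (triangleEdgeSubgraph G) (⊤ : SimpleGraph (Fin 3))
      - compCount (triangleEdgeSubgraph G) K4minusE
      - 2 * compCount (triangleEdgeSubgraph G) (⊤ : SimpleGraph (Fin 4)) =
      ∑ C : (triangleEdgeSubgraph G).ConnectedComponent, mval G C := by
    rw [e3, e4e, e4]
    omega
  rw [hval]
  constructor
  · obtain ⟨c, hc, hcard⟩ := global_construct (fun C => (hmaster C).1)
    exact ⟨c, hc, hcard⟩
  · rintro s ⟨c, hc, rfl⟩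
    exact global_upper hc (fun C => (hmaster C).2.1)
end

section
/- If G is a finite graph of order n and maximum degree at most 3, then W^+(G) ≥ n/2, with equality if and only if every connected component of G is isomorphic to K₄ (so that G is the disjoint union of n/4 copies of K₄). -/
open SimpleGraph

set_option linter.unusedSectionVars false

namespace WormAux
open Finset

variable {V : Type*} [Fintype V] [DecidableEq V]

def pairStep : List V → V → V
  | a :: b :: rest, v => if v = a then b else if v = b then a else pairStep rest v
  | _, v => v

variable (G : SimpleGraph V)

def triAdj (v u : V) : Prop := ∃ w, G.Adj v u ∧ G.Adj v w ∧ G.Adj u w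

def heavy (u v : V) : Prop :=
  G.Adj u v ∧ ∃ w x, w ≠ x ∧ G.Adj u w ∧ G.Adj v w ∧ G.Adj u x ∧ G.Adj v x

def inK4 (v : V) : Prop :=
  ∃ a b c, G.Adj v a ∧ G.Adj v b ∧ G.Adj v c ∧ G.Adj a b ∧ G.Adj a c ∧ G.Adj b c

variable [DecidableRel G.Adj]

def Kset (v : V) : Finset V := insert v (G.neighborFinset v)

open Classical in
noncomputable def Tset (v : V) : Finset V := insert v (Finset.univ.filter (triAdj G v))

variable [LinearOrder V]

open Classical in
noncomputable def wpair (v : V) : V :=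
  if inK4 G v then pairStep ((Kset G v).sort (· ≤ ·)) v
  else if h : ∃ u, heavy G v u then h.choose
  else if ∃ u, triAdj G v u then
    if ∃ y z, y ∈ Tset G v ∧ z ∈ Tset G v ∧ heavy G y z then v
    else pairStep ((Tset G v).sort (· ≤ ·)) v
  else v

variable {G}

section Struct
variable (hdeg : ∀ v : V, G.degree v ≤ 3)
include hdeg

/-- With max degree 3, a vertex with three distinct neighbours has no others. -/
lemma mem_of_adj {v a b c u : V} (ha : G.Adj v a) (hb : G.Adj v b) (hc : G.Adj v c)
    (hab : a ≠ b) (hac : a ≠ c) (hbc : b ≠ c) (hu : G.Adj v u) :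
    u = a ∨ u = b ∨ u = c := by
  by_contra h
  push_neg at h
  obtain ⟨h1, h2, h3⟩ := h
  have hsub : ({u, a, b, c} : Finset V) ⊆ G.neighborFinset v := by
    intro x hx
    simp only [Finset.mem_insert, Finset.mem_singleton] at hx
    rw [mem_neighborFinset]
    rcases hx with rfl | rfl | rfl | rfl <;> assumption
  have hcard : ({u, a, b, c} : Finset V).card = 4 := by
    rw [Finset.card_insert_of_notMem (by simp [h1, h2, h3]),
      Finset.card_insert_of_notMem (by simp [hab, hac]),
      Finset.card_insert_of_notMem (by simp [hbc]), Finset.card_singleton]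
  have := Finset.card_le_card hsub
  have hd := hdeg v
  rw [← card_neighborFinset_eq_degree] at hd
  omega

lemma k4_struct {v : V} (h : inK4 G v) :
    ∃ a b c : V, G.Adj v a ∧ G.Adj v b ∧ G.Adj v c ∧ G.Adj a b ∧ G.Adj a c ∧ G.Adj b c ∧
      Kset G v = {v, a, b, c} ∧ ∀ u, G.Adj v u → u = a ∨ u = b ∨ u = c := by
  obtain ⟨a, b, c, hva, hvb, hvc, hab, hac, hbc⟩ := h
  refine ⟨a, b, c, hva, hvb, hvc, hab, hac, hbc, ?_, ?_⟩
  · ext x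
    simp only [Kset, Finset.mem_insert, mem_neighborFinset, Finset.mem_singleton]
    constructor
    · rintro (rfl | hx)
      · tauto
      · rcases mem_of_adj hdeg hva hvb hvc hab.ne (G.ne_of_adj hac) (G.ne_of_adj hbc) hx with
          rfl | rfl | rfl <;> tauto
    · rintro (rfl | rfl | rfl | rfl) <;> tauto
  · exact fun u hu => mem_of_adj hdeg hva hvb hvc hab.ne (G.ne_of_adj hac) (G.ne_of_adj hbc) hu

lemma inK4_of_adj {v u : V} (h : inK4 G v) (hu : G.Adj v u) : inK4 G u := by
  obtain ⟨a, b, c, hva, hvb, hvc, hab, hac, hbc, _, hmem⟩ := k4_struct hdeg h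
  rcases hmem u hu with rfl | rfl | rfl
  · exact ⟨v, b, c, hva.symm, hab, hac, hvb, hvc, hbc⟩
  · exact ⟨v, a, c, hvb.symm, hab.symm, hbc, hva, hvc, hac⟩
  · exact ⟨v, a, b, hvc.symm, hac.symm, hbc.symm, hva, hvb, hab⟩

lemma Kset_subset {v u : V} (h : inK4 G v) (hu : G.Adj v u) : Kset G u ⊆ Kset G v := by
  obtain ⟨a, b, c, hva, hvb, hvc, hab, hac, hbc, hK, hmem⟩ := k4_struct hdeg h
  intro x hx
  simp only [Kset, Finset.mem_insert, mem_neighborFinset] at hx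
  rw [hK]
  simp only [Finset.mem_insert, Finset.mem_singleton]
  rcases hx with rfl | hx
  · rcases hmem x hu with rfl | rfl | rfl <;> tauto
  · -- x is adjacent to u; u is one of a b c
    rcases hmem u hu with rfl | rfl | rfl
    · rcases mem_of_adj hdeg hva.symm hab hac (G.ne_of_adj hvb)
        (G.ne_of_adj hvc) (G.ne_of_adj hbc) hx with rfl | rfl | rfl <;> tauto
    · rcases mem_of_adj hdeg hvb.symm hab.symm hbc (G.ne_of_adj hva)
        (G.ne_of_adj hvc) (G.ne_of_adj hac) hx with rfl | rfl | rfl <;> tauto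
    · rcases mem_of_adj hdeg hvc.symm hac.symm hbc.symm (G.ne_of_adj hva)
        (G.ne_of_adj hvb) (G.ne_of_adj hab) hx with rfl | rfl | rfl <;> tauto

lemma Kset_eq {v u : V} (h : inK4 G v) (hu : G.Adj v u) : Kset G u = Kset G v :=
  le_antisymm (Kset_subset hdeg h hu)
    (Kset_subset hdeg (inK4_of_adj hdeg h hu) hu.symm)

lemma heavy_symm {u v : V} (h : heavy G u v) : heavy G v u := by
  obtain ⟨h1, w, x, hwx, h2, h3, h4, h5⟩ := h
  exact ⟨h1.symm, w, x, hwx, h3, h2, h5, h4⟩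

omit hdeg in
lemma heavy_adj {u v : V} (h : heavy G u v) : G.Adj u v := h.1

lemma heavy_unique {v u u' : V} (hK : ¬ inK4 G v) (h : heavy G v u) (h' : heavy G v u') :
    u = u' := by
  by_contra hne
  obtain ⟨hvu, w, x, hwx, hvw, huw, hvx, hux⟩ := h
  obtain ⟨hvu', s, t, hst, hvs, hu's, hvt, hu't⟩ := h'
  have hdist1 : u ≠ w := G.ne_of_adj huw
  have hdist2 : u ≠ x := G.ne_of_adj hux
  have key : ∀ y, G.Adj v y → y = u ∨ y = w ∨ y = x :=
    fun y hy => mem_of_adj hdeg hvu hvw hvx hdist1 hdist2 hwx hy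
  rcases key u' hvu' with h | h | h
  · exact hne h.symm
  · subst h
    -- u' = w (w has been replaced by u')
    have hs : s = u ∨ s = x := by
      rcases key s hvs with rfl | rfl | rfl
      · tauto
      · exact (G.loopless.irrefl _ hu's).elim
      · tauto
    have ht : t = u ∨ t = x := by
      rcases key t hvt with rfl | rfl | rfl
      · tauto
      · exact (G.loopless.irrefl _ hu't).elim
      · tauto
    have hwxadj : G.Adj u' x := by
      rcases hs with rfl | rfl
      · rcases ht with rfl | rfl
        · exact absurd rfl hst
        · exact hu't
      · exact hu's
    exact hK ⟨u, u', x, hvu, hvw, hvx, huw, hux, hwxadj⟩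
  · subst h
    -- u' = x (x has been replaced by u')
    have hs : s = u ∨ s = w := by
      rcases key s hvs with rfl | rfl | rfl
      · tauto
      · tauto
      · exact (G.loopless.irrefl _ hu's).elim
    have ht : t = u ∨ t = w := by
      rcases key t hvt with rfl | rfl | rfl
      · tauto
      · tauto
      · exact (G.loopless.irrefl _ hu't).elim
    have hwxadj : G.Adj w u' := by
      rcases hs with rfl | rfl
      · rcases ht with rfl | rfl
        · exact absurd rfl hst
        · exact hu't.symm
      · exact hu's.symm
    exact hK ⟨u, w, u', hvu, hvw, hvx, huw, hux, hwxadj⟩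

/-- If `v` is in triangle `v y z`, is not in a K4 and has no heavy edge, then its only
triangle-partners are `y` and `z`. -/
lemma tri_mem {v y z : V} (hK : ¬ inK4 G v) (hh : ¬ ∃ u, heavy G v u)
    (hvy : G.Adj v y) (hvz : G.Adj v z) (hyz : G.Adj y z) :
    ∀ u, triAdj G v u → u = y ∨ u = z := by
  intro u hu
  by_contra hcon
  push_neg at hcon
  obtain ⟨huy, huz⟩ := hcon
  obtain ⟨t, hvu, hvt, hut⟩ := hu
  have hyz' : y ≠ z := G.ne_of_adj hyz
  have ht := mem_of_adj hdeg hvy hvz hvu hyz' (Ne.symm huy) (Ne.symm huz) hvt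
  rcases ht with h | h | h
  · -- t = y : edge v-y is in triangles v y z and v y u, so heavy
    exact hh ⟨y, hvy, z, u, fun q => huz q.symm, hvz, hyz, hvu, (h ▸ hut).symm⟩
  · -- t = z
    exact hh ⟨z, hvz, y, u, fun q => huy q.symm, hvy, hyz.symm, hvu, (h ▸ hut).symm⟩
  · exact (G.loopless.irrefl _ (h ▸ hut)).elim

lemma Tset_eq_of_tri {v y z : V} (hK : ¬ inK4 G v) (hh : ¬ ∃ u, heavy G v u)
    (hvy : G.Adj v y) (hvz : G.Adj v z) (hyz : G.Adj y z) :
    Tset G v = {v, y, z} := by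
  classical
  ext x
  simp only [Tset, Finset.mem_insert, Finset.mem_filter, Finset.mem_univ, true_and,
    Finset.mem_singleton]
  constructor
  · rintro (rfl | hx)
    · tauto
    · rcases tri_mem hdeg hK hh hvy hvz hyz x hx with rfl | rfl <;> tauto
  · rintro (rfl | rfl | rfl)
    · tauto
    · exact Or.inr ⟨z, hvy, hvz, hyz⟩
    · exact Or.inr ⟨y, hvz, hvy, hyz.symm⟩

/-- A vertex of a triangle whose two incident triangle edges are not heavy has no
heavy edge at all. -/
lemma no_heavy_outside {u v w : V} (huv : G.Adj u v) (huw : G.Adj u w) (hvw : G.Adj v w)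
    (h1 : ¬ heavy G u v) (h2 : ¬ heavy G u w) : ¬ ∃ t, heavy G u t := by
  rintro ⟨t, hut, s1, s2, hs12, hus1, hts1, hus2, hts2⟩
  have htv : t ≠ v := by rintro rfl; exact h1 ⟨hut, s1, s2, hs12, hus1, hts1, hus2, hts2⟩
  have htw : t ≠ w := by rintro rfl; exact h2 ⟨hut, s1, s2, hs12, hus1, hts1, hus2, hts2⟩
  have hvw' : v ≠ w := G.ne_of_adj hvw
  have key : ∀ y, G.Adj u y → y = v ∨ y = w ∨ y = t :=
    fun y hy => mem_of_adj hdeg huv huw hut hvw' (Ne.symm htv) (Ne.symm htw) hy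
  -- s1 s2 ∈ {v, w}
  have hs1' : s1 = v ∨ s1 = w := by
    rcases key s1 hus1 with h | h | h
    · tauto
    · tauto
    · exact ((G.loopless.irrefl _ (h ▸ hts1)).elim)
  have hs2' : s2 = v ∨ s2 = w := by
    rcases key s2 hus2 with h | h | h
    · tauto
    · tauto
    · exact ((G.loopless.irrefl _ (h ▸ hts2)).elim)
  -- both v and w adjacent to t
  have hvt : G.Adj v t ∧ G.Adj w t := by
    rcases hs1' with rfl | rfl
    · rcases hs2' with rfl | rfl
      · exact absurd rfl hs12
      · exact ⟨hts1.symm, hts2.symm⟩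
    · rcases hs2' with rfl | rfl
      · exact ⟨hts2.symm, hts1.symm⟩
      · exact absurd rfl hs12
  -- then u-v is heavy (common nbrs w and t)
  exact h1 ⟨huv, w, t, Ne.symm htw, huw, hvw, hut, hvt.1⟩

/-- The third vertex of a triangle containing a heavy edge has no heavy edge (wing). -/
lemma wing_no_heavy {u v t : V} (hK : ¬ inK4 G u) (hheavy : heavy G u v)
    (hut : G.Adj u t) (hvt : G.Adj v t) : ¬ ∃ s, heavy G t s := by
  obtain ⟨huv, w, x, hwx, huw, hvw, hux, hvx⟩ := hheavy
  have htv : t ≠ v := (G.ne_of_adj hvt).symm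
  -- t is one of the common neighbours w, x; let x' be the other one
  have hx' : ∃ x', x' ≠ t ∧ G.Adj u x' ∧ G.Adj v x' := by
    rcases mem_of_adj hdeg huv huw hux (G.ne_of_adj hvw) (G.ne_of_adj hvx) hwx hut
      with h | h | h
    · exact absurd h htv
    · exact ⟨x, fun q => hwx (h ▸ q.symm), hux, hvx⟩
    · exact ⟨w, fun q => hwx (h ▸ q), huw, hvw⟩
  obtain ⟨x', hx't, hux', hvx'⟩ := hx'
  have huv' : u ≠ v := G.ne_of_adj huv
  have hNu : ∀ y, G.Adj u y → y = v ∨ y = t ∨ y = x' :=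
    fun y hy => mem_of_adj hdeg huv hut hux' htv.symm (G.ne_of_adj hvx')
      (Ne.symm hx't) hy
  have hNv : ∀ y, G.Adj v y → y = u ∨ y = t ∨ y = x' :=
    fun y hy => mem_of_adj hdeg huv.symm hvt hvx' (G.ne_of_adj hut)
      (G.ne_of_adj hux') (Ne.symm hx't) hy
  have htx' : ¬ G.Adj t x' := fun h =>
    hK ⟨v, t, x', huv, hut, hux', hvt, hvx', h⟩
  rintro ⟨s, hts, s1, s2, h12, hts1, hss1, hts2, hss2⟩
  by_cases hsu : s = u
  · subst hsu
    have k1 : s1 = v := by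
      rcases hNu s1 hss1 with h | h | h
      · exact h
      · exact absurd (h ▸ hts1) (G.loopless.irrefl _)
      · exact absurd (h ▸ hts1) (fun q => htx' q)
    have k2 : s2 = v := by
      rcases hNu s2 hss2 with h | h | h
      · exact h
      · exact absurd (h ▸ hts2) (G.loopless.irrefl _)
      · exact absurd (h ▸ hts2) (fun q => htx' q)
    exact h12 (k1.trans k2.symm)
  · by_cases hsv : s = v
    · subst hsv
      have k1 : s1 = u := by
        rcases hNv s1 hss1 with h | h | h
        · exact h
        · exact absurd (h ▸ hts1) (G.loopless.irrefl _)
        · exact absurd (h ▸ hts1) (fun q => htx' q)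
      have k2 : s2 = u := by
        rcases hNv s2 hss2 with h | h | h
        · exact h
        · exact absurd (h ▸ hts2) (G.loopless.irrefl _)
        · exact absurd (h ▸ hts2) (fun q => htx' q)
      exact h12 (k1.trans k2.symm)
    · -- s is the possible third neighbour of t
      have hNt : ∀ y, G.Adj t y → y = u ∨ y = v ∨ y = s :=
        fun y hy => mem_of_adj hdeg hut.symm hvt.symm hts huv'
          (fun q => hsu q.symm) (fun q => hsv q.symm) hy
      have k1 : s1 = u ∨ s1 = v := by
        rcases hNt s1 hts1 with h | h | h
        · tauto
        · tauto
        · exact absurd (h ▸ hss1) (G.loopless.irrefl _)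
      have k2 : s2 = u ∨ s2 = v := by
        rcases hNt s2 hts2 with h | h | h
        · tauto
        · tauto
        · exact absurd (h ▸ hss2) (G.loopless.irrefl _)
      have hus : G.Adj u s ∧ G.Adj v s := by
        rcases k1 with rfl | rfl
        · rcases k2 with rfl | rfl
          · exact absurd rfl h12
          · exact ⟨hss1.symm, hss2.symm⟩
        · rcases k2 with rfl | rfl
          · exact ⟨hss2.symm, hss1.symm⟩
          · exact absurd rfl h12
      rcases hNu s hus.1 with h | h | h
      · exact hsv h
      · exact absurd (h ▸ hts) (G.loopless.irrefl _)
      · exact htx' (h ▸ hts)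

/-- In a triangle with no heavy edges and no K4, the other vertices also have no
heavy edges. -/
lemma pure_no_heavy {v y z : V} (hK : ¬ inK4 G v) (hh : ¬ ∃ u, heavy G v u)
    (hvy : G.Adj v y) (hvz : G.Adj v z) (hyz : G.Adj y z) (hnyz : ¬ heavy G y z) :
    ¬ ∃ s, heavy G y s := by
  rintro ⟨s, hys, s1, s2, h12, hys1, hss1, hys2, hss2⟩
  have hH : heavy G y s := ⟨hys, s1, s2, h12, hys1, hss1, hys2, hss2⟩
  by_cases hsv : s = v
  · exact hh ⟨y, heavy_symm hdeg (hsv ▸ hH)⟩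
  · by_cases hsz : s = z
    · exact hnyz (hsz ▸ hH)
    · have hNy : ∀ q, G.Adj y q → q = v ∨ q = z ∨ q = s :=
        fun q hq => mem_of_adj hdeg hvy.symm hyz hys (G.ne_of_adj hvz)
          (fun q2 => hsv q2.symm) (fun q2 => hsz q2.symm) hq
      have k1 : s1 = v ∨ s1 = z := by
        rcases hNy s1 hys1 with h | h | h
        · tauto
        · tauto
        · exact absurd (h ▸ hss1) (G.loopless.irrefl _)
      have k2 : s2 = v ∨ s2 = z := by
        rcases hNy s2 hys2 with h | h | h
        · tauto
        · tauto
        · exact absurd (h ▸ hss2) (G.loopless.irrefl _)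
      have hadj : G.Adj v s ∧ G.Adj z s := by
        rcases k1 with rfl | rfl
        · rcases k2 with rfl | rfl
          · exact absurd rfl h12
          · exact ⟨hss1.symm, hss2.symm⟩
        · rcases k2 with rfl | rfl
          · exact ⟨hss2.symm, hss1.symm⟩
          · exact absurd rfl h12
      rcases tri_mem hdeg hK hh hvy hvz hyz s ⟨y, hadj.1, hvy, hys.symm⟩ with h | h
      · exact absurd (h ▸ hys) (G.loopless.irrefl _)
      · exact hsz h

omit hdeg in
lemma list_len4 {l : List V} (h : l.length = 4) : ∃ a b c d : V, l = [a, b, c, d] := by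
  match l, h with
  | [a, b, c, d], _ => exact ⟨a, b, c, d, rfl⟩

lemma k4_card {v : V} (h : inK4 G v) : (Kset G v).card = 4 := by
  obtain ⟨a, b, c, hva, hvb, hvc, hab, hac, hbc, hK, _⟩ := k4_struct hdeg h
  rw [hK]
  rw [Finset.card_insert_of_notMem (by
      simp only [Finset.mem_insert, Finset.mem_singleton]
      push_neg
      exact ⟨G.ne_of_adj hva, G.ne_of_adj hvb, G.ne_of_adj hvc⟩),
    Finset.card_insert_of_notMem (by
      simp only [Finset.mem_insert, Finset.mem_singleton]
      push_neg
      exact ⟨G.ne_of_adj hab, G.ne_of_adj hac⟩),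
    Finset.card_insert_of_notMem (by simp [G.ne_of_adj hbc]), Finset.card_singleton]

lemma k4_sort {v : V} (h : inK4 G v) :
    ∃ a b c d : V, (Kset G v).sort (· ≤ ·) = [a, b, c, d] := by
  apply list_len4
  rw [Finset.length_sort, k4_card hdeg h]

omit hdeg in
lemma mem_Kset {v u : V} : u ∈ Kset G v ↔ u = v ∨ G.Adj v u := by
  simp [Kset, mem_neighborFinset]

lemma wpair_k4 {v u : V} (h : inK4 G v) (hu : u ∈ Kset G v) :
    wpair G u = pairStep ((Kset G v).sort (· ≤ ·)) u := by
  rcases mem_Kset.mp hu with rfl | hadj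
  · rw [wpair, if_pos h]
  · have h' : inK4 G u := inK4_of_adj hdeg h hadj
    rw [wpair, if_pos h', Kset_eq hdeg h hadj]

omit hdeg in
lemma pairStep_vals {a b c d : V} (hab : a ≠ b) (hac : a ≠ c) (had : a ≠ d)
    (hbc : b ≠ c) (hbd : b ≠ d) (hcd : c ≠ d) :
    pairStep [a, b, c, d] a = b ∧ pairStep [a, b, c, d] b = a ∧
    pairStep [a, b, c, d] c = d ∧ pairStep [a, b, c, d] d = c := by
  refine ⟨?_, ?_, ?_, ?_⟩ <;> simp [pairStep, hab, hac, had, hbc, hbd, hcd,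
    hab.symm, hac.symm, had.symm, hbc.symm, hbd.symm, hcd.symm]

omit hdeg in
lemma pairStep_vals3 {a b c : V} (hab : a ≠ b) (hac : a ≠ c) (hbc : b ≠ c) :
    pairStep [a, b, c] a = b ∧ pairStep [a, b, c] b = a ∧ pairStep [a, b, c] c = c := by
  refine ⟨?_, ?_, ?_⟩ <;> simp [pairStep, hab, hac, hbc,
    hab.symm, hac.symm, hbc.symm]

omit hdeg in
lemma nodup_four {a b c d : V} (h : List.Nodup [a, b, c, d]) :
    a ≠ b ∧ a ≠ c ∧ a ≠ d ∧ b ≠ c ∧ b ≠ d ∧ c ≠ d := by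
  simp only [List.nodup_cons, List.mem_cons, List.mem_singleton, List.not_mem_nil,
    List.nodup_nil, List.mem_singleton] at h
  push_neg at h
  tauto

lemma wpair_heavy {v u : V} (hK : ¬ inK4 G v) (hu : heavy G v u) : wpair G v = u := by
  have he : ∃ u, heavy G v u := ⟨u, hu⟩
  rw [wpair, if_neg hK, dif_pos he]
  exact heavy_unique hdeg hK he.choose_spec hu

omit hdeg in
lemma wpair_wing {v : V} (hK : ¬ inK4 G v) (hh : ¬ ∃ u, heavy G v u)
    (ht : ∃ u, triAdj G v u)
    (hw : ∃ y z, y ∈ Tset G v ∧ z ∈ Tset G v ∧ heavy G y z) : wpair G v = v := by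
  rw [wpair, if_neg hK, dif_neg hh, if_pos ht, if_pos hw]

omit hdeg in
lemma wpair_pure {v : V} (hK : ¬ inK4 G v) (hh : ¬ ∃ u, heavy G v u)
    (ht : ∃ u, triAdj G v u)
    (hw : ¬ ∃ y z, y ∈ Tset G v ∧ z ∈ Tset G v ∧ heavy G y z) :
    wpair G v = pairStep ((Tset G v).sort (· ≤ ·)) v := by
  rw [wpair, if_neg hK, dif_neg hh, if_pos ht, if_neg hw]

omit hdeg in
lemma wpair_free {v : V} (ht : ¬ ∃ u, triAdj G v u) : wpair G v = v := by
  have hK : ¬ inK4 G v := by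
    rintro ⟨a, b, c, hva, hvb, hvc, hab, hac, hbc⟩
    exact ht ⟨a, b, hva, hvb, hab⟩
  have hh : ¬ ∃ u, heavy G v u := by
    rintro ⟨u, huv, w, x, hwx, h1, h2, h3, h4⟩
    exact ht ⟨u, w, huv, h1, h2⟩
  rw [wpair, if_neg hK, dif_neg hh, if_neg ht]

lemma k4_package {v : V} (h : inK4 G v) :
    ∃ a b c d : V, (Kset G v).sort (· ≤ ·) = [a, b, c, d] ∧
      wpair G a = b ∧ wpair G b = a ∧ wpair G c = d ∧ wpair G d = c := by
  obtain ⟨a, b, c, d, hsort⟩ := k4_sort hdeg h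
  have hnd : List.Nodup [a, b, c, d] := hsort ▸ (Kset G v).sort_nodup (· ≤ ·)
  obtain ⟨h1, h2, h3, h4, h5, h6⟩ := nodup_four hnd
  obtain ⟨p1, p2, p3, p4⟩ := pairStep_vals h1 h2 h3 h4 h5 h6
  have hmem : ∀ x, x ∈ ([a, b, c, d] : List V) → x ∈ Kset G v := by
    intro x hx
    rw [← Finset.mem_sort (α := V) (· ≤ ·), hsort]
    exact hx
  refine ⟨a, b, c, d, hsort, ?_, ?_, ?_, ?_⟩
  · rw [wpair_k4 hdeg h (hmem a (by simp)), hsort, p1]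
  · rw [wpair_k4 hdeg h (hmem b (by simp)), hsort, p2]
  · rw [wpair_k4 hdeg h (hmem c (by simp)), hsort, p3]
  · rw [wpair_k4 hdeg h (hmem d (by simp)), hsort, p4]

lemma pure_package {v : V} (hK : ¬ inK4 G v) (hh : ¬ ∃ u, heavy G v u)
    (ht : ∃ u, triAdj G v u)
    (hw : ¬ ∃ y z, y ∈ Tset G v ∧ z ∈ Tset G v ∧ heavy G y z) :
    ∃ a b c : V, (Tset G v).sort (· ≤ ·) = [a, b, c] ∧
      wpair G a = b ∧ wpair G b = a ∧ wpair G c = c := by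
  obtain ⟨y, z, hvy, hvz, hyz⟩ := ht
  have hTv : Tset G v = {v, y, z} := Tset_eq_of_tri hdeg hK hh hvy hvz hyz
  have hmemv : v ∈ Tset G v := by rw [hTv]; simp
  have hmemy : y ∈ Tset G v := by rw [hTv]; simp
  have hmemz : z ∈ Tset G v := by rw [hTv]; simp
  have key : ∀ x ∈ Tset G v, wpair G x = pairStep ((Tset G v).sort (· ≤ ·)) x := by
    intro x hx
    rw [hTv] at hx
    simp only [Finset.mem_insert, Finset.mem_singleton] at hx
    have htv : ∃ u, triAdj G v u := ⟨y, z, hvy, hvz, hyz⟩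
    rcases hx with rfl | rfl | rfl
    · exact wpair_pure hK hh htv hw
    · have hKy : ¬ inK4 G x := fun hq => hK (inK4_of_adj hdeg hq hvy.symm)
      have hny : ¬ heavy G x z := fun hq => hw ⟨x, z, hmemy, hmemz, hq⟩
      have hhy : ¬ ∃ s, heavy G x s := pure_no_heavy hdeg hK hh hvy hvz hyz hny
      have hty : ∃ u, triAdj G x u := ⟨v, z, hvy.symm, hyz, hvz⟩
      have hTy : Tset G x = Tset G v := by
        rw [Tset_eq_of_tri hdeg hKy hhy hvy.symm hyz hvz, hTv]
        ext q; simp only [Finset.mem_insert, Finset.mem_singleton]; tauto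
      rw [wpair_pure hKy hhy hty (hTy ▸ hw), hTy]
    · have hKz : ¬ inK4 G x := fun hq => hK (inK4_of_adj hdeg hq hvz.symm)
      have hnz : ¬ heavy G x y := fun hq => hw ⟨x, y, hmemz, hmemy, hq⟩
      have hhz : ¬ ∃ s, heavy G x s := pure_no_heavy hdeg hK hh hvz hvy hyz.symm hnz
      have htz : ∃ u, triAdj G x u := ⟨v, y, hvz.symm, hyz.symm, hvy⟩
      have hTz : Tset G x = Tset G v := by
        rw [Tset_eq_of_tri hdeg hKz hhz hvz.symm hyz.symm hvy, hTv]
        ext q; simp only [Finset.mem_insert, Finset.mem_singleton]; tauto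
      rw [wpair_pure hKz hhz htz (hTz ▸ hw), hTz]
  have hcard : (Tset G v).card = 3 := by
    rw [hTv]
    rw [Finset.card_insert_of_notMem (by
        simp only [Finset.mem_insert, Finset.mem_singleton]
        push_neg
        exact ⟨G.ne_of_adj hvy, G.ne_of_adj hvz⟩),
      Finset.card_insert_of_notMem (by simp [G.ne_of_adj hyz]), Finset.card_singleton]
  have hlen : ((Tset G v).sort (· ≤ ·)).length = 3 := by
    rw [Finset.length_sort, hcard]
  obtain ⟨a, b, c, hsort⟩ := List.length_eq_three.mp hlen
  have hnd : List.Nodup [a, b, c] := hsort ▸ (Tset G v).sort_nodup (· ≤ ·)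
  have h1 : a ≠ b := by simp only [List.nodup_cons, List.mem_cons] at hnd; tauto
  have h2 : a ≠ c := by simp only [List.nodup_cons, List.mem_cons] at hnd; tauto
  have h3 : b ≠ c := by
    simp only [List.nodup_cons, List.mem_cons, List.mem_singleton] at hnd; tauto
  obtain ⟨p1, p2, p3⟩ := pairStep_vals3 h1 h2 h3
  have hmem : ∀ x, x ∈ ([a, b, c] : List V) → x ∈ Tset G v := by
    intro x hx
    rw [← Finset.mem_sort (α := V) (· ≤ ·), hsort]
    exact hx
  refine ⟨a, b, c, hsort, ?_, ?_, ?_⟩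
  · rw [key a (hmem a (by simp)), hsort, p1]
  · rw [key b (hmem b (by simp)), hsort, p2]
  · rw [key c (hmem c (by simp)), hsort, p3]

lemma wpair_invol (v : V) : wpair G (wpair G v) = v := by
  by_cases hK : inK4 G v
  · obtain ⟨a, b, c, d, hsort, p1, p2, p3, p4⟩ := k4_package hdeg hK
    have hv : v ∈ ([a, b, c, d] : List V) := by
      rw [← hsort, Finset.mem_sort (α := V) (· ≤ ·)]
      exact mem_Kset.mpr (Or.inl rfl)
    have hw : wpair G v = pairStep ((Kset G v).sort (· ≤ ·)) v :=
      wpair_k4 hdeg hK (mem_Kset.mpr (Or.inl rfl))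
    rw [hsort] at hw
    obtain ⟨h1, h2, h3, h4, h5, h6⟩ := nodup_four (hsort ▸ (Kset G v).sort_nodup (· ≤ ·))
    obtain ⟨q1, q2, q3, q4⟩ := pairStep_vals h1 h2 h3 h4 h5 h6
    simp only [List.mem_cons, List.mem_singleton, List.not_mem_nil, or_false] at hv
    rcases hv with rfl | rfl | rfl | rfl
    · rw [hw, q1, p2]
    · rw [hw, q2, p1]
    · rw [hw, q3, p4]
    · rw [hw, q4, p3]
  · by_cases hh : ∃ u, heavy G v u
    · obtain ⟨u, hu⟩ := hh
      have h1 : wpair G v = u := wpair_heavy hdeg hK hu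
      have hKu : ¬ inK4 G u := fun hq => hK (inK4_of_adj hdeg hq hu.1.symm)
      rw [h1, wpair_heavy hdeg hKu (heavy_symm hdeg hu)]
    · by_cases ht : ∃ u, triAdj G v u
      · by_cases hw : ∃ y z, y ∈ Tset G v ∧ z ∈ Tset G v ∧ heavy G y z
        · rw [wpair_wing hK hh ht hw, wpair_wing hK hh ht hw]
        · obtain ⟨a, b, c, hsort, p1, p2, p3⟩ := pure_package hdeg hK hh ht hw
          have hv : v ∈ ([a, b, c] : List V) := by
            rw [← hsort, Finset.mem_sort (α := V) (· ≤ ·)]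
            simp [Tset]
          have hwv : wpair G v = pairStep ((Tset G v).sort (· ≤ ·)) v :=
            wpair_pure hK hh ht hw
          rw [hsort] at hwv
          have hnd := hsort ▸ (Tset G v).sort_nodup (· ≤ ·)
          have h1 : a ≠ b := by
            simp only [List.nodup_cons, List.mem_cons] at hnd; tauto
          have h2 : a ≠ c := by
            simp only [List.nodup_cons, List.mem_cons] at hnd; tauto
          have h3 : b ≠ c := by
            simp only [List.nodup_cons, List.mem_cons, List.mem_singleton] at hnd; tauto
          obtain ⟨q1, q2, q3⟩ := pairStep_vals3 h1 h2 h3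
          simp only [List.mem_cons, List.mem_singleton, List.not_mem_nil, or_false] at hv
          rcases hv with rfl | rfl | rfl
          · rw [hwv, q1, p2]
          · rw [hwv, q2, p1]
          · rw [hwv, q3, hwv, q3]
      · rw [wpair_free ht, wpair_free ht]

end Struct

lemma card_two_aux {A B C : ℕ}
    (h : (A = B ∧ A ≠ C) ∨ (A = C ∧ A ≠ B) ∨ (B = C ∧ A ≠ B)) :
    ({A, B, C} : Finset ℕ).card = 2 := by
  rcases h with ⟨h1, hne⟩ | ⟨h1, hne⟩ | ⟨h1, hne⟩
  · have e : ({A, B, C} : Finset ℕ) = {A, C} := by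
      ext x; simp only [Finset.mem_insert, Finset.mem_singleton]; omega
    rw [e, Finset.card_insert_of_notMem (by simp [hne]), Finset.card_singleton]
  · have e : ({A, B, C} : Finset ℕ) = {A, B} := by
      ext x; simp only [Finset.mem_insert, Finset.mem_singleton]; omega
    rw [e, Finset.card_insert_of_notMem (by simp [hne]), Finset.card_singleton]
  · have e : ({A, B, C} : Finset ℕ) = {A, B} := by
      ext x; simp only [Finset.mem_insert, Finset.mem_singleton]; omega
    rw [e, Finset.card_insert_of_notMem (by simp [hne]), Finset.card_singleton]

variable (G) in
/-- The coloring induced by the pairing. -/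
noncomputable def wcol (v : V) : ℕ := ((Fintype.equivFin V) (min v (wpair G v)) : ℕ)

section Color
variable (hdeg : ∀ v : V, G.degree v ≤ 3)
include hdeg

lemma wcol_pair {v u : V} (h : wpair G v = u) : wcol G v = wcol G u := by
  have h2 : wpair G u = v := by rw [← h, wpair_invol hdeg]
  unfold wcol
  rw [h, h2, min_comm]

lemma wcol_fiber {u v : V} (h : wcol G u = wcol G v) : u = v ∨ u = wpair G v := by
  unfold wcol at h
  have h' : min u (wpair G u) = min v (wpair G v) :=
    (Fintype.equivFin V).injective (Fin.val_injective h)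
  rcases min_choice u (wpair G u) with h1 | h1 <;>
    rcases min_choice v (wpair G v) with h2 | h2
  · left; rw [← h1, h', h2]
  · right; rw [← h1, h', h2]
  · right
    have h3 : wpair G u = v := by rw [← h1, h', h2]
    rw [← h3, wpair_invol hdeg]
  · have : wpair G u = wpair G v := by rw [← h1, h', h2]
    left
    rw [← wpair_invol hdeg u, this, wpair_invol hdeg]

lemma k4_triangle_pair {p u v w : V} (hp : inK4 G p)
    (hu : u ∈ Kset G p) (hv : v ∈ Kset G p) (hw : w ∈ Kset G p)
    (huv : u ≠ v) (huw : u ≠ w) (hvw : v ≠ w) :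
    ∃ x y : V, x ∈ ({u, v, w} : Finset V) ∧ y ∈ ({u, v, w} : Finset V) ∧
      x ≠ y ∧ wpair G x = y := by
  obtain ⟨a, b, c, d, hsort, p1, p2, p3, p4⟩ := k4_package hdeg hp
  obtain ⟨h1, h2, h3, h4, h5, h6⟩ := nodup_four (hsort ▸ (Kset G p).sort_nodup (· ≤ ·))
  have hmem : ∀ x, x ∈ Kset G p → x = a ∨ x = b ∨ x = c ∨ x = d := by
    intro x hx
    have : x ∈ ([a, b, c, d] : List V) := by
      rw [← hsort, Finset.mem_sort (α := V) (· ≤ ·)]; exact hx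
    simpa using this
  set S : Finset V := {u, v, w} with hS
  have hcardS : S.card = 3 := by
    rw [hS, Finset.card_insert_of_notMem (by simp [huv, huw]),
      Finset.card_insert_of_notMem (by simp [hvw]), Finset.card_singleton]
  have hSsub : ∀ x ∈ S, x = a ∨ x = b ∨ x = c ∨ x = d := by
    intro x hx
    rw [hS] at hx
    simp only [Finset.mem_insert, Finset.mem_singleton] at hx
    rcases hx with rfl | rfl | rfl
    · exact hmem x hu
    · exact hmem x hv
    · exact hmem x hw
  have bound : ∀ p q : V, (∀ x ∈ S, x = p ∨ x = q) → False := by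
    intro p q hpq
    have hsub : S ⊆ {p, q} := fun x hx => by
      rcases hpq x hx with rfl | rfl <;> simp
    have hc1 := Finset.card_le_card hsub
    have hc2 : ({p, q} : Finset V).card ≤ 2 :=
      le_trans (Finset.card_insert_le _ _) (by simp)
    omega
  have key : (a ∈ S ∧ b ∈ S) ∨ (c ∈ S ∧ d ∈ S) := by
    by_contra hcon
    rw [not_or] at hcon
    have hd1 : a ∉ S ∨ b ∉ S := not_and_or.mp hcon.1
    have hd2 : c ∉ S ∨ d ∉ S := not_and_or.mp hcon.2
    rcases hd1 with hn1 | hn1 <;> rcases hd2 with hn2 | hn2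
    · refine bound b d fun x hx => ?_
      rcases hSsub x hx with rfl | rfl | rfl | rfl
      · exact absurd hx hn1
      · exact Or.inl rfl
      · exact absurd hx hn2
      · exact Or.inr rfl
    · refine bound b c fun x hx => ?_
      rcases hSsub x hx with rfl | rfl | rfl | rfl
      · exact absurd hx hn1
      · exact Or.inl rfl
      · exact Or.inr rfl
      · exact absurd hx hn2
    · refine bound a d fun x hx => ?_
      rcases hSsub x hx with rfl | rfl | rfl | rfl
      · exact Or.inl rfl
      · exact absurd hx hn1
      · exact absurd hx hn2
      · exact Or.inr rfl
    · refine bound a c fun x hx => ?_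
      rcases hSsub x hx with rfl | rfl | rfl | rfl
      · exact Or.inl rfl
      · exact absurd hx hn1
      · exact Or.inr rfl
      · exact absurd hx hn2
  rcases key with ⟨ha, hb⟩ | ⟨hc, hd⟩
  · exact ⟨a, b, ha, hb, h1, p1⟩
  · exact ⟨c, d, hc, hd, h6, p3⟩

lemma pair_in_triangle {u v w : V} (h1 : G.Adj u v) (h2 : G.Adj u w) (h3 : G.Adj v w) :
    ∃ x y : V, x ∈ ({u, v, w} : Finset V) ∧ y ∈ ({u, v, w} : Finset V) ∧
      x ≠ y ∧ wpair G x = y := by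
  have hne1 : u ≠ v := G.ne_of_adj h1
  have hne2 : u ≠ w := G.ne_of_adj h2
  have hne3 : v ≠ w := G.ne_of_adj h3
  by_cases hA : inK4 G u ∨ inK4 G v ∨ inK4 G w
  · rcases hA with hp | hp | hp
    · exact k4_triangle_pair hdeg hp (mem_Kset.mpr (Or.inl rfl))
        (mem_Kset.mpr (Or.inr h1)) (mem_Kset.mpr (Or.inr h2)) hne1 hne2 hne3
    · exact k4_triangle_pair hdeg hp (mem_Kset.mpr (Or.inr h1.symm))
        (mem_Kset.mpr (Or.inl rfl)) (mem_Kset.mpr (Or.inr h3)) hne1 hne2 hne3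
    · exact k4_triangle_pair hdeg hp (mem_Kset.mpr (Or.inr h2.symm))
        (mem_Kset.mpr (Or.inr h3.symm)) (mem_Kset.mpr (Or.inl rfl)) hne1 hne2 hne3
  · rw [not_or, not_or] at hA
    obtain ⟨hKu, hKv, hKw⟩ := hA
    by_cases hB : heavy G u v ∨ heavy G u w ∨ heavy G v w
    · rcases hB with hq | hq | hq
      · exact ⟨u, v, by simp, by simp, hne1, wpair_heavy hdeg hKu hq⟩
      · exact ⟨u, w, by simp, by simp, hne2, wpair_heavy hdeg hKu hq⟩
      · exact ⟨v, w, by simp, by simp, hne3, wpair_heavy hdeg hKv hq⟩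
    · rw [not_or, not_or] at hB
      obtain ⟨nb1, nb2, nb3⟩ := hB
      have nb1' : ¬ heavy G v u := fun q => nb1 (heavy_symm hdeg q)
      have nb2' : ¬ heavy G w u := fun q => nb2 (heavy_symm hdeg q)
      have nb3' : ¬ heavy G w v := fun q => nb3 (heavy_symm hdeg q)
      have hhu : ¬ ∃ t, heavy G u t := no_heavy_outside hdeg h1 h2 h3 nb1 nb2
      have hTu : Tset G u = {u, v, w} := Tset_eq_of_tri hdeg hKu hhu h1 h2 h3
      have hwing : ¬ ∃ y z, y ∈ Tset G u ∧ z ∈ Tset G u ∧ heavy G y z := by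
        rintro ⟨y, z, hy, hz, hyz⟩
        rw [hTu] at hy hz
        simp only [Finset.mem_insert, Finset.mem_singleton] at hy hz
        rcases hy with rfl | rfl | rfl <;> rcases hz with rfl | rfl | rfl
        · exact G.loopless.irrefl _ hyz.1
        · exact nb1 hyz
        · exact nb2 hyz
        · exact nb1' hyz
        · exact G.loopless.irrefl _ hyz.1
        · exact nb3 hyz
        · exact nb2' hyz
        · exact nb3' hyz
        · exact G.loopless.irrefl _ hyz.1
      obtain ⟨a, b, c, hsort, p1, p2, p3⟩ :=
        pure_package hdeg hKu hhu ⟨v, w, h1, h2, h3⟩ hwing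
      have hmemS : ∀ x, x ∈ ([a, b, c] : List V) → x ∈ ({u, v, w} : Finset V) := by
        intro x hx
        rw [← hTu, ← Finset.mem_sort (α := V) (· ≤ ·), hsort]
        exact hx
      have hab : a ≠ b := by
        have hnd := hsort ▸ (Tset G u).sort_nodup (· ≤ ·)
        simp only [List.nodup_cons, List.mem_cons] at hnd
        tauto
      exact ⟨a, b, hmemS a (by simp), hmemS b (by simp), hab, p1⟩

lemma wcol_worm : IsWormColoring G (wcol G) := by
  intro u v w h1 h2 h3
  obtain ⟨x, y, hx, hy, hxy, hp⟩ := pair_in_triangle hdeg h1 h2 h3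
  have hcxy : wcol G x = wcol G y := wcol_pair hdeg hp
  have hdiff : ∀ z, z ≠ x → z ≠ y → wcol G z ≠ wcol G x := by
    intro z hzx hzy hcc
    rcases wcol_fiber hdeg hcc with h | h
    · exact hzx h
    · exact hzy (h.trans hp)
  have hne1 : u ≠ v := G.ne_of_adj h1
  have hne2 : u ≠ w := G.ne_of_adj h2
  have hne3 : v ≠ w := G.ne_of_adj h3
  simp only [Finset.mem_insert, Finset.mem_singleton] at hx hy
  apply card_two_aux
  rcases hx with rfl | rfl | rfl <;> rcases hy with rfl | rfl | rfl
  · exact absurd rfl hxy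
  · exact Or.inl ⟨hcxy, (hdiff w hne2.symm hne3.symm).symm⟩
  · exact Or.inr (Or.inl ⟨hcxy, (hdiff v hne1.symm hne3).symm⟩)
  · exact Or.inl ⟨hcxy.symm, fun q => hdiff w hne3.symm hne2.symm (q.symm.trans hcxy.symm)⟩
  · exact absurd rfl hxy
  · exact Or.inr (Or.inr ⟨hcxy, hdiff u hne1 hne2⟩)
  · exact Or.inr (Or.inl ⟨hcxy.symm, fun q => hdiff v hne3 hne1.symm (q.symm.trans hcxy.symm)⟩)
  · exact Or.inr (Or.inr ⟨hcxy.symm, fun q => hdiff u hne2 hne1 (q.trans hcxy.symm)⟩)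
  · exact absurd rfl hxy

lemma fiber_le_two (k : ℕ) (hk : k ∈ Finset.univ.image (wcol G)) :
    (Finset.univ.filter fun v => wcol G v = k).card ≤ 2 := by
  obtain ⟨x0, -, rfl⟩ := Finset.mem_image.mp hk
  have hsub : (Finset.univ.filter fun v => wcol G v = wcol G x0) ⊆ {x0, wpair G x0} := by
    intro z hz
    simp only [Finset.mem_filter, Finset.mem_univ, true_and] at hz
    simp only [Finset.mem_insert, Finset.mem_singleton]
    exact wcol_fiber hdeg hz
  exact le_trans (Finset.card_le_card hsub)
    (le_trans (Finset.card_insert_le _ _) (by simp))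

lemma wcol_lower : Fintype.card V ≤ 2 * colorsUsed (wcol G) := by
  classical
  have hsum : (Finset.univ : Finset V).card =
      ∑ k ∈ Finset.univ.image (wcol G), (Finset.univ.filter fun v => wcol G v = k).card :=
    Finset.card_eq_sum_card_fiberwise (fun x _ => Finset.mem_image_of_mem _ (Finset.mem_univ x))
  have hle : ∑ k ∈ Finset.univ.image (wcol G), (Finset.univ.filter fun v => wcol G v = k).card
      ≤ ∑ _k ∈ Finset.univ.image (wcol G), 2 :=
    Finset.sum_le_sum (fun k hk => fiber_le_two hdeg k hk)
  rw [Finset.sum_const, smul_eq_mul] at hle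
  rw [← Finset.card_univ]
  unfold colorsUsed
  omega

lemma wcol_lower_strict (hfix : ∃ v, wpair G v = v) :
    Fintype.card V < 2 * colorsUsed (wcol G) := by
  classical
  obtain ⟨v0, hv0⟩ := hfix
  have hsum : (Finset.univ : Finset V).card =
      ∑ k ∈ Finset.univ.image (wcol G), (Finset.univ.filter fun v => wcol G v = k).card :=
    Finset.card_eq_sum_card_fiberwise (fun x _ => Finset.mem_image_of_mem _ (Finset.mem_univ x))
  set I := Finset.univ.image (wcol G) with hI
  have hmem : wcol G v0 ∈ I := Finset.mem_image_of_mem _ (Finset.mem_univ v0)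
  have hfib1 : (Finset.univ.filter fun v => wcol G v = wcol G v0).card ≤ 1 := by
    have hsub : (Finset.univ.filter fun v => wcol G v = wcol G v0) ⊆ {v0} := by
      intro z hz
      simp only [Finset.mem_filter, Finset.mem_univ, true_and] at hz
      rcases wcol_fiber hdeg hz with h | h
      · simp [h]
      · simp [h, hv0]
    exact le_trans (Finset.card_le_card hsub) (by simp)
  have hsplit : ∑ k ∈ I.erase (wcol G v0), (Finset.univ.filter fun v => wcol G v = k).card
      + (Finset.univ.filter fun v => wcol G v = wcol G v0).card
      = ∑ k ∈ I, (Finset.univ.filter fun v => wcol G v = k).card :=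
    Finset.sum_erase_add _ _ hmem
  have herase : ∑ k ∈ I.erase (wcol G v0), (Finset.univ.filter fun v => wcol G v = k).card
      ≤ ∑ _k ∈ I.erase (wcol G v0), 2 :=
    Finset.sum_le_sum (fun k hk => fiber_le_two hdeg k (Finset.mem_of_mem_erase hk))
  rw [Finset.sum_const, smul_eq_mul] at herase
  have hcer : (I.erase (wcol G v0)).card = I.card - 1 := Finset.card_erase_of_mem hmem
  have hIpos : 0 < I.card := Finset.card_pos.mpr ⟨_, hmem⟩
  have : Fintype.card V = ∑ k ∈ I, (Finset.univ.filter fun v => wcol G v = k).card := by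
    rw [← Finset.card_univ]; exact hsum
  unfold colorsUsed
  rw [← hI]
  omega

lemma exists_fixed {v0 : V} (hv0 : ¬ inK4 G v0) : ∃ v, wpair G v = v := by
  by_cases ht : ∃ u, triAdj G v0 u
  swap
  · exact ⟨v0, wpair_free ht⟩
  obtain ⟨y, z, hvy, hvz, hyz⟩ := ht
  have hKy : ¬ inK4 G y := fun h => hv0 (inK4_of_adj hdeg h hvy.symm)
  have hKz : ¬ inK4 G z := fun h => hv0 (inK4_of_adj hdeg h hvz.symm)
  by_cases hvyH : heavy G v0 y
  · -- z is a wing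
    have hhz : ¬ ∃ s, heavy G z s := wing_no_heavy hdeg hv0 hvyH hvz hyz
    refine ⟨z, wpair_wing hKz hhz ⟨v0, y, hvz.symm, hyz.symm, hvy⟩
      ⟨v0, y, ?_, ?_, hvyH⟩⟩
    · simp only [Tset, Finset.mem_insert, Finset.mem_filter, Finset.mem_univ, true_and]
      exact Or.inr ⟨y, hvz.symm, hyz.symm, hvy⟩
    · simp only [Tset, Finset.mem_insert, Finset.mem_filter, Finset.mem_univ, true_and]
      exact Or.inr ⟨v0, hyz.symm, hvz.symm, hvy.symm⟩
  · by_cases hvzH : heavy G v0 z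
    · -- y is a wing
      have hhy : ¬ ∃ s, heavy G y s := wing_no_heavy hdeg hv0 hvzH hvy hyz.symm
      refine ⟨y, wpair_wing hKy hhy ⟨v0, z, hvy.symm, hyz, hvz⟩
        ⟨v0, z, ?_, ?_, hvzH⟩⟩
      · simp only [Tset, Finset.mem_insert, Finset.mem_filter, Finset.mem_univ, true_and]
        exact Or.inr ⟨z, hvy.symm, hyz, hvz⟩
      · simp only [Tset, Finset.mem_insert, Finset.mem_filter, Finset.mem_univ, true_and]
        exact Or.inr ⟨v0, hyz, hvy.symm, hvz.symm⟩
    · by_cases hyzH : heavy G y z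
      · -- v0 is a wing
        have hhv : ¬ ∃ s, heavy G v0 s := wing_no_heavy hdeg hKy hyzH hvy.symm hvz.symm
        refine ⟨v0, wpair_wing hv0 hhv ⟨y, z, hvy, hvz, hyz⟩ ⟨y, z, ?_, ?_, hyzH⟩⟩
        · simp only [Tset, Finset.mem_insert, Finset.mem_filter, Finset.mem_univ, true_and]
          exact Or.inr ⟨z, hvy, hvz, hyz⟩
        · simp only [Tset, Finset.mem_insert, Finset.mem_filter, Finset.mem_univ, true_and]
          exact Or.inr ⟨y, hvz, hvy, hyz.symm⟩
      · -- pure triangle: the top of the sort is fixed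
        have hhv : ¬ ∃ s, heavy G v0 s := no_heavy_outside hdeg hvy hvz hyz hvyH hvzH
        have hwing : ¬ ∃ p q, p ∈ Tset G v0 ∧ q ∈ Tset G v0 ∧ heavy G p q := by
          rintro ⟨p, q, hp, hq, hpq⟩
          rw [Tset_eq_of_tri hdeg hv0 hhv hvy hvz hyz] at hp hq
          simp only [Finset.mem_insert, Finset.mem_singleton] at hp hq
          rcases hp with rfl | rfl | rfl <;> rcases hq with rfl | rfl | rfl
          · exact G.loopless.irrefl _ hpq.1
          · exact hvyH hpq
          · exact hvzH hpq
          · exact hvyH (heavy_symm hdeg hpq)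
          · exact G.loopless.irrefl _ hpq.1
          · exact hyzH hpq
          · exact hvzH (heavy_symm hdeg hpq)
          · exact hyzH (heavy_symm hdeg hpq)
          · exact G.loopless.irrefl _ hpq.1
        obtain ⟨a, b, c, hsort, p1, p2, p3⟩ :=
          pure_package hdeg hv0 hhv ⟨y, z, hvy, hvz, hyz⟩ hwing
        exact ⟨c, p3⟩

lemma k4_clique {v x y : V} (h : inK4 G v) (hx : x ∈ Kset G v) (hy : y ∈ Kset G v)
    (hxy : x ≠ y) : G.Adj x y := by
  obtain ⟨a, b, c, hva, hvb, hvc, hab, hac, hbc, hKeq, -⟩ := k4_struct hdeg h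
  rw [hKeq] at hx hy
  simp only [Finset.mem_insert, Finset.mem_singleton] at hx hy
  rcases hx with rfl | rfl | rfl | rfl <;> rcases hy with rfl | rfl | rfl | rfl <;>
    first
      | exact absurd rfl hxy
      | assumption
      | exact hva.symm
      | exact hvb.symm
      | exact hvc.symm
      | exact hab.symm
      | exact hac.symm
      | exact hbc.symm

lemma walk_k4 {x u : V} (p : G.Walk x u) : inK4 G x → u ∈ Kset G x := by
  induction p with
  | nil => exact fun hx => mem_Kset.mpr (Or.inl rfl)
  | cons h p ih =>
    intro hx
    exact (Kset_eq hdeg hx h) ▸ ih (inK4_of_adj hdeg hx h)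

lemma all_k4_components (hK : ∀ v : V, inK4 G v) (C : G.ConnectedComponent) :
    Nonempty (G.induce C.supp ≃g (⊤ : SimpleGraph (Fin 4))) := by
  classical
  obtain ⟨v, rfl⟩ := C.exists_rep
  have hsupp : (G.connectedComponentMk v).supp = (↑(Kset G v) : Set V) := by
    ext u
    rw [SimpleGraph.ConnectedComponent.mem_supp_iff]
    constructor
    · intro h
      obtain ⟨p⟩ := (SimpleGraph.ConnectedComponent.eq.mp h)
      exact walk_k4 hdeg p.reverse (hK v)
    · intro h
      rcases mem_Kset.mp h with rfl | hadj
      · rfl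
      · exact SimpleGraph.ConnectedComponent.eq.mpr hadj.symm.reachable
  have e2 : ((Kset G v : Finset V) : Type _) ≃ Fin 4 :=
    Fintype.equivFinOfCardEq (by rw [Fintype.card_coe, k4_card hdeg (hK v)])
  have e1 : ((G.connectedComponentMk v).supp : Set V) ≃ ((Kset G v : Finset V) : Type _) :=
    (Equiv.setCongr hsupp).trans (Equiv.subtypeEquivRight (fun x => by simp))
  refine ⟨⟨e1.trans e2, ?_⟩⟩
  intro a b
  simp only [top_adj, ne_eq, EmbeddingLike.apply_eq_iff_eq, comap_adj,
    Function.Embedding.coe_subtype]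
  constructor
  · intro hne
    have hamem : (a : V) ∈ Kset G v := (Set.ext_iff.mp hsupp _).mp a.2
    have hbmem : (b : V) ∈ Kset G v := (Set.ext_iff.mp hsupp _).mp b.2
    exact k4_clique hdeg (hK v) hamem hbmem (fun q => hne (congrArg (e1.trans e2) (Subtype.ext q)))
  · intro hadj q
    exact G.ne_of_adj hadj (congrArg Subtype.val ((e1.trans e2).injective q))

lemma k4_upper
    (h4 : ∀ C : G.ConnectedComponent, Nonempty (G.induce C.supp ≃g (⊤ : SimpleGraph (Fin 4))))
    {c : V → ℕ} (hc : IsWormColoring G c) : 2 * colorsUsed c ≤ Fintype.card V := by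
  classical
  haveI : Fintype G.ConnectedComponent := Fintype.ofFinite _
  set fib : G.ConnectedComponent → Finset V :=
    fun C => Finset.univ.filter (fun v => G.connectedComponentMk v = C) with hfib
  have hsum : Fintype.card V = ∑ C : G.ConnectedComponent, (fib C).card := by
    rw [← Finset.card_univ]
    exact Finset.card_eq_sum_card_fiberwise (fun x _ => Finset.mem_univ _)
  have hadjall : ∀ (C : G.ConnectedComponent) (x y : V),
      G.connectedComponentMk x = C → G.connectedComponentMk y = C → x ≠ y → G.Adj x y := by
    intro C x y hx hy hxy
    obtain ⟨e⟩ := h4 C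
    have hax : x ∈ C.supp := by rw [SimpleGraph.ConnectedComponent.mem_supp_iff]; exact hx
    have hay : y ∈ C.supp := by rw [SimpleGraph.ConnectedComponent.mem_supp_iff]; exact hy
    have hne : (⟨x, hax⟩ : C.supp) ≠ ⟨y, hay⟩ := fun q => hxy (congrArg Subtype.val q)
    have htop : (⊤ : SimpleGraph (Fin 4)).Adj (e ⟨x, hax⟩) (e ⟨y, hay⟩) := by
      rw [top_adj]
      exact fun q => hne (e.toEquiv.injective q)
    have := e.map_rel_iff.mp htop
    simpa using this
  have hfib4 : ∀ C : G.ConnectedComponent, (fib C).card = 4 := by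
    intro C
    haveI : Fintype C.supp := Fintype.ofFinite _
    obtain ⟨e⟩ := h4 C
    have h1 : Fintype.card C.supp = 4 := by
      rw [Fintype.card_congr e.toEquiv, Fintype.card_fin]
    have h2 : fib C = C.supp.toFinset := by
      ext x
      simp [hfib, Set.mem_toFinset, SimpleGraph.ConnectedComponent.mem_supp_iff]
    rw [h2, Set.toFinset_card, h1]
  have himg2 : ∀ C : G.ConnectedComponent, ((fib C).image c).card ≤ 2 := by
    intro C
    by_contra hgt
    push_neg at hgt
    obtain ⟨k1, k2, k3, hk1, hk2, hk3, h12, h13, h23⟩ :=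
      Finset.two_lt_card_iff.mp (show 2 < ((fib C).image c).card by omega)
    obtain ⟨x1, hx1, hcx1⟩ := Finset.mem_image.mp hk1
    obtain ⟨x2, hx2, hcx2⟩ := Finset.mem_image.mp hk2
    obtain ⟨x3, hx3, hcx3⟩ := Finset.mem_image.mp hk3
    simp only [hfib, Finset.mem_filter, Finset.mem_univ, true_and] at hx1 hx2 hx3
    have hne12 : x1 ≠ x2 := fun q => h12 (by rw [← hcx1, ← hcx2, q])
    have hne13 : x1 ≠ x3 := fun q => h13 (by rw [← hcx1, ← hcx3, q])
    have hne23 : x2 ≠ x3 := fun q => h23 (by rw [← hcx2, ← hcx3, q])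
    have hcard := hc x1 x2 x3 (hadjall C x1 x2 hx1 hx2 hne12)
      (hadjall C x1 x3 hx1 hx3 hne13) (hadjall C x2 x3 hx2 hx3 hne23)
    rw [hcx1, hcx2, hcx3] at hcard
    have : ({k1, k2, k3} : Finset ℕ).card = 3 := by
      rw [Finset.card_insert_of_notMem (by simp [h12, h13]),
        Finset.card_insert_of_notMem (by simp [h23]), Finset.card_singleton]
    omega
  have hcover : Finset.univ.image c ⊆ Finset.univ.biUnion (fun C => (fib C).image c) := by
    intro k hk
    obtain ⟨x, -, rfl⟩ := Finset.mem_image.mp hk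
    exact Finset.mem_biUnion.mpr ⟨G.connectedComponentMk x, Finset.mem_univ _,
      Finset.mem_image_of_mem _ (Finset.mem_filter.mpr ⟨Finset.mem_univ _, rfl⟩)⟩
  have hcu : colorsUsed c ≤ ∑ C : G.ConnectedComponent, 2 := by
    calc colorsUsed c ≤ (Finset.univ.biUnion (fun C => (fib C).image c)).card :=
          Finset.card_le_card hcover
      _ ≤ ∑ C : G.ConnectedComponent, ((fib C).image c).card := Finset.card_biUnion_le
      _ ≤ ∑ C : G.ConnectedComponent, 2 := Finset.sum_le_sum (fun C _ => himg2 C)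
  have hn : Fintype.card V = ∑ C : G.ConnectedComponent, 4 := by
    rw [hsum]
    exact Finset.sum_congr rfl (fun C _ => hfib4 C)
  rw [Finset.sum_const, smul_eq_mul] at hcu hn
  omega

end Color

end WormAux

/-- If `G` has order `n` and maximum degree at most 3, then `W⁺(G) ≥ n/2`, with
equality if and only if every connected component of `G` is isomorphic to `K₄`
(i.e. `G` is a disjoint union of `n/4` copies of `K₄`). -/
theorem wormUpper_ge_half {V : Type*} [Fintype V] [DecidableEq V]
    (G : SimpleGraph V) [DecidableRel G.Adj] (hdeg : ∀ v : V, G.degree v ≤ 3) :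
    ∀ w : ℕ, IsGreatest (wormFeasible G) w →
      Fintype.card V ≤ 2 * w ∧
      (Fintype.card V = 2 * w ↔
        ∀ C : G.ConnectedComponent,
          Nonempty (G.induce C.supp ≃g (⊤ : SimpleGraph (Fin 4)))) := by
  intro w hw
  letI : LinearOrder V := LinearOrder.lift' (⇑(Fintype.equivFin V)) (Equiv.injective _)
  have hworm : IsWormColoring G (WormAux.wcol G) := WormAux.wcol_worm hdeg
  have hfeas : colorsUsed (WormAux.wcol G) ∈ wormFeasible G := ⟨_, hworm, rfl⟩
  have hle : colorsUsed (WormAux.wcol G) ≤ w := hw.2 hfeas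
  have hlow : Fintype.card V ≤ 2 * colorsUsed (WormAux.wcol G) := WormAux.wcol_lower hdeg
  refine ⟨by omega, ?_, ?_⟩
  · intro heq C
    have hK : ∀ v, WormAux.inK4 G v := by
      by_contra hcon
      push_neg at hcon
      obtain ⟨v0, hv0⟩ := hcon
      have hstrict : Fintype.card V < 2 * colorsUsed (WormAux.wcol G) :=
        WormAux.wcol_lower_strict hdeg (WormAux.exists_fixed hdeg hv0)
      omega
    exact WormAux.all_k4_components hdeg hK C
  · intro h4
    obtain ⟨c, hc, hcol⟩ := hw.1
    have hupper : 2 * colorsUsed c ≤ Fintype.card V := WormAux.k4_upper hdeg h4 hc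
    omega
end

section
/- If G is a finite graph of order n and maximum degree at most 3 such that no connected component of G is isomorphic to K₄, then W^+(G) ≥ 2n/3, with equality if and only if G contains a spanning collection of n/3 pairwise vertex-disjoint triangles (i.e., G contains (n/3)·K₃ as a subgraph). -/
open SimpleGraph

set_option maxHeartbeats 1000000

namespace WormAux

open Finset

variable {V : Type*} [Fintype V] [DecidableEq V] {G : SimpleGraph V}

/-! ### Degree and K₄ helper lemmas -/

lemma four_neighbors [DecidableRel G.Adj] (hdeg : ∀ v : V, G.degree v ≤ 3)
    {u a b c d : V} (hab : a ≠ b) (hac : a ≠ c) (had : a ≠ d) (hbc : b ≠ c)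
    (hbd : b ≠ d) (hcd : c ≠ d)
    (ha : G.Adj u a) (hb : G.Adj u b) (hc : G.Adj u c) (hd : G.Adj u d) : False := by
  have hsub : ({a, b, c, d} : Finset V) ⊆ G.neighborFinset u := by
    intro x hx
    simp only [mem_insert, mem_singleton] at hx
    rw [mem_neighborFinset]
    rcases hx with rfl | rfl | rfl | rfl <;> assumption
  have hcard : ({a, b, c, d} : Finset V).card = 4 := by
    rw [card_insert_of_notMem (by simp [hab, hac, had]),
        card_insert_of_notMem (by simp [hbc, hbd]),
        card_insert_of_notMem (by simp [hcd]), card_singleton]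
  have h4 : 4 ≤ G.degree u := by
    rw [← G.card_neighborFinset_eq_degree, ← hcard]
    exact card_le_card hsub
  have := hdeg u
  omega

lemma noK4 [DecidableRel G.Adj] (hdeg : ∀ v : V, G.degree v ≤ 3)
    (hK4 : ∀ C : G.ConnectedComponent,
      ¬ Nonempty (G.induce C.supp ≃g (⊤ : SimpleGraph (Fin 4))))
    {a b c d : V} (hab : G.Adj a b) (hac : G.Adj a c) (had : G.Adj a d)
    (hbc : G.Adj b c) (hbd : G.Adj b d) (hcd : G.Adj c d) : False := by
  set S : Finset V := {a, b, c, d} with hS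
  have hmemS : ∀ x, x ∈ S ↔ x = a ∨ x = b ∨ x = c ∨ x = d := by
    intro x; simp [hS]
  have haS : a ∈ S := by rw [hmemS]; tauto
  have hadjS : ∀ x ∈ S, ∀ y ∈ S, x ≠ y → G.Adj x y := by
    intro x hx y hy hxy
    rw [hmemS] at hx hy
    rcases hx with rfl | rfl | rfl | rfl <;> rcases hy with rfl | rfl | rfl | rfl <;>
      first
        | exact absurd rfl hxy
        | assumption
        | exact hab.symm
        | exact hac.symm
        | exact had.symm
        | exact hbc.symm
        | exact hbd.symm
        | exact hcd.symm
  have hcardS : S.card = 4 := by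
    rw [hS, card_insert_of_notMem (by simp [hab.ne, hac.ne, had.ne]),
        card_insert_of_notMem (by simp [hbc.ne, hbd.ne]),
        card_insert_of_notMem (by simp [hcd.ne]), card_singleton]
  have hclosed : ∀ y ∈ S, ∀ z, G.Adj y z → z ∈ S := by
    intro y hy z hz
    have hsub : S.erase y ⊆ G.neighborFinset y := by
      intro x hx
      rw [mem_neighborFinset]
      exact hadjS y hy x (mem_of_mem_erase hx) (ne_of_mem_erase hx).symm
    have hce : (S.erase y).card = 3 := by rw [card_erase_of_mem hy, hcardS]
    have heq : S.erase y = G.neighborFinset y := by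
      apply eq_of_subset_of_card_le hsub
      rw [G.card_neighborFinset_eq_degree, hce]
      exact hdeg y
    have : z ∈ S.erase y := by rw [heq, mem_neighborFinset]; exact hz
    exact mem_of_mem_erase this
  have hwalk : ∀ ⦃u x : V⦄, G.Walk u x → u ∈ S → x ∈ S := by
    intro u x p
    induction p with
    | nil => exact fun h => h
    | cons h _ ih => exact fun hu => ih (hclosed _ hu _ h)
  set C := G.connectedComponentMk a with hC
  have hsupp : C.supp = (↑S : Set V) := by
    ext x
    rw [SimpleGraph.ConnectedComponent.mem_supp_iff]
    constructor
    · intro hx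
      have hr : G.Reachable a x := (SimpleGraph.ConnectedComponent.eq.mp hx).symm
      obtain ⟨p⟩ := hr
      exact hwalk p haS
    · intro hx
      have hx' : x ∈ S := hx
      rw [hC, SimpleGraph.ConnectedComponent.eq]
      rcases (hmemS x).mp hx' with rfl | rfl | rfl | rfl
      · exact Reachable.refl _
      · exact hab.symm.reachable
      · exact hac.symm.reachable
      · exact had.symm.reachable
  have e : ↥C.supp ≃ Fin 4 :=
    ((Equiv.setCongr hsupp).trans
      (Equiv.subtypeEquivRight (fun x => Finset.mem_coe))).trans
      (Fintype.equivFinOfCardEq (by rw [Fintype.card_coe]; exact hcardS))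
  refine hK4 C ⟨⟨e, ?_⟩⟩
  intro x y
  simp only [top_adj, comap_adj, Function.Embedding.coe_subtype]
  constructor
  · intro hne2
    have hxy : (x : V) ≠ (y : V) := by
      intro h
      exact hne2 (congrArg e (Subtype.ext h))
    have hx : (x : V) ∈ S := (Set.ext_iff.mp hsupp (x : V)).mp x.2
    have hy : (y : V) ∈ S := (Set.ext_iff.mp hsupp (y : V)).mp y.2
    exact hadjS _ hx _ hy hxy
  · intro hadj h
    exact hadj.ne (congrArg Subtype.val (e.injective h))


/-! ### Triangle structure -/

lemma tri_structure {T : Finset V} (hT : G.IsNClique 3 T) {u : V} (hu : u ∈ T) :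
    ∃ a b : V, a ≠ b ∧ a ≠ u ∧ b ≠ u ∧ a ∈ T ∧ b ∈ T ∧ T = {u, a, b} ∧
      G.Adj u a ∧ G.Adj u b ∧ G.Adj a b := by
  have hce : (T.erase u).card = 2 := by rw [card_erase_of_mem hu, hT.2]
  obtain ⟨a, b, hab, hE⟩ := card_eq_two.mp hce
  have ha : a ∈ T.erase u := by rw [hE]; simp
  have hb : b ∈ T.erase u := by rw [hE]; simp
  have hau : a ≠ u := ne_of_mem_erase ha
  have hbu : b ≠ u := ne_of_mem_erase hb
  have haT : a ∈ T := mem_of_mem_erase ha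
  have hbT : b ∈ T := mem_of_mem_erase hb
  refine ⟨a, b, hab, hau, hbu, haT, hbT, ?_, ?_, ?_, ?_⟩
  · rw [← insert_erase hu, hE]
  · exact hT.1 hu haT hau.symm
  · exact hT.1 hu hbT hbu.symm
  · exact hT.1 haT hbT hab

lemma inter_card_ne_one [DecidableRel G.Adj] (hdeg : ∀ v : V, G.degree v ≤ 3)
    {T T' : Finset V} (hT : G.IsNClique 3 T) (hT' : G.IsNClique 3 T')
    (h : (T ∩ T').card = 1) : False := by
  obtain ⟨u, hu⟩ := card_eq_one.mp h
  have huT : u ∈ T := by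
    have : u ∈ T ∩ T' := by rw [hu]; simp
    exact mem_of_mem_inter_left this
  have huT' : u ∈ T' := by
    have : u ∈ T ∩ T' := by rw [hu]; simp
    exact mem_of_mem_inter_right this
  obtain ⟨a, b, hab, hau, hbu, haT, hbT, _, hua, hub, _⟩ := tri_structure hT huT
  obtain ⟨c, d, hcd, hcu, hdu, hcT', hdT', _, huc, hud, _⟩ := tri_structure hT' huT'
  have haT' : a ∉ T' := by
    intro haT'
    have : a ∈ T ∩ T' := mem_inter.mpr ⟨haT, haT'⟩
    rw [hu] at this
    exact hau (mem_singleton.mp this)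
  have hbT' : b ∉ T' := by
    intro hbT'
    have : b ∈ T ∩ T' := mem_inter.mpr ⟨hbT, hbT'⟩
    rw [hu] at this
    exact hbu (mem_singleton.mp this)
  exact four_neighbors hdeg hab (fun h => haT' (h ▸ hcT')) (fun h => haT' (h ▸ hdT'))
    (fun h => hbT' (h ▸ hcT')) (fun h => hbT' (h ▸ hdT')) hcd hua hub huc hud

/-- Every vertex lies in at most one "pair" block: two triangles sharing a vertex share an
edge, and the shared-edge relation is functional. -/
lemma partner_unique [DecidableRel G.Adj] (hdeg : ∀ v : V, G.degree v ≤ 3)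
    (hK4 : ∀ C : G.ConnectedComponent,
      ¬ Nonempty (G.induce C.supp ≃g (⊤ : SimpleGraph (Fin 4))))
    {T T1 T2 : Finset V} (hT : G.IsNClique 3 T) (hT1 : G.IsNClique 3 T1)
    (hT2 : G.IsNClique 3 T2) (hne1 : T1 ≠ T) (hc1 : (T ∩ T1).card = 2)
    (hne2 : T2 ≠ T) (hc2 : (T ∩ T2).card = 2) : T1 = T2 := by
  by_contra hne
  -- the external vertices
  have hx1 : (T1 \ T).card = 1 := by
    have h := card_inter_add_card_sdiff T1 T
    rw [inter_comm] at h
    have := hT1.2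
    omega
  have hy1 : (T2 \ T).card = 1 := by
    have h := card_inter_add_card_sdiff T2 T
    rw [inter_comm] at h
    have := hT2.2
    omega
  obtain ⟨x, hx⟩ := card_eq_one.mp hx1
  obtain ⟨y, hy⟩ := card_eq_one.mp hy1
  have hxT1 : x ∈ T1 := by
    have : x ∈ T1 \ T := by rw [hx]; simp
    exact (mem_sdiff.mp this).1
  have hxT : x ∉ T := by
    have : x ∈ T1 \ T := by rw [hx]; simp
    exact (mem_sdiff.mp this).2
  have hyT2 : y ∈ T2 := by
    have : y ∈ T2 \ T := by rw [hy]; simp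
    exact (mem_sdiff.mp this).1
  have hyT : y ∉ T := by
    have : y ∈ T2 \ T := by rw [hy]; simp
    exact (mem_sdiff.mp this).2
  have hT1eq : T1 = insert x (T ∩ T1) := by
    apply (eq_of_subset_of_card_le _ _).symm
    · intro z hz
      rcases mem_insert.mp hz with rfl | hz
      · exact hxT1
      · exact mem_of_mem_inter_right hz
    · rw [card_insert_of_notMem (fun h => hxT (mem_of_mem_inter_left h)), hc1, hT1.2]
  have hT2eq : T2 = insert y (T ∩ T2) := by
    apply (eq_of_subset_of_card_le _ _).symm
    · intro z hz
      rcases mem_insert.mp hz with rfl | hz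
      · exact hyT2
      · exact mem_of_mem_inter_right hz
    · rw [card_insert_of_notMem (fun h => hyT (mem_of_mem_inter_left h)), hc2, hT2.2]
  by_cases hee : T ∩ T1 = T ∩ T2
  · -- same shared edge
    by_cases hxy : x = y
    · exact hne (by rw [hT1eq, hT2eq, hee, hxy])
    · obtain ⟨a, b, hab, heab⟩ := card_eq_two.mp hc1
      have haT : a ∈ T := by
        have : a ∈ T ∩ T1 := by rw [heab]; simp
        exact mem_of_mem_inter_left this
      have hbT : b ∈ T := by
        have : b ∈ T ∩ T1 := by rw [heab]; simp
        exact mem_of_mem_inter_left this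
      have haT1 : a ∈ T1 := by
        have : a ∈ T ∩ T1 := by rw [heab]; simp
        exact mem_of_mem_inter_right this
      have haT2 : a ∈ T2 := by
        have : a ∈ T ∩ T2 := by rw [← hee, heab]; simp
        exact mem_of_mem_inter_right this
      -- the third vertex of T
      have htc : (T \ (T ∩ T1)).card = 1 := by
        have h := card_sdiff_of_subset (inter_subset_left : T ∩ T1 ⊆ T)
        rw [hc1, hT.2] at h
        omega
      obtain ⟨t, ht⟩ := card_eq_one.mp htc
      have htT : t ∈ T := by
        have : t ∈ T \ (T ∩ T1) := by rw [ht]; simp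
        exact (mem_sdiff.mp this).1
      have hte : t ∉ T ∩ T1 := by
        have : t ∈ T \ (T ∩ T1) := by rw [ht]; simp
        exact (mem_sdiff.mp this).2
      have hat : a ≠ t := by
        intro h
        apply hte
        rw [← h, heab]; simp
      have hbt : b ≠ t := by
        intro h
        apply hte
        rw [← h, heab]; simp
      refine four_neighbors hdeg (a := b) (b := t) (c := x) (d := y) (u := a)
        hbt (fun h => hxT (h ▸ hbT)) (fun h => hyT (h ▸ hbT))
        (fun h => hxT (h ▸ htT)) (fun h => hyT (h ▸ htT)) hxy
        ?_ ?_ ?_ ?_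
      · exact hT.1 haT hbT hab
      · exact hT.1 haT htT hat
      · exact hT1.1 haT1 hxT1 (fun h => hxT (h ▸ haT))
      · exact hT2.1 haT2 hyT2 (fun h => hyT (h ▸ haT))
  · -- different shared edges: they meet in exactly one vertex
    have hsub1 : T ∩ T1 ⊆ T := inter_subset_left
    have hsub2 : T ∩ T2 ⊆ T := inter_subset_left
    have hiu : ((T ∩ T1) ∩ (T ∩ T2)).card = 1 := by
      have hun : ((T ∩ T1) ∪ (T ∩ T2)).card ≤ 3 := by
        rw [← hT.2]
        exact card_le_card (union_subset hsub1 hsub2)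
      have hca := card_union_add_card_inter (T ∩ T1) (T ∩ T2)
      have hle : ((T ∩ T1) ∩ (T ∩ T2)).card ≤ 2 := by
        rw [← hc1]
        exact card_le_card inter_subset_left
      have hne2' : ((T ∩ T1) ∩ (T ∩ T2)).card ≠ 2 := by
        intro h2
        apply hee
        have e1 : (T ∩ T1) ∩ (T ∩ T2) = T ∩ T1 :=
          eq_of_subset_of_card_le inter_subset_left (by omega)
        have e2 : (T ∩ T1) ∩ (T ∩ T2) = T ∩ T2 :=
          eq_of_subset_of_card_le inter_subset_right (by omega)
        rw [← e1, e2]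
      omega
    obtain ⟨u, hu⟩ := card_eq_one.mp hiu
    have hue1 : u ∈ T ∩ T1 := by
      have : u ∈ (T ∩ T1) ∩ (T ∩ T2) := by rw [hu]; simp
      exact mem_of_mem_inter_left this
    have hue2 : u ∈ T ∩ T2 := by
      have : u ∈ (T ∩ T1) ∩ (T ∩ T2) := by rw [hu]; simp
      exact mem_of_mem_inter_right this
    have huT : u ∈ T := mem_of_mem_inter_left hue1
    have huT1 : u ∈ T1 := mem_of_mem_inter_right hue1
    have huT2 : u ∈ T2 := mem_of_mem_inter_right hue2
    -- v, w : the other endpoints of the two shared edges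
    have hv1 : ((T ∩ T1).erase u).card = 1 := by rw [card_erase_of_mem hue1, hc1]
    have hw1 : ((T ∩ T2).erase u).card = 1 := by rw [card_erase_of_mem hue2, hc2]
    obtain ⟨v, hv⟩ := card_eq_one.mp hv1
    obtain ⟨w, hw⟩ := card_eq_one.mp hw1
    have hve : v ∈ (T ∩ T1).erase u := by rw [hv]; simp
    have hwe : w ∈ (T ∩ T2).erase u := by rw [hw]; simp
    have hvu : v ≠ u := ne_of_mem_erase hve
    have hwu : w ≠ u := ne_of_mem_erase hwe
    have hve1 : v ∈ T ∩ T1 := mem_of_mem_erase hve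
    have hwe2 : w ∈ T ∩ T2 := mem_of_mem_erase hwe
    have hvT : v ∈ T := mem_of_mem_inter_left hve1
    have hvT1 : v ∈ T1 := mem_of_mem_inter_right hve1
    have hwT : w ∈ T := mem_of_mem_inter_left hwe2
    have hwT2 : w ∈ T2 := mem_of_mem_inter_right hwe2
    have hvw : v ≠ w := by
      intro h
      have : v ∈ (T ∩ T1) ∩ (T ∩ T2) := mem_inter.mpr ⟨hve1, h ▸ hwe2⟩
      rw [hu] at this
      exact hvu (mem_singleton.mp this)
    have hux : u ≠ x := fun h => hxT (h ▸ huT)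
    have huy : u ≠ y := fun h => hyT (h ▸ huT)
    have huvA : G.Adj u v := hT.1 huT hvT hvu.symm
    have huwA : G.Adj u w := hT.1 huT hwT hwu.symm
    have hvwA : G.Adj v w := hT.1 hvT hwT hvw
    have huxA : G.Adj u x := hT1.1 huT1 hxT1 hux
    by_cases hxy : x = y
    · -- K₄ on u, v, w, x
      subst hxy
      have hvxA : G.Adj v x := hT1.1 hvT1 hxT1 (fun h => hxT (h ▸ hvT))
      have hwxA : G.Adj w x := hT2.1 hwT2 hyT2 (fun h => hxT (h ▸ hwT))
      exact noK4 hdeg hK4 huvA huwA huxA hvwA hvxA hwxA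
    · -- degree of u would be 4
      have huyA : G.Adj u y := hT2.1 huT2 hyT2 huy
      exact four_neighbors hdeg (u := u) (a := v) (b := w) (c := x) (d := y)
        hvw (fun h => hxT (h ▸ hvT)) (fun h => hyT (h ▸ hvT))
        (fun h => hxT (h ▸ hwT)) (fun h => hyT (h ▸ hwT)) hxy
        huvA huwA huxA huyA

/-! ### The pair of a triangle -/

/-- For each triangle `T`, a canonical 2-element subset (the shared edge if `T` is part of a
diamond, otherwise an arbitrary edge). -/
noncomputable def pairOf (G : SimpleGraph V) (T : Finset V) : Finset V :=
  open Classical in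
  if h : ∃ T', G.IsNClique 3 T' ∧ T' ≠ T ∧ (T ∩ T').card = 2 then T ∩ h.choose
  else if h3 : T.Nonempty then T.erase h3.choose else ∅

variable [DecidableRel G.Adj]

lemma pairOf_subset (T : Finset V) : pairOf G T ⊆ T := by
  unfold pairOf
  split
  · exact inter_subset_left
  · split
    · exact erase_subset _ _
    · exact empty_subset _

lemma pairOf_card {T : Finset V} (hT : G.IsNClique 3 T) : (pairOf G T).card = 2 := by
  unfold pairOf
  split
  · next h => exact h.choose_spec.2.2
  · have hne : T.Nonempty := by
      rw [← card_pos, hT.2]; norm_num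
    rw [dif_pos hne, card_erase_of_mem hne.choose_spec, hT.2]

lemma pairOf_eq_inter (hdeg : ∀ v : V, G.degree v ≤ 3)
    (hK4 : ∀ C : G.ConnectedComponent,
      ¬ Nonempty (G.induce C.supp ≃g (⊤ : SimpleGraph (Fin 4))))
    {T T' : Finset V} (hT : G.IsNClique 3 T) (hT' : G.IsNClique 3 T')
    (hne : T' ≠ T) (hc : (T ∩ T').card = 2) : pairOf G T = T ∩ T' := by
  have h : ∃ T'', G.IsNClique 3 T'' ∧ T'' ≠ T ∧ (T ∩ T'').card = 2 := ⟨T', hT', hne, hc⟩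
  rw [pairOf, dif_pos h]
  obtain ⟨hcl, hcne, hcc⟩ := h.choose_spec
  rw [partner_unique hdeg hK4 hT hcl hT' hcne hcc hne hc]

lemma inter_card_cases (hdeg : ∀ v : V, G.degree v ≤ 3)
    {T T' : Finset V} (hT : G.IsNClique 3 T) (hT' : G.IsNClique 3 T') (hne : T ≠ T') :
    (T ∩ T').card = 0 ∨ (T ∩ T').card = 2 := by
  have hle : (T ∩ T').card ≤ 3 := by
    rw [← hT.2]; exact card_le_card inter_subset_left
  have h1 : (T ∩ T').card ≠ 1 := fun h => inter_card_ne_one hdeg hT hT' h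
  have h3 : (T ∩ T').card ≠ 3 := by
    intro h3
    apply hne
    have e1 : T ∩ T' = T := eq_of_subset_of_card_le inter_subset_left (by rw [h3, hT.2])
    have e2 : T ∩ T' = T' := eq_of_subset_of_card_le inter_subset_right (by rw [h3, hT'.2])
    rw [← e1, e2]
  omega

lemma pairOf_eq_of_mem (hdeg : ∀ v : V, G.degree v ≤ 3)
    (hK4 : ∀ C : G.ConnectedComponent,
      ¬ Nonempty (G.induce C.supp ≃g (⊤ : SimpleGraph (Fin 4))))
    {T T' : Finset V} (hT : G.IsNClique 3 T) (hT' : G.IsNClique 3 T')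
    {v : V} (hv : v ∈ pairOf G T) (hv' : v ∈ pairOf G T') :
    pairOf G T = pairOf G T' := by
  by_cases hne : T = T'
  · rw [hne]
  · have hvi : v ∈ T ∩ T' := mem_inter.mpr ⟨pairOf_subset T hv, pairOf_subset T' hv'⟩
    rcases inter_card_cases hdeg hT hT' hne with h0 | h2
    · rw [card_eq_zero] at h0
      rw [h0] at hvi
      exact absurd hvi (notMem_empty v)
    · rw [pairOf_eq_inter hdeg hK4 hT hT' (Ne.symm hne) h2,
        pairOf_eq_inter hdeg hK4 hT' hT hne (by rwa [inter_comm]), inter_comm]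

lemma third_not_mem_pairOf (hdeg : ∀ v : V, G.degree v ≤ 3)
    (hK4 : ∀ C : G.ConnectedComponent,
      ¬ Nonempty (G.induce C.supp ≃g (⊤ : SimpleGraph (Fin 4))))
    {T : Finset V} (hT : G.IsNClique 3 T) {t : V} (ht : t ∈ T) (htp : t ∉ pairOf G T)
    {T' : Finset V} (hT' : G.IsNClique 3 T') : t ∉ pairOf G T' := by
  intro ht'
  by_cases hne : T = T'
  · exact htp (hne ▸ ht')
  · have hvi : t ∈ T ∩ T' := mem_inter.mpr ⟨ht, pairOf_subset T' ht'⟩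
    rcases inter_card_cases hdeg hT hT' hne with h0 | h2
    · rw [card_eq_zero] at h0
      rw [h0] at hvi
      exact absurd hvi (notMem_empty t)
    · apply htp
      rw [pairOf_eq_inter hdeg hK4 hT hT' (Ne.symm hne) h2]
      exact hvi

lemma tri_disjoint_of_pairOf_ne (hdeg : ∀ v : V, G.degree v ≤ 3)
    (hK4 : ∀ C : G.ConnectedComponent,
      ¬ Nonempty (G.induce C.supp ≃g (⊤ : SimpleGraph (Fin 4))))
    {T T' : Finset V} (hT : G.IsNClique 3 T) (hT' : G.IsNClique 3 T')
    (hne : pairOf G T ≠ pairOf G T') : Disjoint T T' := by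
  rw [Finset.disjoint_left]
  intro v hv hv'
  have hne2 : T ≠ T' := fun h => hne (by rw [h])
  rcases inter_card_cases hdeg hT hT' hne2 with h0 | h2
  · rw [card_eq_zero] at h0
    have : v ∈ T ∩ T' := mem_inter.mpr ⟨hv, hv'⟩
    rw [h0] at this
    exact absurd this (notMem_empty v)
  · apply hne
    rw [pairOf_eq_inter hdeg hK4 hT hT' (Ne.symm hne2) h2,
      pairOf_eq_inter hdeg hK4 hT' hT hne2 (by rwa [inter_comm]), inter_comm]

/-! ### The coloring -/

lemma nonempty_choose_congr {s t : Finset V} (h : s = t) (hs : s.Nonempty) (ht : t.Nonempty) :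
    hs.choose = ht.choose := by subst h; rfl

/-- An embedding of the vertex set into ℕ. -/
noncomputable def vEmb (V : Type*) [Fintype V] : V ↪ ℕ :=
  (Fintype.equivFin V).toEmbedding.trans Fin.valEmbedding

/-- The identification map: each pair is collapsed to a chosen representative. -/
noncomputable def wf (G : SimpleGraph V) [DecidableRel G.Adj] (v : V) : V :=
  open Classical in
  if h : ∃ T, G.IsNClique 3 T ∧ v ∈ pairOf G T then
    (⟨v, h.choose_spec.2⟩ : (pairOf G h.choose).Nonempty).choose
  else v

lemma wf_eq_of_mem (hdeg : ∀ v : V, G.degree v ≤ 3)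
    (hK4 : ∀ C : G.ConnectedComponent,
      ¬ Nonempty (G.induce C.supp ≃g (⊤ : SimpleGraph (Fin 4))))
    {T : Finset V} {v : V} (hT : G.IsNClique 3 T) (hv : v ∈ pairOf G T)
    (hne : (pairOf G T).Nonempty) : wf G v = hne.choose := by
  have h : ∃ T', G.IsNClique 3 T' ∧ v ∈ pairOf G T' := ⟨T, hT, hv⟩
  rw [wf, dif_pos h]
  exact nonempty_choose_congr
    (pairOf_eq_of_mem hdeg hK4 h.choose_spec.1 hT h.choose_spec.2 hv) _ _

lemma wf_id {v : V} (h : ∀ T, G.IsNClique 3 T → v ∉ pairOf G T) : wf G v = v := by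
  rw [wf, dif_neg]
  rintro ⟨T, hT, hv⟩
  exact h T hT hv

lemma wf_worm (hdeg : ∀ v : V, G.degree v ≤ 3)
    (hK4 : ∀ C : G.ConnectedComponent,
      ¬ Nonempty (G.induce C.supp ≃g (⊤ : SimpleGraph (Fin 4)))) :
    IsWormColoring G (fun v => vEmb V (wf G v)) := by
  intro u v w h1 h2 h3
  set T : Finset V := {u, v, w} with hTdef
  have hT : G.IsNClique 3 T := is3Clique_triple_iff.mpr ⟨h1, h2, h3⟩
  have h0 : ({vEmb V (wf G u), vEmb V (wf G v), vEmb V (wf G w)} : Finset ℕ)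
      = T.image (fun x => vEmb V (wf G x)) := by
    rw [hTdef, image_insert, image_insert, image_singleton]
  show ({vEmb V (wf G u), vEmb V (wf G v), vEmb V (wf G w)} : Finset ℕ).card = 2
  rw [h0, show T.image (fun x => vEmb V (wf G x)) = (T.image (wf G)).image (vEmb V) from
    (image_image).symm, card_image_of_injective _ (vEmb V).injective]
  have hpc : (pairOf G T).card = 2 := pairOf_card hT
  have hps : pairOf G T ⊆ T := pairOf_subset T
  have htc : (T \ pairOf G T).card = 1 := by rw [card_sdiff_of_subset hps, hT.2, hpc]
  obtain ⟨t, ht⟩ := card_eq_one.mp htc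
  have htT : t ∈ T ∧ t ∉ pairOf G T := by
    have : t ∈ T \ pairOf G T := by rw [ht]; simp
    exact mem_sdiff.mp this
  have hwt : wf G t = t :=
    wf_id (fun T' hT' => third_not_mem_pairOf hdeg hK4 hT htT.1 htT.2 hT')
  have hpn : (pairOf G T).Nonempty := by rw [← card_pos, hpc]; norm_num
  have hrep := hpn.choose_spec
  have hwp : ∀ x ∈ pairOf G T, wf G x = hpn.choose :=
    fun x hx => wf_eq_of_mem hdeg hK4 hT hx hpn
  have himg : T.image (wf G) = {hpn.choose, t} := by
    apply subset_antisymm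
    · intro z hz
      obtain ⟨x, hx, rfl⟩ := mem_image.mp hz
      by_cases hxp : x ∈ pairOf G T
      · rw [hwp x hxp]; simp
      · have hxt : x = t := by
          have : x ∈ T \ pairOf G T := mem_sdiff.mpr ⟨hx, hxp⟩
          rw [ht] at this
          exact mem_singleton.mp this
        subst hxt
        rw [hwt]
        simp
    · intro z hz
      rcases mem_insert.mp hz with rfl | hz
      · exact mem_image.mpr ⟨hpn.choose, hps hrep, hwp _ hrep⟩
      · rw [mem_singleton] at hz
        exact mem_image.mpr ⟨t, htT.1, hwt.trans hz.symm⟩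
  rw [himg]
  exact card_pair (fun h : hpn.choose = t => htT.2 (h ▸ hrep))

/-! ### Counting -/

/-- The set of pairs (one per triangle block). -/
noncomputable def pairs (G : SimpleGraph V) [DecidableRel G.Adj] : Finset (Finset V) :=
  (G.cliqueFinset 3).image (pairOf G)

lemma mem_pairs {p : Finset V} : p ∈ pairs G ↔ ∃ T, G.IsNClique 3 T ∧ pairOf G T = p := by
  simp [pairs, mem_image, SimpleGraph.mem_cliqueFinset_iff]

lemma pairs_card_two {p : Finset V} (hp : p ∈ pairs G) : p.card = 2 := by
  obtain ⟨T, hT, rfl⟩ := mem_pairs.mp hp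
  exact pairOf_card hT

lemma pairs_disjoint (hdeg : ∀ v : V, G.degree v ≤ 3)
    (hK4 : ∀ C : G.ConnectedComponent,
      ¬ Nonempty (G.induce C.supp ≃g (⊤ : SimpleGraph (Fin 4))))
    {p q : Finset V} (hp : p ∈ pairs G) (hq : q ∈ pairs G) (hne : p ≠ q) :
    Disjoint p q := by
  obtain ⟨T, hT, rfl⟩ := mem_pairs.mp hp
  obtain ⟨T', hT', rfl⟩ := mem_pairs.mp hq
  rw [Finset.disjoint_left]
  intro v hv hv'
  exact hne (pairOf_eq_of_mem hdeg hK4 hT hT' hv hv')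

/-- Drop the chosen representative from a pair. -/
noncomputable def dmin (p : Finset V) : Finset V :=
  open Classical in
  if h : p.Nonempty then p.erase h.choose else ∅

lemma dmin_subset (p : Finset V) : dmin p ⊆ p := by
  rw [dmin]
  split
  · exact erase_subset _ _
  · exact empty_subset _

lemma dmin_card {p : Finset V} (h2 : p.card = 2) : (dmin p).card = 1 := by
  have hne : p.Nonempty := by rw [← card_pos, h2]; norm_num
  rw [dmin, dif_pos hne, card_erase_of_mem hne.choose_spec, h2]

lemma image_wf (hdeg : ∀ v : V, G.degree v ≤ 3)
    (hK4 : ∀ C : G.ConnectedComponent,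
      ¬ Nonempty (G.induce C.supp ≃g (⊤ : SimpleGraph (Fin 4)))) :
    univ.image (wf G) = univ \ (pairs G).biUnion dmin := by
  apply subset_antisymm
  · intro z hz
    obtain ⟨v, _, rfl⟩ := mem_image.mp hz
    rw [mem_sdiff]
    refine ⟨mem_univ _, ?_⟩
    intro hzM
    obtain ⟨q, hq, hzq⟩ := mem_biUnion.mp hzM
    obtain ⟨T', hT', rfl⟩ := mem_pairs.mp hq
    have hq_ne : (pairOf G T').Nonempty := by
      rw [← card_pos, pairOf_card hT']; norm_num
    rw [dmin, dif_pos hq_ne] at hzq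
    have hzq_mem : wf G v ∈ pairOf G T' := mem_of_mem_erase hzq
    have hzq_ne : wf G v ≠ hq_ne.choose := ne_of_mem_erase hzq
    by_cases h : ∃ T, G.IsNClique 3 T ∧ v ∈ pairOf G T
    · obtain ⟨T, hT, hv⟩ := h
      have hpn : (pairOf G T).Nonempty := ⟨v, hv⟩
      have hwv : wf G v = hpn.choose := wf_eq_of_mem hdeg hK4 hT hv hpn
      have hmemT : wf G v ∈ pairOf G T := hwv ▸ hpn.choose_spec
      have heq := pairOf_eq_of_mem hdeg hK4 hT hT' hmemT hzq_mem
      exact hzq_ne (hwv.trans (nonempty_choose_congr heq hpn hq_ne))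
    · have hwv : wf G v = v := wf_id (fun T hT hv => h ⟨T, hT, hv⟩)
      rw [hwv] at hzq_mem
      exact h ⟨T', hT', hzq_mem⟩
  · intro z hz
    obtain ⟨_, hzM⟩ := mem_sdiff.mp hz
    by_cases h : ∃ T, G.IsNClique 3 T ∧ z ∈ pairOf G T
    · obtain ⟨T, hT, hzp⟩ := h
      have hq : pairOf G T ∈ pairs G := mem_pairs.mpr ⟨T, hT, rfl⟩
      have hpn : (pairOf G T).Nonempty := ⟨z, hzp⟩
      have hznd : z ∉ dmin (pairOf G T) := fun hd => hzM (mem_biUnion.mpr ⟨_, hq, hd⟩)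
      rw [dmin, dif_pos hpn] at hznd
      have hzc : z = hpn.choose := by
        by_contra hne
        exact hznd (mem_erase.mpr ⟨hne, hzp⟩)
      have : wf G z = z := by rw [wf_eq_of_mem hdeg hK4 hT hzp hpn, ← hzc]
      exact mem_image.mpr ⟨z, mem_univ z, this⟩
    · exact mem_image.mpr ⟨z, mem_univ z, wf_id (fun T hT hz2 => h ⟨T, hT, hz2⟩)⟩

lemma card_M (hdeg : ∀ v : V, G.degree v ≤ 3)
    (hK4 : ∀ C : G.ConnectedComponent,
      ¬ Nonempty (G.induce C.supp ≃g (⊤ : SimpleGraph (Fin 4)))) :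
    ((pairs G).biUnion dmin).card = (pairs G).card := by
  rw [card_biUnion (fun p hp q hq hne =>
    (pairs_disjoint hdeg hK4 hp hq hne).mono (dmin_subset p) (dmin_subset q))]
  calc ∑ p ∈ pairs G, (dmin p).card = ∑ _p ∈ pairs G, 1 :=
        Finset.sum_congr rfl (fun p hp => dmin_card (pairs_card_two hp))
    _ = (pairs G).card := by rw [Finset.sum_const, smul_eq_mul, mul_one]

lemma colorsUsed_wf (hdeg : ∀ v : V, G.degree v ≤ 3)
    (hK4 : ∀ C : G.ConnectedComponent,
      ¬ Nonempty (G.induce C.supp ≃g (⊤ : SimpleGraph (Fin 4)))) :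
    colorsUsed (fun v => vEmb V (wf G v)) = Fintype.card V - (pairs G).card := by
  unfold colorsUsed
  rw [show univ.image (fun v => vEmb V (wf G v)) = (univ.image (wf G)).image (vEmb V) from
    (image_image).symm, card_image_of_injective _ (vEmb V).injective, image_wf hdeg hK4,
    card_sdiff_of_subset (subset_univ _), card_univ, card_M hdeg hK4]

/-- A canonical triangle for each pair. -/
noncomputable def tOf (G : SimpleGraph V) [DecidableRel G.Adj] (p : Finset V) : Finset V :=
  open Classical in
  if h : ∃ T, G.IsNClique 3 T ∧ pairOf G T = p then h.choose else ∅

lemma tOf_spec {p : Finset V} (hp : p ∈ pairs G) :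
    G.IsNClique 3 (tOf G p) ∧ pairOf G (tOf G p) = p := by
  rw [mem_pairs] at hp
  rw [tOf, dif_pos hp]
  exact hp.choose_spec

lemma tOf_disjoint (hdeg : ∀ v : V, G.degree v ≤ 3)
    (hK4 : ∀ C : G.ConnectedComponent,
      ¬ Nonempty (G.induce C.supp ≃g (⊤ : SimpleGraph (Fin 4))))
    {p q : Finset V} (hp : p ∈ pairs G) (hq : q ∈ pairs G) (hne : p ≠ q) :
    Disjoint (tOf G p) (tOf G q) := by
  apply tri_disjoint_of_pairOf_ne hdeg hK4 (tOf_spec hp).1 (tOf_spec hq).1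
  rw [(tOf_spec hp).2, (tOf_spec hq).2]
  exact hne

lemma card_biUnion_tOf (hdeg : ∀ v : V, G.degree v ≤ 3)
    (hK4 : ∀ C : G.ConnectedComponent,
      ¬ Nonempty (G.induce C.supp ≃g (⊤ : SimpleGraph (Fin 4)))) :
    ((pairs G).biUnion (tOf G)).card = 3 * (pairs G).card := by
  rw [card_biUnion (fun p hp q hq hne => tOf_disjoint hdeg hK4 hp hq hne)]
  calc ∑ p ∈ pairs G, (tOf G p).card = ∑ _p ∈ pairs G, 3 :=
        Finset.sum_congr rfl (fun p hp => (tOf_spec hp).1.2)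
    _ = 3 * (pairs G).card := by rw [Finset.sum_const, smul_eq_mul, mul_comm]

lemma three_mul_pairs_le (hdeg : ∀ v : V, G.degree v ≤ 3)
    (hK4 : ∀ C : G.ConnectedComponent,
      ¬ Nonempty (G.induce C.supp ≃g (⊤ : SimpleGraph (Fin 4)))) :
    3 * (pairs G).card ≤ Fintype.card V := by
  rw [← card_biUnion_tOf hdeg hK4, ← card_univ]
  exact card_le_card (subset_univ _)

/-! ### Upper bound in the presence of a triangle partition -/

lemma worm_le_of_partition {c : V → ℕ} (hc : IsWormColoring G c)
    (P : Finpartition (univ : Finset V))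
    (hP : ∀ t ∈ P.parts, t.card = 3 ∧ ∀ u ∈ t, ∀ v ∈ t, u ≠ v → G.Adj u v) :
    3 * colorsUsed c ≤ 2 * Fintype.card V := by
  have hparts2 : ∀ t ∈ P.parts, (t.image c).card = 2 := by
    intro t ht
    obtain ⟨h3, hadj⟩ := hP t ht
    obtain ⟨u, v, w, huv, huw, hvw, rfl⟩ := card_eq_three.mp h3
    have a1 : G.Adj u v := hadj u (by simp) v (by simp) huv
    have a2 : G.Adj u w := hadj u (by simp) w (by simp) huw
    have a3 : G.Adj v w := hadj v (by simp) w (by simp) hvw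
    rw [image_insert, image_insert, image_singleton]
    exact hc u v w a1 a2 a3
  have huniv : P.parts.biUnion id = (univ : Finset V) := by
    rw [← sup_eq_biUnion]
    exact P.sup_parts
  have himg : colorsUsed c ≤ 2 * P.parts.card := by
    have h1 : colorsUsed c = ((P.parts.biUnion id).image c).card := by
      rw [colorsUsed, huniv]
    have h2 : (P.parts.biUnion id).image c = P.parts.biUnion (fun t => (id t).image c) := by
      ext x
      simp only [mem_image, mem_biUnion, id]
      constructor
      · rintro ⟨y, ⟨t, ht, hy⟩, rfl⟩
        exact ⟨t, ht, y, hy, rfl⟩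
      · rintro ⟨t, ht, y, hy, rfl⟩
        exact ⟨y, ⟨t, ht, hy⟩, rfl⟩
    rw [h1, h2]
    calc (P.parts.biUnion (fun t => (id t).image c)).card
        ≤ ∑ t ∈ P.parts, ((id t).image c).card := card_biUnion_le
      _ = ∑ _t ∈ P.parts, 2 := Finset.sum_congr rfl (fun t ht => hparts2 t ht)
      _ = 2 * P.parts.card := by rw [Finset.sum_const, smul_eq_mul, mul_comm]
  have hn : Fintype.card V = 3 * P.parts.card := by
    have h1 : ∑ t ∈ P.parts, t.card = Fintype.card V := by
      rw [P.sum_card_parts, card_univ]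
    have h2 : ∑ t ∈ P.parts, t.card = ∑ _t ∈ P.parts, 3 :=
      Finset.sum_congr rfl (fun t ht => (hP t ht).1)
    rw [← h1, h2, Finset.sum_const, smul_eq_mul, mul_comm]
  omega

end WormAux

open WormAux Finset in
/-- If `G` has order `n`, maximum degree at most 3, and no connected component
isomorphic to `K₄`, then `W⁺(G) ≥ 2n/3`, with equality if and only if `G` contains
a spanning collection of `n/3` pairwise vertex-disjoint triangles
(i.e. `G` contains `(n/3)·K₃` as a subgraph). -/
theorem wormUpper_ge_two_thirds {V : Type*} [Fintype V] [DecidableEq V]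
    (G : SimpleGraph V) [DecidableRel G.Adj] (hdeg : ∀ v : V, G.degree v ≤ 3)
    (hK4 : ∀ C : G.ConnectedComponent,
      ¬ Nonempty (G.induce C.supp ≃g (⊤ : SimpleGraph (Fin 4)))) :
    ∀ w : ℕ, IsGreatest (wormFeasible G) w →
      2 * Fintype.card V ≤ 3 * w ∧
      (2 * Fintype.card V = 3 * w ↔
        ∃ P : Finpartition (Finset.univ : Finset V),
          ∀ t ∈ P.parts, t.card = 3 ∧ ∀ u ∈ t, ∀ v ∈ t, u ≠ v → G.Adj u v) := by
  intro w hw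
  have hfeas : (Fintype.card V - (pairs G).card) ∈ wormFeasible G :=
    ⟨fun v => vEmb V (wf G v), wf_worm hdeg hK4, colorsUsed_wf hdeg hK4⟩
  have hwge : Fintype.card V - (pairs G).card ≤ w := hw.2 hfeas
  have h3p := three_mul_pairs_le hdeg hK4
  have hmain : 2 * Fintype.card V ≤ 3 * w := by omega
  refine ⟨hmain, ?_, ?_⟩
  · intro heq
    have h3eq : 3 * (pairs G).card = Fintype.card V := by omega
    have hUcard : ((pairs G).biUnion (tOf G)).card = Fintype.card V := by
      rw [card_biUnion_tOf hdeg hK4, h3eq]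
    have hU : (pairs G).biUnion (tOf G) = univ := eq_univ_of_card _ hUcard
    refine ⟨⟨(pairs G).image (tOf G), ?_, ?_, ?_⟩, ?_⟩
    · rw [Finset.supIndep_iff_pairwiseDisjoint]
      intro t1 ht1 t2 ht2 hne
      rw [Finset.mem_coe, mem_image] at ht1 ht2
      obtain ⟨p, hp, rfl⟩ := ht1
      obtain ⟨q, hq, rfl⟩ := ht2
      exact tOf_disjoint hdeg hK4 hp hq (fun h => hne (by rw [h]))
    · rw [sup_image]
      have : (pairs G).sup (id ∘ tOf G) = (pairs G).biUnion (tOf G) := by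
        rw [sup_eq_biUnion]
        rfl
      rw [this, hU]
    · intro hbot
      rw [mem_image] at hbot
      obtain ⟨p, hp, hpe⟩ := hbot
      have h3 := (tOf_spec hp).1.2
      rw [hpe] at h3
      simp at h3
    · intro t ht
      rw [mem_image] at ht
      obtain ⟨p, hp, rfl⟩ := ht
      have hcl := (tOf_spec hp).1
      exact ⟨hcl.2, fun u hu v hv huv => hcl.1 hu hv huv⟩
  · rintro ⟨P, hP⟩
    obtain ⟨c, hc, hcw⟩ := hw.1
    have hle := worm_le_of_partition hc P hP
    omega
end

section
/- If G is a finite graph of order n and maximum degree at most 3 such that no connected component of G is isomorphic to K₄ and every triangle of G shares an edge with another triangle of G, then W^+(G) ≥ 3n/4, with equality if and only if G contains a spanning collection of n/4 pairwise vertex-disjoint copies of K₄ − e (i.e., G contains (n/4)·(K₄ − e) as a subgraph). -/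
open SimpleGraph

section
variable {V : Type*} [Fintype V] [DecidableEq V] (G : SimpleGraph V) [DecidableRel G.Adj]

lemma card3 {p q r : V} (hpq : p ≠ q) (hpr : p ≠ r) (hqr : q ≠ r) :
    ({p, q, r} : Finset V).card = 3 := by
  rw [Finset.card_insert_of_notMem (by simp [hpq, hpr]),
    Finset.card_insert_of_notMem (by simp [hqr]), Finset.card_singleton]

lemma nbrs_eq (hdeg : ∀ v, G.degree v ≤ 3) {x p q r : V}
    (hp : G.Adj x p) (hq : G.Adj x q) (hr : G.Adj x r)
    (hpq : p ≠ q) (hpr : p ≠ r) (hqr : q ≠ r) :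
    G.neighborFinset x = {p, q, r} := by
  have hsub : ({p, q, r} : Finset V) ⊆ G.neighborFinset x := by
    intro y hy
    simp only [Finset.mem_insert, Finset.mem_singleton] at hy
    rcases hy with rfl | rfl | rfl <;> simp [SimpleGraph.mem_neighborFinset, hp, hq, hr]
  have hcard : (G.neighborFinset x).card ≤ ({p, q, r} : Finset V).card := by
    rw [card3 hpq hpr hqr, G.card_neighborFinset_eq_degree]
    exact hdeg x
  exact (Finset.eq_of_subset_of_card_le hsub hcard).symm

lemma closed_walk {S : Set V} (hS : ∀ x ∈ S, ∀ y, G.Adj x y → y ∈ S) :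
    ∀ {x y : V}, G.Walk x y → x ∈ S → y ∈ S := by
  intro x y wlk
  induction wlk with
  | nil => exact id
  | cons h _ ih => intro hx; exact ih (hS _ hx _ h)

lemma noK4 (hdeg : ∀ v, G.degree v ≤ 3)
    (hK4 : ∀ C : G.ConnectedComponent,
      ¬ Nonempty (G.induce C.supp ≃g (⊤ : SimpleGraph (Fin 4))))
    {a b c d : V} (hab : G.Adj a b) (hac : G.Adj a c) (had : G.Adj a d)
    (hbc : G.Adj b c) (hbd : G.Adj b d) (hcd : G.Adj c d) : False := by
  have hmemS : ∀ x ∈ ({a, b, c, d} : Finset V), ∀ y, G.Adj x y → y ∈ ({a, b, c, d} : Finset V) := by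
    intro x hx y hxy
    have hx' : x = a ∨ x = b ∨ x = c ∨ x = d := by simpa using hx
    have key : ∀ p q r : V, G.neighborFinset x = {p, q, r} →
        p ∈ ({a, b, c, d} : Finset V) → q ∈ ({a, b, c, d} : Finset V) →
        r ∈ ({a, b, c, d} : Finset V) → y ∈ ({a, b, c, d} : Finset V) := by
      intro p q r h hp hq hr
      have : y ∈ G.neighborFinset x := by simpa using hxy
      rw [h] at this
      simp only [Finset.mem_insert, Finset.mem_singleton] at this
      rcases this with rfl | rfl | rfl <;> assumption
    have ha' : a ∈ ({a, b, c, d} : Finset V) := by simp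
    have hb' : b ∈ ({a, b, c, d} : Finset V) := by simp
    have hc' : c ∈ ({a, b, c, d} : Finset V) := by simp
    have hd' : d ∈ ({a, b, c, d} : Finset V) := by simp
    rcases hx' with rfl | rfl | rfl | rfl
    · exact key b c d (nbrs_eq G hdeg hab hac had hbc.ne hbd.ne hcd.ne) hb' hc' hd'
    · exact key a c d (nbrs_eq G hdeg hab.symm hbc hbd hac.ne had.ne hcd.ne) ha' hc' hd'
    · exact key a b d (nbrs_eq G hdeg hac.symm hbc.symm hcd hab.ne had.ne hbd.ne) ha' hb' hd'
    · exact key a b c (nbrs_eq G hdeg had.symm hbd.symm hcd.symm hab.ne hac.ne hbc.ne) ha' hb' hc'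
  set C := G.connectedComponentMk a with hC
  apply hK4 C
  have hsupp : C.supp = (({a, b, c, d} : Finset V) : Set V) := by
    ext y
    constructor
    · intro hy
      have heq : G.connectedComponentMk y = G.connectedComponentMk a :=
        (ConnectedComponent.mem_supp_iff _ _).mp hy
      have hr : G.Reachable a y := (SimpleGraph.ConnectedComponent.exact heq).symm
      obtain ⟨wlk⟩ := hr
      exact closed_walk G (S := ((({a, b, c, d} : Finset V)) : Set V))
        (fun x hx y h => by simpa using hmemS x (by simpa using hx) y h) wlk (by simp)
    · intro hy
      have hy' : y = a ∨ y = b ∨ y = c ∨ y = d := by simpa using hy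
      rw [ConnectedComponent.mem_supp_iff, hC]
      apply ConnectedComponent.sound
      rcases hy' with rfl | rfl | rfl | rfl
      · exact Reachable.refl _
      · exact hab.symm.reachable
      · exact hac.symm.reachable
      · exact had.symm.reachable
  have hadj : ∀ x y : C.supp, (x : V) ≠ y → G.Adj x y := by
    rintro ⟨x, hx⟩ ⟨y, hy⟩ hne
    rw [hsupp] at hx hy
    simp only [Finset.coe_insert, Set.mem_insert_iff, Finset.coe_singleton,
      Set.mem_singleton_iff] at hx hy
    simp only [ne_eq] at hne ⊢
    rcases hx with rfl | rfl | rfl | rfl <;> rcases hy with rfl | rfl | rfl | rfl <;>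
      first
        | exact absurd rfl hne
        | exact hab | exact hab.symm | exact hac | exact hac.symm
        | exact had | exact had.symm | exact hbc | exact hbc.symm
        | exact hbd | exact hbd.symm | exact hcd | exact hcd.symm
  have hcard4 : ({a, b, c, d} : Finset V).card = 4 := by
    rw [Finset.card_insert_of_notMem (by simp [hab.ne, hac.ne, had.ne]),
      card3 hbc.ne hbd.ne hcd.ne]
  obtain ⟨e⟩ : Nonempty (C.supp ≃ Fin 4) := by
    have h1 : Nonempty (C.supp ≃ (({a, b, c, d} : Finset V) : Set V)) := ⟨Equiv.setCongr hsupp⟩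
    have h2 : Fintype.card (({a, b, c, d} : Finset V) : Set V) = 4 := by
      simpa using hcard4
    obtain ⟨e1⟩ := h1
    exact ⟨e1.trans (Fintype.equivFinOfCardEq h2)⟩
  refine ⟨⟨e, ?_⟩⟩
  intro x y
  simp only [top_adj, ne_eq, EmbeddingLike.apply_eq_iff_eq, comap_adj,
    Function.Embedding.coe_subtype]
  constructor
  · intro h
    exact hadj x y (fun hv => h (Subtype.ext hv))
  · intro h
    exact fun hxy => h.ne (by rw [hxy])

def IsDiam (G : SimpleGraph V) (a b c d : V) : Prop :=
  G.Adj a b ∧ G.Adj a c ∧ G.Adj a d ∧ G.Adj b c ∧ G.Adj b d ∧ c ≠ d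

lemma IsDiam.swapAB {a b c d : V} (h : IsDiam G a b c d) : IsDiam G b a c d :=
  ⟨h.1.symm, h.2.2.2.1, h.2.2.2.2.1, h.2.1, h.2.2.1, h.2.2.2.2.2⟩

lemma IsDiam.swapCD {a b c d : V} (h : IsDiam G a b c d) : IsDiam G a b d c :=
  ⟨h.1, h.2.2.1, h.2.1, h.2.2.2.2.1, h.2.2.2.1, h.2.2.2.2.2.symm⟩

lemma perm_ba (a b c d : V) : ({b, a, c, d} : Finset V) = {a, b, c, d} := by
  ext x; simp; tauto

lemma perm_dc (a b c d : V) : ({a, b, d, c} : Finset V) = {a, b, c, d} := by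
  ext x; simp; tauto

lemma IsDiam.not_adj_cd (hdeg : ∀ v, G.degree v ≤ 3)
    (hK4 : ∀ C : G.ConnectedComponent,
      ¬ Nonempty (G.induce C.supp ≃g (⊤ : SimpleGraph (Fin 4))))
    {a b c d : V} (h : IsDiam G a b c d) : ¬ G.Adj c d := fun hcd =>
  noK4 G hdeg hK4 h.1 h.2.1 h.2.2.1 h.2.2.2.1 h.2.2.2.2.1 hcd

/-- the neighborhood of the hub `a` of a diamond is exactly the other three vertices -/
lemma IsDiam.nbrsA (hdeg : ∀ v, G.degree v ≤ 3) {a b c d : V} (h : IsDiam G a b c d) :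
    G.neighborFinset a = {b, c, d} :=
  nbrs_eq G hdeg h.1 h.2.1 h.2.2.1 h.2.2.2.1.ne h.2.2.2.2.1.ne h.2.2.2.2.2

lemma IsDiam.insert_hub (hdeg : ∀ v, G.degree v ≤ 3) {a b c d v : V} (h : IsDiam G a b c d)
    (hv : v = a ∨ v = b) :
    ({a, b, c, d} : Finset V) = insert v (G.neighborFinset v) := by
  rcases hv with rfl | rfl
  · rw [h.nbrsA G hdeg]
  · rw [(h.swapAB G).nbrsA G hdeg, ← perm_ba v a c d]

/-- hub-hub: if `v` is a hub of both diamonds, the vertex sets coincide -/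
lemma hubhub (hdeg : ∀ v, G.degree v ≤ 3) {a b c d a' b' c' d' v : V}
    (h : IsDiam G a b c d) (h' : IsDiam G a' b' c' d')
    (hv : v = a ∨ v = b) (hv' : v = a' ∨ v = b') :
    ({a, b, c, d} : Finset V) = {a', b', c', d'} := by
  rw [h.insert_hub G hdeg hv, h'.insert_hub G hdeg hv']


/-- hub-spoke core: `v = a` is the hub of the first diamond and a spoke of the second. -/
lemma hubspoke_core (hdeg : ∀ v, G.degree v ≤ 3)
    (hK4 : ∀ C : G.ConnectedComponent,
      ¬ Nonempty (G.induce C.supp ≃g (⊤ : SimpleGraph (Fin 4))))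
    {a b c d a' b' c' d' : V}
    (h : IsDiam G a b c d) (h' : IsDiam G a' b' c' d')
    (hv' : a = c' ∨ a = d') :
    ({a, b, c, d} : Finset V) = {a', b', c', d'} := by
  have ha'v : G.Adj a' a := by rcases hv' with rfl | rfl; exacts [h'.2.1, h'.2.2.1]
  have hb'v : G.Adj b' a := by rcases hv' with rfl | rfl; exacts [h'.2.2.2.1, h'.2.2.2.2.1]
  have ha'mem : a' = b ∨ a' = c ∨ a' = d := by
    have : a' ∈ G.neighborFinset a := by simpa using ha'v.symm
    rw [h.nbrsA G hdeg] at this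
    simpa using this
  have hb'mem : b' = b ∨ b' = c ∨ b' = d := by
    have : b' ∈ G.neighborFinset a := by simpa using hb'v.symm
    rw [h.nbrsA G hdeg] at this
    simpa using this
  have hne : a' ≠ b' := h'.1.ne
  rcases ha'mem with h1 | h1 | h1 <;> rcases hb'mem with h2 | h2 | h2
  · exact absurd (h1.trans h2.symm) hne
  · exact hubhub G hdeg h h' (Or.inr rfl) (Or.inl h1.symm)
  · exact hubhub G hdeg h h' (Or.inr rfl) (Or.inl h1.symm)
  · exact hubhub G hdeg h h' (Or.inr rfl) (Or.inr h2.symm)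
  · exact absurd (h1.trans h2.symm) hne
  · exact absurd (h1 ▸ h2 ▸ h'.1) (h.not_adj_cd G hdeg hK4)
  · exact hubhub G hdeg h h' (Or.inr rfl) (Or.inr h2.symm)
  · exact absurd (h1 ▸ h2 ▸ h'.1).symm (h.not_adj_cd G hdeg hK4)
  · exact absurd (h1.trans h2.symm) hne

/-- hub-spoke: `v` is a hub of the first diamond and a spoke of the second. -/
lemma hubspoke (hdeg : ∀ v, G.degree v ≤ 3)
    (hK4 : ∀ C : G.ConnectedComponent,
      ¬ Nonempty (G.induce C.supp ≃g (⊤ : SimpleGraph (Fin 4))))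
    {a b c d a' b' c' d' v : V}
    (h : IsDiam G a b c d) (h' : IsDiam G a' b' c' d')
    (hv : v = a ∨ v = b) (hv' : v = c' ∨ v = d') :
    ({a, b, c, d} : Finset V) = {a', b', c', d'} := by
  rcases hv with rfl | rfl
  · exact hubspoke_core G hdeg hK4 h h' hv'
  · rw [← perm_ba a v c d]
    exact hubspoke_core G hdeg hK4 (h.swapAB G) h' hv'

lemma spokespoke (hdeg : ∀ v, G.degree v ≤ 3)
    {a b c d a' b' c' d' v : V}
    (h : IsDiam G a b c d) (h' : IsDiam G a' b' c' d')
    (hv : v = c ∨ v = d) (hv' : v = c' ∨ v = d') :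
    ({a, b, c, d} : Finset V) = {a', b', c', d'} := by
  have hav : G.Adj a v := by rcases hv with rfl | rfl; exacts [h.2.1, h.2.2.1]
  have hbv : G.Adj b v := by rcases hv with rfl | rfl; exacts [h.2.2.2.1, h.2.2.2.2.1]
  have ha'v : G.Adj a' v := by rcases hv' with rfl | rfl; exacts [h'.2.1, h'.2.2.1]
  have hb'v : G.Adj b' v := by rcases hv' with rfl | rfl; exacts [h'.2.2.2.1, h'.2.2.2.2.1]
  by_cases h1 : a' = a ∨ a' = b
  · exact hubhub G hdeg h h' h1 (Or.inl rfl)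
  · by_cases h2 : b' = a ∨ b' = b
    · exact hubhub G hdeg h h' h2 (Or.inr rfl)
    · exfalso
      push_neg at h1 h2
      have hsub : ({a, b, a', b'} : Finset V) ⊆ G.neighborFinset v := by
        intro x hx
        simp only [Finset.mem_insert, Finset.mem_singleton] at hx
        rcases hx with rfl | rfl | rfl | rfl <;>
          simp [SimpleGraph.mem_neighborFinset, hav.symm, hbv.symm, ha'v.symm, hb'v.symm]
      have hc4 : ({a, b, a', b'} : Finset V).card = 4 := by
        rw [Finset.card_insert_of_notMem (by simp [h.1.ne, h1.1.symm, h2.1.symm]),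
          card3 (Ne.symm h1.2) (Ne.symm h2.2) h'.1.ne]
      have := Finset.card_le_card hsub
      rw [hc4, G.card_neighborFinset_eq_degree] at this
      have := hdeg v
      omega

lemma diamond_sets_eq (hdeg : ∀ v, G.degree v ≤ 3)
    (hK4 : ∀ C : G.ConnectedComponent,
      ¬ Nonempty (G.induce C.supp ≃g (⊤ : SimpleGraph (Fin 4))))
    {a b c d a' b' c' d' v : V}
    (h : IsDiam G a b c d) (h' : IsDiam G a' b' c' d')
    (hv : v ∈ ({a, b, c, d} : Finset V)) (hv' : v ∈ ({a', b', c', d'} : Finset V)) :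
    ({a, b, c, d} : Finset V) = {a', b', c', d'} := by
  have hrole : (v = a ∨ v = b) ∨ (v = c ∨ v = d) := by
    simp only [Finset.mem_insert, Finset.mem_singleton] at hv; tauto
  have hrole' : (v = a' ∨ v = b') ∨ (v = c' ∨ v = d') := by
    simp only [Finset.mem_insert, Finset.mem_singleton] at hv'; tauto
  rcases hrole with h1 | h1 <;> rcases hrole' with h2 | h2
  · exact hubhub G hdeg h h' h1 h2
  · exact hubspoke G hdeg hK4 h h' h1 h2
  · exact (hubspoke G hdeg hK4 h' h h2 h1).symm
  · exact spokespoke G hdeg h h' h1 h2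


lemma wcard_le3 {α : Type*} [DecidableEq α] (a b c : α) : ({a, b, c} : Finset α).card ≤ 3 := by
  apply (Finset.card_insert_le _ _).trans
  apply Nat.succ_le_succ
  apply (Finset.card_insert_le _ _).trans
  simp

lemma pair_mem_of_worm {c : V → ℕ} {p q r : V}
    (h2 : ({c p, c q, c r} : Finset ℕ).card = 2) (hne : c p ≠ c q) : c r ∈ ({c p, c q} : Finset ℕ) := by
  have hsub : ({c p, c q} : Finset ℕ) ⊆ {c p, c q, c r} := by
    intro z hz; simp only [Finset.mem_insert, Finset.mem_singleton] at hz ⊢; tauto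
  have hc2 : ({c p, c q} : Finset ℕ).card = 2 := by
    rw [Finset.card_insert_of_notMem (by simp [hne]), Finset.card_singleton]
  have heq := Finset.eq_of_subset_of_card_le hsub (by rw [h2, hc2])
  rw [heq]; simp

lemma img3 {c : V → ℕ} (hc : IsWormColoring G c) {a b x y : V} (h : IsDiam G a b x y) :
    (({a, b, x, y} : Finset V).image c).card ≤ 3 := by
  by_cases hab : c a = c b
  · have hsub : ({a, b, x, y} : Finset V).image c ⊆ {c a, c x, c y} := by
      intro z hz
      simp only [Finset.mem_image, Finset.mem_insert, Finset.mem_singleton] at hz ⊢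
      obtain ⟨u, hu, rfl⟩ := hz
      rcases hu with rfl | rfl | rfl | rfl <;> tauto
    exact (Finset.card_le_card hsub).trans (wcard_le3 _ _ _)
  · have hx := pair_mem_of_worm (hc a b x h.1 h.2.1 h.2.2.2.1) hab
    have hy := pair_mem_of_worm (hc a b y h.1 h.2.2.1 h.2.2.2.2.1) hab
    have hsub : ({a, b, x, y} : Finset V).image c ⊆ {c a, c b} := by
      intro z hz
      simp only [Finset.mem_image, Finset.mem_insert, Finset.mem_singleton] at hz hx hy ⊢
      obtain ⟨u, hu, rfl⟩ := hz
      rcases hu with rfl | rfl | rfl | rfl <;> tauto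
    exact (Finset.card_le_card hsub).trans ((Finset.card_insert_le _ _).trans (by simp))

lemma IsDiam.card4 {a b c d : V} (h : IsDiam G a b c d) :
    ({a, b, c, d} : Finset V).card = 4 := by
  rw [Finset.card_insert_of_notMem (by simp [h.1.ne, h.2.1.ne, h.2.2.1.ne]),
    card3 h.2.2.2.1.ne h.2.2.2.2.1.ne h.2.2.2.2.2]

lemma tri_adj {u v w : V} (huv : G.Adj u v) (huw : G.Adj u w) (hvw : G.Adj v w)
    {x y : V} (hx : x ∈ ({u, v, w} : Finset V)) (hy : y ∈ ({u, v, w} : Finset V))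
    (hne : x ≠ y) : G.Adj x y := by
  simp only [Finset.mem_insert, Finset.mem_singleton] at hx hy
  rcases hx with rfl | rfl | rfl <;> rcases hy with rfl | rfl | rfl <;>
    first
      | exact absurd rfl hne
      | exact huv | exact huv.symm | exact huw | exact huw.symm
      | exact hvw | exact hvw.symm

end

/-- If `G` has order `n`, maximum degree at most 3, no connected component isomorphic
to `K₄`, and every triangle of `G` shares an edge with another triangle, then
`W⁺(G) ≥ 3n/4`, with equality if and only if `G` contains a spanning collection of
`n/4` pairwise vertex-disjoint copies of `K₄ − e`
(i.e. `G` contains `(n/4)·(K₄ − e)` as a subgraph). -/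
theorem wormUpper_ge_three_quarters {V : Type*} [Fintype V] [DecidableEq V]
    (G : SimpleGraph V) [DecidableRel G.Adj] (hdeg : ∀ v : V, G.degree v ≤ 3)
    (hK4 : ∀ C : G.ConnectedComponent,
      ¬ Nonempty (G.induce C.supp ≃g (⊤ : SimpleGraph (Fin 4))))
    (hshare : ∀ u v w : V, G.Adj u v → G.Adj u w → G.Adj v w →
      ∃ x : V, x ≠ u ∧ x ≠ v ∧ x ≠ w ∧
        ((G.Adj u x ∧ G.Adj v x) ∨ (G.Adj u x ∧ G.Adj w x) ∨ (G.Adj v x ∧ G.Adj w x))) :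
    ∀ w : ℕ, IsGreatest (wormFeasible G) w →
      3 * Fintype.card V ≤ 4 * w ∧
      (3 * Fintype.card V = 4 * w ↔
        ∃ P : Finpartition (Finset.univ : Finset V),
          ∀ t ∈ P.parts, ∃ a b c d : V, t = {a, b, c, d} ∧ c ≠ d ∧
            G.Adj a b ∧ G.Adj a c ∧ G.Adj a d ∧ G.Adj b c ∧ G.Adj b d) := by
  classical
  intro w hw
  set n := Fintype.card V with hn
  -- the set of diamonds
  let DP : Finset V → Prop := fun t => ∃ a b c d : V, IsDiam G a b c d ∧ t = {a, b, c, d}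
  let 𝔇 : Finset (Finset V) := Finset.univ.filter DP
  have hDP : ∀ t ∈ 𝔇, DP t := fun t ht => (Finset.mem_filter.mp ht).2
  have hmemD : ∀ a b c d : V, IsDiam G a b c d → ({a, b, c, d} : Finset V) ∈ 𝔇 :=
    fun a b c d h => Finset.mem_filter.mpr ⟨Finset.mem_univ _, ⟨a, b, c, d, h, rfl⟩⟩
  have hcard4 : ∀ t ∈ 𝔇, t.card = 4 := by
    intro t ht
    obtain ⟨a, b, c, d, h, rfl⟩ := hDP t ht
    exact h.card4 G
  have hdisj : ∀ t ∈ 𝔇, ∀ t' ∈ 𝔇, t ≠ t' → Disjoint t t' := by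
    intro t ht t' ht' hne
    by_contra hcon
    obtain ⟨v, hv, hv'⟩ := Finset.not_disjoint_iff.mp hcon
    obtain ⟨a, b, c, d, h, rfl⟩ := hDP t ht
    obtain ⟨a', b', c', d', h', rfl⟩ := hDP t' ht'
    exact hne (diamond_sets_eq G hdeg hK4 h h' hv hv')
  have huniq : ∀ v : V, ∀ t ∈ 𝔇, ∀ t' ∈ 𝔇, v ∈ t → v ∈ t' → t = t' := by
    intro v t ht t' ht' hv hv'
    by_contra hne
    exact absurd hv' (Finset.disjoint_left.mp (hdisj t ht t' ht' hne) hv)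
  -- every triangle is inside a diamond
  have hcover : ∀ u v x : V, G.Adj u v → G.Adj u x → G.Adj v x →
      ∃ t ∈ 𝔇, u ∈ t ∧ v ∈ t ∧ x ∈ t := by
    intro u v x huv hux hvx
    obtain ⟨y, hyu, hyv, hyx, hcase⟩ := hshare u v x huv hux hvx
    rcases hcase with ⟨h1, h2⟩ | ⟨h1, h2⟩ | ⟨h1, h2⟩
    · exact ⟨{u, v, x, y}, hmemD u v x y ⟨huv, hux, h1, hvx, h2, (Ne.symm hyx)⟩,
        by simp, by simp, by simp⟩
    · refine ⟨{u, x, v, y}, hmemD u x v y ⟨hux, huv, h1, hvx.symm, h2, (Ne.symm hyv)⟩,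
        by simp, by simp, by simp⟩
    · refine ⟨{v, x, u, y}, hmemD v x u y ⟨hvx, huv.symm, h1, hux.symm, h2, (Ne.symm hyu)⟩,
        by simp, by simp, by simp⟩
  set k := 𝔇.card with hk
  set U : Finset V := 𝔇.biUnion id with hU
  have hUcard : U.card = 4 * k := by
    have hcb := Finset.card_biUnion (s := 𝔇) (t := id) (fun x hx y hy hne => hdisj x hx y hy hne)
    rw [hU, hcb]
    have : ∑ u ∈ 𝔇, (id u).card = ∑ _u ∈ 𝔇, 4 := Finset.sum_congr rfl (fun t ht => hcard4 t ht)
    rw [this, Finset.sum_const, smul_eq_mul, hk, mul_comm]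
  have h4k : 4 * k ≤ n := by
    rw [← hUcard, hn]
    exact Finset.card_le_univ U
  -- upper bound: every worm coloring uses at most n - k colors
  have hupper : ∀ c : V → ℕ, IsWormColoring G c → colorsUsed c ≤ n - k := by
    intro c hc
    have hUsub : U ⊆ Finset.univ := Finset.subset_univ U
    have h1 : ((Finset.univ \ U).image c).card ≤ n - 4 * k := by
      calc ((Finset.univ \ U).image c).card ≤ (Finset.univ \ U).card := Finset.card_image_le
        _ = n - U.card := by rw [Finset.card_sdiff_of_subset hUsub, Finset.card_univ]
        _ = n - 4 * k := by rw [hUcard]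
    have h2 : (U.image c).card ≤ 3 * k := by
      have hsubi : U.image c ⊆ 𝔇.biUnion (fun t => t.image c) := by
        intro z hz
        obtain ⟨v, hv, rfl⟩ := Finset.mem_image.mp hz
        obtain ⟨t, ht, hvt⟩ := Finset.mem_biUnion.mp hv
        exact Finset.mem_biUnion.mpr ⟨t, ht, Finset.mem_image_of_mem c hvt⟩
      calc (U.image c).card ≤ (𝔇.biUnion fun t => t.image c).card :=
            Finset.card_le_card hsubi
        _ ≤ ∑ t ∈ 𝔇, (t.image c).card := Finset.card_biUnion_le
        _ ≤ ∑ _t ∈ 𝔇, 3 := Finset.sum_le_sum (fun t ht => by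
              obtain ⟨a, b, x, y, h, rfl⟩ := hDP t ht
              exact img3 G hc h)
        _ = 3 * k := by rw [Finset.sum_const, smul_eq_mul, mul_comm]
    have hsplit : Finset.univ.image c = ((Finset.univ \ U).image c) ∪ (U.image c) := by
      rw [← Finset.image_union, Finset.sdiff_union_of_subset hUsub]
    calc colorsUsed c = (((Finset.univ \ U).image c) ∪ (U.image c)).card := by
          rw [colorsUsed, hsplit]
      _ ≤ ((Finset.univ \ U).image c).card + (U.image c).card := Finset.card_union_le _ _
      _ ≤ (n - 4 * k) + 3 * k := Nat.add_le_add h1 h2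
      _ ≤ n - k := by omega
  -- lower bound : there is a worm coloring with exactly n - k colors
  have hlower : (n - k) ∈ wormFeasible G := by
    obtain ⟨rA, rB, rC, rD, hr⟩ : ∃ rA rB rC rD : (t : Finset V) → t ∈ 𝔇 → V,
        ∀ t (ht : t ∈ 𝔇), IsDiam G (rA t ht) (rB t ht) (rC t ht) (rD t ht) ∧
          t = {rA t ht, rB t ht, rC t ht, rD t ht} :=
      ⟨fun t ht => (hDP t ht).choose, fun t ht => (hDP t ht).choose_spec.choose,
        fun t ht => (hDP t ht).choose_spec.choose_spec.choose,
        fun t ht => (hDP t ht).choose_spec.choose_spec.choose_spec.choose,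
        fun t ht => (hDP t ht).choose_spec.choose_spec.choose_spec.choose_spec⟩
    have hAmem : ∀ t (ht : t ∈ 𝔇), rA t ht ∈ t := fun t ht => by
      have hm : rA t ht ∈ ({rA t ht, rB t ht, rC t ht, rD t ht} : Finset V) := by simp
      rwa [← (hr t ht).2] at hm
    have hBmem : ∀ t (ht : t ∈ 𝔇), rB t ht ∈ t := fun t ht => by
      have hm : rB t ht ∈ ({rA t ht, rB t ht, rC t ht, rD t ht} : Finset V) := by simp
      rwa [← (hr t ht).2] at hm
    have hCmem : ∀ t (ht : t ∈ 𝔇), rC t ht ∈ t := fun t ht => by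
      have hm : rC t ht ∈ ({rA t ht, rB t ht, rC t ht, rD t ht} : Finset V) := by simp
      rwa [← (hr t ht).2] at hm
    have hDmem : ∀ t (ht : t ∈ 𝔇), rD t ht ∈ t := fun t ht => by
      have hm : rD t ht ∈ ({rA t ht, rB t ht, rC t ht, rD t ht} : Finset V) := by simp
      rwa [← (hr t ht).2] at hm
    let Pv : V → Prop := fun v => ∃ t, ∃ ht : t ∈ 𝔇, v = rB t ht
    let f : V → V := fun v =>
      if h : Pv v then rA h.choose h.choose_spec.choose else v
    let ν : V → ℕ := fun v => ((Fintype.equivFin V) v : ℕ)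
    have hνinj : Function.Injective ν :=
      fun x y h => (Fintype.equivFin V).injective (Fin.val_injective h)
    have hrAeq : ∀ (t₀ t : Finset V) (ht₀ : t₀ ∈ 𝔇) (ht : t ∈ 𝔇), t₀ = t →
        rA t₀ ht₀ = rA t ht := by rintro t₀ t ht₀ ht rfl; rfl
    have hfB : ∀ t (ht : t ∈ 𝔇), f (rB t ht) = rA t ht := by
      intro t ht
      have hp : Pv (rB t ht) := ⟨t, ht, rfl⟩
      have hstep : f (rB t ht) = rA hp.choose hp.choose_spec.choose := dif_pos hp
      have hmem0 : rB t ht ∈ hp.choose := by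
        have hm := hBmem hp.choose hp.choose_spec.choose
        rw [← hp.choose_spec.choose_spec] at hm
        exact hm
      exact hstep.trans (hrAeq _ _ _ ht
        (huniq (rB t ht) hp.choose hp.choose_spec.choose t ht hmem0 (hBmem t ht)))
    have hfother : ∀ v t (ht : t ∈ 𝔇), v ∈ t → v ≠ rB t ht → f v = v := by
      intro v t ht hvt hvne
      have hnp : ¬ Pv v := by
        rintro ⟨t', ht', rfl⟩
        have heq : t' = t := huniq _ t' ht' t ht (hBmem t' ht') hvt
        subst heq
        exact hvne rfl
      exact dif_neg hnp
    have hfout : ∀ v, (∀ t, t ∈ 𝔇 → v ∉ t) → f v = v := by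
      intro v hv
      have hnp : ¬ Pv v := by rintro ⟨t', ht', rfl⟩; exact hv t' ht' (hBmem t' ht')
      exact dif_neg hnp
    have hnPA : ∀ t (ht : t ∈ 𝔇), ¬ Pv (rA t ht) := by
      rintro t ht ⟨t', ht', hAB⟩
      have heq : t' = t := huniq _ t' ht' t ht (hAB ▸ hBmem t' ht') (hAmem t ht)
      subst heq
      exact (hr t' ht').1.1.ne hAB
    refine ⟨ν ∘ f, ?_, ?_⟩
    · -- it is a worm coloring
      intro u v x huv hux hvx
      obtain ⟨t, ht, hut, hvt, hxt⟩ := hcover u v x huv hux hvx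
      obtain ⟨hdm, hteq⟩ := hr t ht
      have hfa : f (rA t ht) = rA t ht := hfother _ t ht (hAmem t ht) hdm.1.ne
      have hfc : f (rC t ht) = rC t ht := hfother _ t ht (hCmem t ht) hdm.2.2.2.1.ne'
      have hfd : f (rD t ht) = rD t ht := hfother _ t ht (hDmem t ht) hdm.2.2.2.2.1.ne'
      have htri3 : ({u, v, x} : Finset V).card = 3 := card3 huv.ne hux.ne hvx.ne
      have himg : ({u, v, x} : Finset V).image (ν ∘ f) =
          {(ν ∘ f) u, (ν ∘ f) v, (ν ∘ f) x} := by simp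
      have hnotboth : ¬ (rC t ht ∈ ({u, v, x} : Finset V) ∧ rD t ht ∈ ({u, v, x} : Finset V)) := by
        rintro ⟨hcc, hdd⟩
        exact hdm.not_adj_cd G hdeg hK4 (tri_adj G huv hux hvx hcc hdd hdm.2.2.2.2.2)
      have hmemt : ∀ y ∈ ({u, v, x} : Finset V),
          y = rA t ht ∨ y = rB t ht ∨ y = rC t ht ∨ y = rD t ht := by
        intro y hy
        have : y ∈ t := by
          simp only [Finset.mem_insert, Finset.mem_singleton] at hy
          rcases hy with rfl | rfl | rfl <;> assumption
        rw [hteq] at this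
        simpa using this
      show ({(ν ∘ f) u, (ν ∘ f) v, (ν ∘ f) x} : Finset ℕ).card = 2
      by_cases hdd : rD t ht ∈ ({u, v, x} : Finset V)
      · -- triangle is {a, b, d}
        have hcc : rC t ht ∉ ({u, v, x} : Finset V) := fun h => hnotboth ⟨h, hdd⟩
        have hsub : ({u, v, x} : Finset V) ⊆ {rA t ht, rB t ht, rD t ht} := by
          intro y hy
          rcases hmemt y hy with rfl | rfl | rfl | rfl
          · simp
          · simp
          · exact absurd hy hcc
          · simp
        have hseteq : ({u, v, x} : Finset V) = {rA t ht, rB t ht, rD t ht} :=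
          Finset.eq_of_subset_of_card_le hsub (by rw [htri3]; exact wcard_le3 _ _ _)
        rw [← himg, hseteq]
        have : ({rA t ht, rB t ht, rD t ht} : Finset V).image (ν ∘ f) = {ν (rA t ht), ν (rD t ht)} := by
          simp only [Finset.image_insert, Finset.image_singleton, Function.comp_apply]
          rw [hfa, hfB t ht, hfd, Finset.insert_idem]
        rw [this, Finset.card_insert_of_notMem (by simp [hνinj.ne hdm.2.2.1.ne]),
          Finset.card_singleton]
      · -- triangle is {a, b, c}
        have hsub : ({u, v, x} : Finset V) ⊆ {rA t ht, rB t ht, rC t ht} := by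
          intro y hy
          rcases hmemt y hy with rfl | rfl | rfl | rfl
          · simp
          · simp
          · simp
          · exact absurd hy hdd
        have hseteq : ({u, v, x} : Finset V) = {rA t ht, rB t ht, rC t ht} :=
          Finset.eq_of_subset_of_card_le hsub (by rw [htri3]; exact wcard_le3 _ _ _)
        rw [← himg, hseteq]
        have : ({rA t ht, rB t ht, rC t ht} : Finset V).image (ν ∘ f) = {ν (rA t ht), ν (rC t ht)} := by
          simp only [Finset.image_insert, Finset.image_singleton, Function.comp_apply]
          rw [hfa, hfB t ht, hfc, Finset.insert_idem]
        rw [this, Finset.card_insert_of_notMem (by simp [hνinj.ne hdm.2.1.ne]),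
          Finset.card_singleton]
    · -- it uses exactly n - k colors
      have himg2 : Finset.univ.image (ν ∘ f) = (Finset.univ.image f).image ν := by
        rw [Finset.image_image]
      rw [colorsUsed, himg2, Finset.card_image_of_injective _ hνinj]
      have himgf : Finset.univ.image f = Finset.univ.filter (fun v => ¬ Pv v) := by
        ext z
        simp only [Finset.mem_image, Finset.mem_filter, Finset.mem_univ, true_and]
        constructor
        · rintro ⟨v, -, rfl⟩
          by_cases h : Pv v
          · obtain ⟨t', ht', rfl⟩ := h
            rw [hfB t' ht']
            exact hnPA t' ht'
          · rw [show f v = v from dif_neg h]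
            exact h
        · intro hz
          exact ⟨z, dif_neg hz⟩
      rw [himgf]
      have hfilter : (Finset.univ.filter Pv).card +
          (Finset.univ.filter (fun v => ¬ Pv v)).card = (Finset.univ : Finset V).card :=
        Finset.card_filter_add_card_filter_not Pv
      have hPcard : (Finset.univ.filter Pv).card = k := by
        rw [hk]
        symm
        apply Finset.card_bij (fun t ht => rB t ht)
        · intro t ht
          exact Finset.mem_filter.mpr ⟨Finset.mem_univ _, ⟨t, ht, rfl⟩⟩
        · intro t ht t' ht' h
          exact huniq _ t ht t' ht' (hBmem t ht) (h ▸ hBmem t' ht')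
        · intro v hv
          obtain ⟨t', ht', rfl⟩ := (Finset.mem_filter.mp hv).2
          refine ⟨t', ht', ?_⟩
          rfl

      have hcarduniv : (Finset.univ : Finset V).card = n := Finset.card_univ
      omega
  have hwk : w = n - k := le_antisymm (by obtain ⟨c, hc, hcu⟩ := hw.1; exact hcu ▸ hupper c hc)
    (hw.2 hlower)
  have hkn : k ≤ n := by omega
  refine ⟨by omega, ?_, ?_⟩
  · -- equality → partition
    intro heq
    have hkn4 : 4 * k = n := by omega
    have hUuniv : U = Finset.univ := Finset.eq_univ_of_card U (by rw [hUcard, hkn4])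
    refine ⟨⟨𝔇, ?_, ?_, ?_⟩, ?_⟩
    · apply Finset.supIndep_iff_pairwiseDisjoint.mpr
      intro x hx y hy hne
      exact hdisj x hx y hy hne
    · rw [Finset.sup_eq_biUnion, ← hU, hUuniv]
    · intro hbot
      have := hcard4 ∅ hbot
      simp at this
    · intro t ht
      obtain ⟨a, b, c, d, h, rfl⟩ := hDP t ht
      exact ⟨a, b, c, d, rfl, h.2.2.2.2.2, h.1, h.2.1, h.2.2.1, h.2.2.2.1, h.2.2.2.2.1⟩
  · -- partition → equality
    rintro ⟨P, hP⟩
    have hpc : ∀ t ∈ P.parts, t.card = 4 := by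
      intro t ht
      obtain ⟨a, b, c, d, rfl, hcd, hab, hac, had, hbc, hbd⟩ := hP t ht
      exact IsDiam.card4 G ⟨hab, hac, had, hbc, hbd, hcd⟩
    have hsum : n = 4 * P.parts.card := by
      have := P.sum_card_parts
      rw [Finset.sum_congr rfl hpc, Finset.sum_const, smul_eq_mul] at this
      rw [hn, ← Finset.card_univ, ← this, mul_comm]
    obtain ⟨c, hc, hcu⟩ := hw.1
    have hwle : w ≤ 3 * P.parts.card := by
      rw [← hcu]
      have huniv : (Finset.univ : Finset V) = P.parts.biUnion id := by
        rw [← Finset.sup_eq_biUnion, P.sup_parts]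
      have hsubi : Finset.univ.image c ⊆ P.parts.biUnion (fun t => t.image c) := by
        intro z hz
        obtain ⟨v, _, rfl⟩ := Finset.mem_image.mp hz
        have hv : v ∈ P.parts.biUnion id := by rw [← huniv]; exact Finset.mem_univ v
        obtain ⟨t, ht, hvt⟩ := Finset.mem_biUnion.mp hv
        exact Finset.mem_biUnion.mpr ⟨t, ht, Finset.mem_image_of_mem c hvt⟩
      calc colorsUsed c ≤ (P.parts.biUnion fun t => t.image c).card :=
            Finset.card_le_card hsubi
        _ ≤ ∑ t ∈ P.parts, (t.image c).card := Finset.card_biUnion_le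
        _ ≤ ∑ t ∈ P.parts, 3 := by
            apply Finset.sum_le_sum
            intro t ht
            obtain ⟨a, b, x, y, rfl, hcd, hab, hac, had, hbc, hbd⟩ := hP t ht
            exact img3 G hc ⟨hab, hac, had, hbc, hbd, hcd⟩
        _ = 3 * P.parts.card := by rw [Finset.sum_const, smul_eq_mul, mul_comm]
    omega
end

section
/- Let c be a K₃-WORM coloring of a graph G and let {a, b, x, y} be four pairwise adjacent vertices of G (a K₄-subgraph). Then c assigns exactly two distinct colors to {a, b, x, y}, and each of these two colors appears on exactly two of the four vertices. -/
open SimpleGraph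

lemma tri_card_iff (u v w : ℕ) :
    ({u, v, w} : Finset ℕ).card = 2 ↔
      (u = v ∧ v ≠ w) ∨ (u = w ∧ u ≠ v) ∨ (v = w ∧ u ≠ v) := by
  by_cases h1 : u = v <;> by_cases h2 : u = w <;> by_cases h3 : v = w <;>
    simp_all [Finset.card_insert_of_notMem, Finset.mem_insert, Finset.mem_singleton]

lemma key_structure (A B X Y : ℕ)
    (h1 : ({A, B, X} : Finset ℕ).card = 2)
    (h2 : ({A, B, Y} : Finset ℕ).card = 2)
    (h3 : ({A, X, Y} : Finset ℕ).card = 2)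
    (h4 : ({B, X, Y} : Finset ℕ).card = 2) :
    (A = B ∧ X = Y ∧ A ≠ X) ∨ (A = X ∧ B = Y ∧ A ≠ B) ∨ (A = Y ∧ B = X ∧ A ≠ B) := by
  rw [tri_card_iff] at h1 h2 h3 h4
  omega

/-- In any K₃-WORM coloring of a graph, a `K₄`-subgraph `{a, b, x, y}` (four pairwise
adjacent vertices) receives exactly two distinct colors, and each of the two colors
appears on exactly two of the four vertices. -/
theorem worm_on_K4_two_colors_twice {V : Type*} (G : SimpleGraph V) (c : V → ℕ)
    (hc : IsWormColoring G c) (a b x y : V)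
    (hab : G.Adj a b) (hax : G.Adj a x) (hay : G.Adj a y)
    (hbx : G.Adj b x) (hby : G.Adj b y) (hxy : G.Adj x y) :
    ({c a, c b, c x, c y} : Finset ℕ).card = 2 ∧
    ∀ col ∈ ({c a, c b, c x, c y} : Finset ℕ),
      Multiset.count col ({c a, c b, c x, c y} : Multiset ℕ) = 2 := by
  have h := key_structure (c a) (c b) (c x) (c y)
    (hc a b x hab hax hbx) (hc a b y hab hay hby)
    (hc a x y hax hay hxy) (hc b x y hbx hby hxy)
  rcases h with ⟨e1, e2, ne⟩ | ⟨e1, e2, ne⟩ | ⟨e1, e2, ne⟩ <;>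
  · rw [← e1, ← e2]
    constructor
    · simp [Finset.card_insert_of_notMem, ne, Ne.symm ne, Finset.card_pair]
    · intro col hcol
      simp only [Finset.mem_insert, Finset.mem_singleton] at hcol
      rcases hcol with h | h | h | h <;> subst h <;>
        simp [Multiset.count_cons, Multiset.count_singleton, ne, Ne.symm ne]
end
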